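/- arXiv:1612.01984 — 5 statements merged into one kernel-verified Lean document; each statement's English description precedes it below -/
import Mathlib

section
/- Let k ≥ 1, let (B,s) ∈ V_k with |B| = k, and write s = Σ_{i=1}^k σ_i 2^{−i} with σ_i ∈ {0,1} and σ_k = 1. Let (A,r) ∈ V_k. Then {(A,r),(B,s)} ∈ E_k if and only if A ≺ B and one of the following two alternatives holds: (i) r = s − 2^{−k}, and if i^− := max{1 ≤ i ≤ k−1 : σ_i = 1} exists then A = B|_{i^−} and r = Σ_{i=1}^{i^−} σ_i 2^{−i}, while if no such i exists then A = ∅ and r = 0; (ii) r = s + 2^{−k}, and if i^+ := max{1 ≤ i ≤ k−1 : σ_i = 0} exists then A = B|_{i^+} and r = Σ_{i=1}^{i^+−1} σ_i 2^{−i} + 2^{−i^+}, while if no such i exists then A = ∅ and r = 1. -/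
namespace DiamondPaper

/-- The set `𝔹_m ⊆ ℝ`: `𝔹_0 = {0,1}` and, for `m ≥ 1`,
`𝔹_m = {(2i−1)/2^m : i = 1,…,2^{m−1}}`. -/
def Bset : ℕ → Set ℝ
  | 0 => {0, 1}
  | (m + 1) => {r | ∃ i : ℕ, 1 ≤ i ∧ i ≤ 2 ^ m ∧ r = (2 * (i : ℝ) - 1) / 2 ^ (m + 1)}

/-- `A ≺ B` : `B` strictly extends `A`. -/
def Prec (A B : Finset ℕ) : Prop :=
  A ⊆ B ∧ A.card < B.card ∧ ∀ a ∈ A, ∀ b ∈ B, b ∉ A → a < b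

/-- `B|_m`: the set of the `m` smallest elements of `B`. -/
def restrict (B : Finset ℕ) (m : ℕ) : Finset ℕ :=
  ((B.sort (· ≤ ·)).take m).toFinset

/-- The vertex predicate for the countably branching diamond graph `G_k`. -/
def IsVertex (k : ℕ) (v : Finset ℕ × ℝ) : Prop :=
  v.1.card ≤ k ∧ v.2 ∈ Bset v.1.card

/-- The vertex set `V_k`. -/
def Vert (k : ℕ) : Type := {v : Finset ℕ × ℝ // IsVertex k v}

/-- The countably branching diamond graph `G_k` of depth `k`. -/
def Gk (k : ℕ) : SimpleGraph (Vert k) where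
  Adj u v := (Prec u.1.1 v.1.1 ∨ Prec v.1.1 u.1.1) ∧ |u.1.2 - v.1.2| = (1/2 : ℝ) ^ k
  symm := by
    constructor
    intro u v h
    exact ⟨h.1.symm, by rw [abs_sub_comm]; exact h.2⟩
  loopless := by
    constructor
    intro v h
    rcases h.1 with h1 | h1 <;> exact absurd h1.2.1 (lt_irrefl _)

lemma prec_restrict {A B : Finset ℕ} (h : Prec A B) : A = restrict B A.card := by
  obtain ⟨hsub, hcard, hlt⟩ := h
  set l := B.sort (· ≤ ·) with hl
  set m := A.card with hm
  have hnodup : l.Nodup := B.sort_nodup _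
  have hsorted : l.Pairwise (· ≤ ·) := B.pairwise_sort _
  have hlen : l.length = B.card := B.length_sort _
  have hcardtake : (l.take m).toFinset.card = m := by
    rw [List.toFinset_card_of_nodup (hnodup.sublist (List.take_sublist _ _)),
        List.length_take]
    omega
  have hsub2 : (l.take m).toFinset ⊆ A := by
    intro x hx
    by_contra hxA
    rw [List.mem_toFinset] at hx
    have hxl : x ∈ l := List.mem_of_mem_take hx
    have hxB : x ∈ B := (Finset.mem_sort _).mp hxl
    have hax : ∀ a ∈ A, a < x := fun a ha => hlt a ha x hxB hxA
    obtain ⟨j, hj, hxj⟩ := List.mem_iff_getElem.mp hx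
    rw [List.getElem_take] at hxj
    have hjm : j < m := lt_of_lt_of_le hj (by rw [List.length_take]; omega)
    have hidx : ∀ a ∈ A, l.idxOf a < j := by
      intro a ha
      have hal : a ∈ l := (Finset.mem_sort _).mpr (hsub ha)
      by_contra hge
      push_neg at hge
      have hjx : l.length > j := by omega
      have hil : l.idxOf a < l.length := List.idxOf_lt_length_iff.mpr hal
      have : x ≤ a := by
        have := List.Pairwise.rel_get_of_le hsorted
          (a := ⟨j, by omega⟩) (b := ⟨l.idxOf a, hil⟩)
          (by simpa [Fin.le_def] using hge)
        simpa [List.get_eq_getElem, hxj, List.getElem_idxOf hil] using this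
      exact absurd (hax a ha) (not_lt.mpr this)
    have : A.card ≤ j := by
      have := Finset.card_le_card_of_injOn (s := A) (t := Finset.range j)
        (fun a => l.idxOf a) (fun a ha => Finset.mem_range.mpr (hidx a ha)) ?_
      · simpa using this
      intro a ha b hb hab
      exact (List.idxOf_inj ((Finset.mem_sort _).mpr (hsub ha))).mp hab
    omega
  exact (Finset.eq_of_subset_of_card_le hsub2 (by omega)).symm

lemma sum_div_pow (σ : ℕ → ℕ) (n : ℕ) :
    ∑ i ∈ Finset.Icc 1 n, (σ i : ℝ) * (1/2 : ℝ) ^ i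
      = ((∑ i ∈ Finset.Icc 1 n, σ i * 2 ^ (n - i) : ℕ) : ℝ) / 2 ^ n := by
  push_cast
  rw [Finset.sum_div]
  refine Finset.sum_congr rfl ?_
  intro i hi
  rw [Finset.mem_Icc] at hi
  have h2 : (2:ℝ) ^ (n - i) * 2 ^ i = 2 ^ n := by
    rw [← pow_add]; congr 1; omega
  rw [div_pow, one_pow, eq_div_iff (by positivity)]
  have hi2 : (0:ℝ) < 2 ^ i := by positivity
  field_simp
  nlinarith [h2]

lemma odd_numer (σ : ℕ → ℕ) (n : ℕ) (hn : 1 ≤ n) (h : σ n = 1) :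
    Odd (∑ i ∈ Finset.Icc 1 n, σ i * 2 ^ (n - i)) := by
  have hins : Finset.Icc 1 n = insert n (Finset.Icc 1 (n-1)) := by
    ext i; simp [Finset.mem_Icc, Finset.mem_insert]; omega
  rw [hins, Finset.sum_insert (by simp [Finset.mem_Icc]; omega)]
  have : ∑ i ∈ Finset.Icc 1 (n-1), σ i * 2 ^ (n - i)
      = 2 * ∑ i ∈ Finset.Icc 1 (n-1), σ i * 2 ^ (n - 1 - i) := by
    rw [Finset.mul_sum]
    refine Finset.sum_congr rfl ?_
    intro i hi
    rw [Finset.mem_Icc] at hi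
    have : n - i = (n - 1 - i) + 1 := by omega
    rw [this, pow_succ]; ring
  rw [this, h, Nat.sub_self, pow_zero]
  exact ⟨_, by ring⟩

lemma level_eq {n m N M : ℕ} (hN : Odd N) (hM : Odd M)
    (h : (N : ℝ) / 2 ^ n = (M : ℝ) / 2 ^ m) : n = m := by
  have h2 : (N : ℝ) * 2 ^ m = M * 2 ^ n := by
    field_simp at h; linarith
  have h3 : N * 2 ^ m = M * 2 ^ n := by exact_mod_cast h2
  by_contra hne
  rcases Nat.lt_or_ge n m with hlt | hge
  · have : N * 2 ^ (m - n) * 2 ^ n = M * 2 ^ n := by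
      rw [mul_assoc, ← pow_add, show m - n + n = m by omega]
      exact h3
    have h4 : N * 2 ^ (m - n) = M := Nat.eq_of_mul_eq_mul_right (by positivity) this
    have : Even M := by
      rw [← h4]
      exact (Nat.even_pow.mpr ⟨even_two, by omega⟩).mul_left _
    exact (Nat.not_even_iff_odd.mpr hM) this
  · have hgt : m < n := by omega
    have : M * 2 ^ (n - m) * 2 ^ m = N * 2 ^ m := by
      rw [mul_assoc, ← pow_add, show n - m + m = n by omega]
      exact h3.symm
    have h4 : M * 2 ^ (n - m) = N := Nat.eq_of_mul_eq_mul_right (by positivity) this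
    have : Even N := by
      rw [← h4]
      exact (Nat.even_pow.mpr ⟨even_two, by omega⟩).mul_left _
    exact (Nat.not_even_iff_odd.mpr hN) this

lemma geo_sum (a b : ℕ) (hab : a ≤ b) :
    ∑ i ∈ Finset.Icc (a+1) b, (1/2:ℝ)^i = (1/2)^a - (1/2)^b := by
  induction b with
  | zero =>
    have : a = 0 := by omega
    subst this; simp
  | succ n ih =>
    rcases Nat.lt_or_ge a (n+1) with h | h
    · have han : a ≤ n := by omega
      rw [show Finset.Icc (a+1) (n+1) = insert (n+1) (Finset.Icc (a+1) n) by
        ext i; simp [Finset.mem_Icc]; omega]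
      rw [Finset.sum_insert (by simp [Finset.mem_Icc]), ih han, pow_succ]
      ring
    · have : a = n + 1 := by omega
      subst this; simp

lemma sum_split (f : ℕ → ℝ) {a b : ℕ} (hab : a ≤ b) :
    ∑ i ∈ Finset.Icc 1 b, f i
      = ∑ i ∈ Finset.Icc 1 a, f i + ∑ i ∈ Finset.Icc (a+1) b, f i := by
  have h1 : ∀ c : ℕ, Finset.Icc 1 c = Finset.Ioc 0 c := by
    intro c; ext i; simp [Finset.mem_Icc, Finset.mem_Ioc]; omega
  have h2 : Finset.Icc (a+1) b = Finset.Ioc a b := by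
    ext i; simp [Finset.mem_Icc, Finset.mem_Ioc]
  rw [h1, h1, h2]
  exact (Finset.sum_Ioc_consecutive f (Nat.zero_le a) hab).symm

lemma bset_odd {m : ℕ} {r : ℝ} (hm : 1 ≤ m) (hr : r ∈ Bset m) :
    ∃ M : ℕ, Odd M ∧ r = (M : ℝ) / 2 ^ m := by
  obtain ⟨q, rfl⟩ : ∃ q, m = q + 1 := ⟨m - 1, by omega⟩
  obtain ⟨i, hi1, hi2, hri⟩ := hr
  refine ⟨2 * i - 1, ⟨i - 1, by omega⟩, ?_⟩
  rw [hri]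
  congr 1
  push_cast [Nat.cast_sub (show 1 ≤ 2 * i by omega)]
  ring

/-- Characterization of the edges of `G_k` incident to a vertex
`(B,s)` with `|B| = k`, in terms of the binary expansion `s = Σ_{i=1}^k σ_i 2^{−i}`
(with `σ_k = 1`). -/
theorem adj_maximal_iff (k : ℕ) (hk : 1 ≤ k)
    (B : Finset ℕ) (s : ℝ) (hB : IsVertex k (B, s)) (hBk : B.card = k)
    (σ : ℕ → ℕ) (hσ01 : ∀ i, σ i = 0 ∨ σ i = 1) (hσk : σ k = 1)
    (hs : s = ∑ i ∈ Finset.Icc 1 k, (σ i : ℝ) * (1/2 : ℝ) ^ i)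
    (A : Finset ℕ) (r : ℝ) (hA : IsVertex k (A, r)) :
    (Gk k).Adj ⟨(A, r), hA⟩ ⟨(B, s), hB⟩ ↔
      (Prec A B ∧
        ((r = s - (1/2 : ℝ) ^ k ∧
          ((∃ im : ℕ, 1 ≤ im ∧ im ≤ k - 1 ∧ σ im = 1 ∧
              (∀ i : ℕ, im < i → i ≤ k - 1 → σ i ≠ 1) ∧
              A = restrict B im ∧
              r = ∑ i ∈ Finset.Icc 1 im, (σ i : ℝ) * (1/2 : ℝ) ^ i) ∨
            ((∀ i : ℕ, 1 ≤ i → i ≤ k - 1 → σ i ≠ 1) ∧ A = ∅ ∧ r = 0))) ∨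
         (r = s + (1/2 : ℝ) ^ k ∧
          ((∃ ip : ℕ, 1 ≤ ip ∧ ip ≤ k - 1 ∧ σ ip = 0 ∧
              (∀ i : ℕ, ip < i → i ≤ k - 1 → σ i ≠ 0) ∧
              A = restrict B ip ∧
              r = (∑ i ∈ Finset.Icc 1 (ip - 1), (σ i : ℝ) * (1/2 : ℝ) ^ i)
                    + (1/2 : ℝ) ^ ip) ∨
            ((∀ i : ℕ, 1 ≤ i → i ≤ k - 1 → σ i ≠ 0) ∧ A = ∅ ∧ r = 1))))) := by
  have hc : (0:ℝ) < (1/2 : ℝ) ^ k := by positivity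
  have hAdj : (Gk k).Adj ⟨(A, r), hA⟩ ⟨(B, s), hB⟩ ↔
      (Prec A B ∨ Prec B A) ∧ |r - s| = (1/2 : ℝ) ^ k := Iff.rfl
  rw [hAdj]
  constructor
  · rintro ⟨hp, habs⟩
    have hPAB : Prec A B := by
      rcases hp with h | h
      · exact h
      · exfalso; have h1 := h.2.1; have h2 : A.card ≤ k := hA.1; omega
    refine ⟨hPAB, ?_⟩
    have hAcard : A.card < k := by have := hPAB.2.1; omega
    have hAres : A = restrict B A.card := prec_restrict hPAB
    have hBm : r ∈ Bset A.card := hA.2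
    rcases (abs_eq (le_of_lt hc)).mp habs with hrd | hrd
    · -- r = s + (1/2)^k
      right
      have hr : r = s + (1/2:ℝ)^k := by linarith
      refine ⟨hr, ?_⟩
      by_cases hex : ∃ i, 1 ≤ i ∧ i ≤ k - 1 ∧ σ i = 0
      · left
        obtain ⟨i0, hi01, hi0k, hi0σ⟩ := hex
        set ip := Nat.findGreatest (fun i => σ i = 0) (k-1) with hip
        have hip_ge : i0 ≤ ip := Nat.le_findGreatest (P := fun i => σ i = 0) hi0k hi0σ
        have hip1 : 1 ≤ ip := le_trans hi01 hip_ge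
        have hip_le : ip ≤ k - 1 := Nat.findGreatest_le _
        have hipσ : σ ip = 0 := Nat.findGreatest_spec (P := fun i => σ i = 0) hi0k hi0σ
        have hgreat : ∀ i, ip < i → i ≤ k - 1 → σ i ≠ 0 :=
          fun i h1 h2 => Nat.findGreatest_is_greatest (P := fun i => σ i = 0) h1 h2
        have hone : ∀ i, ip < i → i ≤ k → σ i = 1 := by
          intro i h1 h2
          rcases Nat.lt_or_ge i k with h | h
          · rcases hσ01 i with h0 | h0
            · exact absurd h0 (hgreat i h1 (by omega))
            · exact h0
          · have : i = k := by omega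
            rw [this]; exact hσk
        have hval : r = (∑ i ∈ Finset.Icc 1 (ip - 1), (σ i : ℝ) * (1/2 : ℝ) ^ i)
            + (1/2 : ℝ) ^ ip := by
          rw [hr, hs, sum_split _ (show ip ≤ k by omega)]
          have e1 : ∑ i ∈ Finset.Icc 1 ip, (σ i : ℝ) * (1/2:ℝ) ^ i
              = ∑ i ∈ Finset.Icc 1 (ip-1), (σ i : ℝ) * (1/2:ℝ) ^ i := by
            rw [sum_split _ (show ip - 1 ≤ ip by omega),
              show Finset.Icc (ip-1+1) ip = {ip} by ext i; simp [Finset.mem_Icc]; omega]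
            simp [hipσ]
          have e2 : ∑ i ∈ Finset.Icc (ip+1) k, (σ i : ℝ) * (1/2:ℝ) ^ i
              = (1/2:ℝ) ^ ip - (1/2:ℝ) ^ k := by
            rw [← geo_sum ip k (by omega)]
            refine Finset.sum_congr rfl ?_
            intro i hi
            rw [Finset.mem_Icc] at hi
            rw [hone i (by omega) (by omega)]
            simp
          rw [e1, e2]; ring
        refine ⟨ip, hip1, hip_le, hipσ, hgreat, ?_, hval⟩
        -- A = restrict B ip via card identification
        set τ : ℕ → ℕ := fun i => if i = ip then 1 else σ i with hτ
        have hvalτ : r = ∑ i ∈ Finset.Icc 1 ip, (τ i : ℝ) * (1/2:ℝ) ^ i := by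
          rw [sum_split _ (show ip - 1 ≤ ip by omega),
            show Finset.Icc (ip-1+1) ip = {ip} by ext i; simp [Finset.mem_Icc]; omega]
          rw [hval]
          have : ∑ i ∈ Finset.Icc 1 (ip-1), (τ i : ℝ) * (1/2:ℝ) ^ i
              = ∑ i ∈ Finset.Icc 1 (ip-1), (σ i : ℝ) * (1/2:ℝ) ^ i := by
            refine Finset.sum_congr rfl ?_
            intro i hi
            rw [Finset.mem_Icc] at hi
            have : τ i = σ i := by rw [hτ]; simp only []; rw [if_neg (by omega)]
            rw [this]
          rw [this]
          simp [hτ]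
        have hrN : r = ((∑ i ∈ Finset.Icc 1 ip, τ i * 2 ^ (ip - i) : ℕ) : ℝ) / 2 ^ ip := by
          rw [hvalτ, sum_div_pow]
        have hNodd : Odd (∑ i ∈ Finset.Icc 1 ip, τ i * 2 ^ (ip - i)) :=
          odd_numer τ ip hip1 (by simp [hτ])
        have hmcard : A.card = ip := by
          rcases Nat.eq_zero_or_pos A.card with h0 | hpos
          · exfalso
            rw [h0] at hBm
            rcases hBm with h1 | h1
            · have h2 : ((∑ i ∈ Finset.Icc 1 ip, τ i * 2 ^ (ip - i) : ℕ) : ℝ) / 2 ^ ip = 0 :=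
                hrN.symm.trans h1
              rw [div_eq_zero_iff] at h2
              have h3 : (∑ i ∈ Finset.Icc 1 ip, τ i * 2 ^ (ip - i)) = 0 := by
                rcases h2 with h2 | h2
                · exact_mod_cast h2
                · exact absurd h2 (by positivity)
              rw [h3] at hNodd
              simp at hNodd
            · have h1' : r = ((1:ℕ):ℝ) / 2 ^ (0:ℕ) := by
                simp only [Set.mem_singleton_iff] at h1
                rw [h1]; simp
              have := level_eq hNodd odd_one (hrN.symm.trans h1')
              omega
          · obtain ⟨M, hModd, hrM⟩ := bset_odd hpos hBm
            exact (level_eq hNodd hModd (hrN.symm.trans hrM)).symm ▸ rfl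
        rw [hAres, hmcard]
      · right
        push_neg at hex
        have hone : ∀ i, 1 ≤ i → i ≤ k → σ i = 1 := by
          intro i h1 h2
          rcases Nat.lt_or_ge i k with h | h
          · rcases hσ01 i with h0 | h0
            · exact absurd h0 (hex i h1 (by omega))
            · exact h0
          · have : i = k := by omega
            rw [this]; exact hσk
        have hr1 : r = 1 := by
          rw [hr, hs]
          have : ∑ i ∈ Finset.Icc 1 k, (σ i : ℝ) * (1/2:ℝ) ^ i
              = (1/2:ℝ) ^ 0 - (1/2:ℝ) ^ k := by
            rw [← geo_sum 0 k (by omega)]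
            refine Finset.sum_congr rfl ?_
            intro i hi
            rw [Finset.mem_Icc] at hi
            rw [hone i (by omega) (by omega)]
            simp
          rw [this]; simp
        have hmcard : A.card = 0 := by
          by_contra h0
          have hpos : 1 ≤ A.card := by omega
          obtain ⟨M, hModd, hrM⟩ := bset_odd hpos hBm
          have h1' : r = ((1:ℕ):ℝ) / 2 ^ (0:ℕ) := by rw [hr1]; simp
          have := level_eq odd_one hModd (h1'.symm.trans hrM)
          omega
        exact ⟨hex, Finset.card_eq_zero.mp hmcard, hr1⟩
    · -- r = s - (1/2)^k
      left
      have hr : r = s - (1/2:ℝ)^k := by linarith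
      refine ⟨hr, ?_⟩
      have hsplitk : s - (1/2:ℝ)^k = ∑ i ∈ Finset.Icc 1 (k-1), (σ i:ℝ) * (1/2:ℝ)^i := by
        rw [hs, sum_split _ (show k - 1 ≤ k by omega),
          show Finset.Icc (k-1+1) k = {k} by ext i; simp [Finset.mem_Icc]; omega]
        simp [hσk]
      by_cases hex : ∃ i, 1 ≤ i ∧ i ≤ k - 1 ∧ σ i = 1
      · left
        obtain ⟨i0, hi01, hi0k, hi0σ⟩ := hex
        set im := Nat.findGreatest (fun i => σ i = 1) (k-1) with him
        have him_ge : i0 ≤ im := Nat.le_findGreatest (P := fun i => σ i = 1) hi0k hi0σ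
        have him1 : 1 ≤ im := le_trans hi01 him_ge
        have him_le : im ≤ k - 1 := Nat.findGreatest_le _
        have himσ : σ im = 1 := Nat.findGreatest_spec (P := fun i => σ i = 1) hi0k hi0σ
        have hgreat : ∀ i, im < i → i ≤ k - 1 → σ i ≠ 1 :=
          fun i h1 h2 => Nat.findGreatest_is_greatest (P := fun i => σ i = 1) h1 h2
        have hval : r = ∑ i ∈ Finset.Icc 1 im, (σ i : ℝ) * (1/2:ℝ) ^ i := by
          rw [hr, hsplitk, sum_split _ (show im ≤ k - 1 by omega)]
          have : ∑ i ∈ Finset.Icc (im+1) (k-1), (σ i : ℝ) * (1/2:ℝ) ^ i = 0 := by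
            apply Finset.sum_eq_zero
            intro i hi
            rw [Finset.mem_Icc] at hi
            have : σ i = 0 := by
              rcases hσ01 i with h0 | h0
              · exact h0
              · exact absurd h0 (hgreat i (by omega) (by omega))
            rw [this]; simp
          rw [this]; ring
        refine ⟨im, him1, him_le, himσ, hgreat, ?_, hval⟩
        have hrN : r = ((∑ i ∈ Finset.Icc 1 im, σ i * 2 ^ (im - i) : ℕ) : ℝ) / 2 ^ im := by
          rw [hval, sum_div_pow]
        have hNodd : Odd (∑ i ∈ Finset.Icc 1 im, σ i * 2 ^ (im - i)) :=
          odd_numer σ im him1 himσ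
        have hmcard : A.card = im := by
          rcases Nat.eq_zero_or_pos A.card with h0 | hpos
          · exfalso
            rw [h0] at hBm
            rcases hBm with h1 | h1
            · have h2 : ((∑ i ∈ Finset.Icc 1 im, σ i * 2 ^ (im - i) : ℕ) : ℝ) / 2 ^ im = 0 :=
                hrN.symm.trans h1
              rw [div_eq_zero_iff] at h2
              have h3 : (∑ i ∈ Finset.Icc 1 im, σ i * 2 ^ (im - i)) = 0 := by
                rcases h2 with h2 | h2
                · exact_mod_cast h2
                · exact absurd h2 (by positivity)
              rw [h3] at hNodd
              simp at hNodd
            · have h1' : r = ((1:ℕ):ℝ) / 2 ^ (0:ℕ) := by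
                simp only [Set.mem_singleton_iff] at h1
                rw [h1]; simp
              have := level_eq hNodd odd_one (hrN.symm.trans h1')
              omega
          · obtain ⟨M, hModd, hrM⟩ := bset_odd hpos hBm
            exact (level_eq hNodd hModd (hrN.symm.trans hrM)).symm ▸ rfl
        rw [hAres, hmcard]
      · right
        push_neg at hex
        have hr0 : r = 0 := by
          rw [hr, hsplitk]
          apply Finset.sum_eq_zero
          intro i hi
          rw [Finset.mem_Icc] at hi
          have : σ i = 0 := by
            rcases hσ01 i with h0 | h0
            · exact h0
            · exact absurd h0 (hex i hi.1 hi.2)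
          rw [this]; simp
        have hmcard : A.card = 0 := by
          by_contra h0
          have hpos : 1 ≤ A.card := by omega
          obtain ⟨M, hModd, hrM⟩ := bset_odd hpos hBm
          rw [hr0] at hrM
          have : (M:ℝ) = 0 := by
            field_simp at hrM
            simpa using hrM.symm
          have : M = 0 := by exact_mod_cast this
          rw [this] at hModd
          simp at hModd
        exact ⟨hex, Finset.card_eq_zero.mp hmcard, hr0⟩
  · rintro ⟨hPAB, hcase⟩
    refine ⟨Or.inl hPAB, ?_⟩
    rcases hcase with ⟨hr, -⟩ | ⟨hr, -⟩
    · rw [hr, show s - (1/2:ℝ)^k - s = -((1/2:ℝ)^k) by ring, abs_neg, abs_of_pos hc]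
    · rw [hr, show s + (1/2:ℝ)^k - s = (1/2:ℝ)^k by ring, abs_of_pos hc]


end DiamondPaper
end

section
/- Let Y be a Banach space whose norm is asymptotically midpoint uniformly convex. Then for every λ ∈ (0,1), every t ∈ (0,1), and all x, y ∈ Y, there exists a finite subset S of Y such that Bar_λ(x, y, δ̃_Y(t)/4) ⊆ S + 4t·max{λ, 1−λ}·‖x−y‖·B_Y. -/
set_option maxHeartbeats 1000000


namespace DiamondPaper

/-- The modulus of asymptotic midpoint uniform convexity with respect to an
(equivalent) norm `N` on `Y`. -/
noncomputable def amucWith (Y : Type*) [NormedAddCommGroup Y] [NormedSpace ℝ Y]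
    (N : Y → ℝ) (t : ℝ) : ℝ :=
  (⨅ y : {y : Y // N y = 1},
    ⨆ Z : {Z : Submodule ℝ Y // IsClosed (Z : Set Y) ∧ FiniteDimensional ℝ (Y ⧸ Z)},
      ⨅ z : {z : Y // z ∈ Z.1 ∧ N z = 1},
        max (N (y.1 + t • z.1)) (N (y.1 - t • z.1))) - 1

/-- The modulus of asymptotic midpoint uniform convexity of the norm of `Y`. -/
noncomputable def amuc (Y : Type*) [NormedAddCommGroup Y] [NormedSpace ℝ Y]
    (t : ℝ) : ℝ :=
  amucWith Y (fun y => ‖y‖) t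

/-- The `δ`-approximate metric `λ`-barycenter set between `x` and `y`. -/
def Bar {Y : Type*} [NormedAddCommGroup Y] (lam : ℝ) (x y : Y) (δ : ℝ) : Set Y :=
  {z | max (‖x - z‖ / lam) (‖z - y‖ / (1 - lam)) ≤ (1 + δ) * ‖x - y‖}

/-- From a strict lower bound on `amuc Y t + 1`, extract a closed finite-codimensional
subspace witnessing the asymptotic convexity inequality at a given unit vector `e`. -/
lemma exists_good_subspace (Y : Type*) [NormedAddCommGroup Y] [NormedSpace ℝ Y]
    (t : ℝ) {e : Y} (he : ‖e‖ = 1) {c : ℝ} (hc : c < amuc Y t + 1) :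
    ∃ Z : Submodule ℝ Y, IsClosed (Z : Set Y) ∧ FiniteDimensional ℝ (Y ⧸ Z) ∧
      ∀ w ∈ Z, ‖w‖ = 1 → c ≤ max ‖e + t • w‖ ‖e - t • w‖ := by
  classical
  haveI hne : Nonempty {Z : Submodule ℝ Y //
      IsClosed (Z : Set Y) ∧ FiniteDimensional ℝ (Y ⧸ Z)} :=
    ⟨⟨⊤, by rw [Submodule.top_coe]; exact isClosed_univ, inferInstance⟩⟩
  have h1 : amuc Y t + 1 =
      ⨅ y' : {y' : Y // ‖y'‖ = 1},
        ⨆ Z : {Z : Submodule ℝ Y // IsClosed (Z : Set Y) ∧ FiniteDimensional ℝ (Y ⧸ Z)},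
          ⨅ z : {z : Y // z ∈ Z.1 ∧ ‖z‖ = 1},
            max ‖y'.1 + t • z.1‖ ‖y'.1 - t • z.1‖ := by
    show amucWith Y (fun y => ‖y‖) t + 1 = _
    unfold amucWith
    exact sub_add_cancel _ _
  have hlow : (⨅ y' : {y' : Y // ‖y'‖ = 1},
        ⨆ Z : {Z : Submodule ℝ Y // IsClosed (Z : Set Y) ∧ FiniteDimensional ℝ (Y ⧸ Z)},
          ⨅ z : {z : Y // z ∈ Z.1 ∧ ‖z‖ = 1},
            max ‖y'.1 + t • z.1‖ ‖y'.1 - t • z.1‖) ≤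
      ⨆ Z : {Z : Submodule ℝ Y // IsClosed (Z : Set Y) ∧ FiniteDimensional ℝ (Y ⧸ Z)},
        ⨅ z : {z : Y // z ∈ Z.1 ∧ ‖z‖ = 1},
          max ‖e + t • z.1‖ ‖e - t • z.1‖ := by
    refine ciInf_le ⟨0, ?_⟩ (⟨e, he⟩ : {y' : Y // ‖y'‖ = 1})
    rintro v ⟨y', rfl⟩
    exact Real.iSup_nonneg fun Z => Real.iInf_nonneg fun z =>
      le_trans (norm_nonneg _) (le_max_left _ _)
  have hstep : c < ⨆ Z : {Z : Submodule ℝ Y //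
        IsClosed (Z : Set Y) ∧ FiniteDimensional ℝ (Y ⧸ Z)},
      ⨅ z : {z : Y // z ∈ Z.1 ∧ ‖z‖ = 1},
        max ‖e + t • z.1‖ ‖e - t • z.1‖ := by
    rw [h1] at hc; exact lt_of_lt_of_le hc hlow
  obtain ⟨Z, hZ⟩ := exists_lt_of_lt_ciSup hstep
  refine ⟨Z.1, Z.2.1, Z.2.2, fun w hw hw1 => ?_⟩
  have : (⨅ z : {z : Y // z ∈ Z.1 ∧ ‖z‖ = 1},
      max ‖e + t • z.1‖ ‖e - t • z.1‖) ≤ max ‖e + t • w‖ ‖e - t • w‖ := by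
    refine ciInf_le ⟨0, ?_⟩ (⟨w, hw, hw1⟩ : {z : Y // z ∈ Z.1 ∧ ‖z‖ = 1})
    rintro v ⟨z, rfl⟩
    exact le_trans (norm_nonneg _) (le_max_left _ _)
  exact le_of_lt (lt_of_lt_of_le hZ this)

/-- The core covering argument: given a good subspace witnessing the convexity
inequality at `(x-y)/‖x-y‖`, the barycenter set is covered by finitely many balls. -/
lemma cover_of_good_subspace (Y : Type*) [NormedAddCommGroup Y] [NormedSpace ℝ Y]
    {lam t δ : ℝ} (hlam0 : 0 < lam) (hlam1 : lam < 1) (ht0 : 0 < t) (hδ : 0 < δ)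
    (x y : Y) (hd : 0 < ‖x - y‖)
    (Z : Submodule ℝ Y) (hZc : IsClosed (Z : Set Y)) (hZf : FiniteDimensional ℝ (Y ⧸ Z))
    (hP : ∀ w ∈ Z, ‖w‖ = 1 →
      1 + 3 * δ ≤ max ‖‖x - y‖⁻¹ • (x - y) + t • w‖ ‖‖x - y‖⁻¹ • (x - y) - t • w‖) :
    ∃ S : Finset Y, Bar lam x y δ ⊆
      ⋃ s ∈ S, Metric.closedBall s (4 * t * max lam (1 - lam) * ‖x - y‖) := by
  classical
  haveI := hZc
  haveI := hZf
  set d : ℝ := ‖x - y‖ with hdd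
  set M : ℝ := max lam (1 - lam) with hMd
  have hM2 : (1 : ℝ) / 2 ≤ M := by
    rcases le_total lam (1 - lam) with h | h
    · rw [hMd, max_eq_right h]; linarith
    · rw [hMd, max_eq_left h]; linarith
  set ε : ℝ := min (δ * d) (t * d) with hεd
  have hεpos : 0 < ε := lt_min (by positivity) (by positivity)
  have hε1 : ε ≤ δ * d := min_le_left _ _
  have hε2 : ε ≤ t * d := min_le_right _ _
  have hBarb : ∀ z ∈ Bar lam x y δ,
      ‖x - z‖ ≤ lam * ((1 + δ) * d) ∧ ‖z - y‖ ≤ (1 - lam) * ((1 + δ) * d) := by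
    intro z hz
    have h1 : ‖x - z‖ / lam ≤ (1 + δ) * d := le_trans (le_max_left _ _) hz
    have h2 : ‖z - y‖ / (1 - lam) ≤ (1 + δ) * d := le_trans (le_max_right _ _) hz
    rw [div_le_iff₀ hlam0] at h1
    rw [div_le_iff₀ (by linarith : (0:ℝ) < 1 - lam)] at h2
    constructor
    · nlinarith
    · nlinarith
  -- Key: two points of the barycenter set whose images in the quotient are close
  -- are close in `Y`.
  have key : ∀ z₁ ∈ Bar lam x y δ, ∀ z₂ ∈ Bar lam x y δ,
      ‖(Submodule.Quotient.mk (z₁ - z₂) : Y ⧸ Z)‖ < ε → ‖z₁ - z₂‖ ≤ 4 * t * M * d := by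
    intro z₁ hz₁ z₂ hz₂ hq
    by_contra hcon
    push_neg at hcon
    obtain ⟨h1x, h1y⟩ := hBarb z₁ hz₁
    obtain ⟨h2x, h2y⟩ := hBarb z₂ hz₂
    set u : Y := z₁ - z₂ with hu
    obtain ⟨m, hm, hmn⟩ := Submodule.Quotient.norm_mk_lt
      (Submodule.Quotient.mk u : Y ⧸ Z)
      (show (0:ℝ) < ε - ‖(Submodule.Quotient.mk u : Y ⧸ Z)‖ by linarith)
    have hmε : ‖m‖ < ε := by linarith
    have hmem : m - u ∈ Z := (Submodule.Quotient.eq Z).mp hm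
    set w : Y := u - m with hw
    have hwZ : w ∈ Z := by
      have := Z.neg_mem hmem
      simpa [hw, neg_sub] using this
    have hub : 4 * t * M * d < ‖u‖ := hcon
    have hud : 2 * (t * d) < ‖u‖ := by nlinarith
    have hu0 : (0:ℝ) < ‖u‖ := by nlinarith
    have hwn : ‖u‖ - ‖m‖ ≤ ‖w‖ := by
      simpa [hw] using norm_sub_norm_le u m
    have hwpos : (0:ℝ) < ‖w‖ := by nlinarith
    have hw0 : ‖w‖ ≠ 0 := ne_of_gt hwpos
    set α : ℝ := t * d / ‖u‖ with hα
    have hα0 : 0 < α := by positivity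
    have hα2 : α < 1 / 2 := by
      rw [hα, div_lt_iff₀ hu0]; nlinarith
    have hαu : α * ‖u‖ = t * d := div_mul_cancel₀ _ (ne_of_gt hu0)
    -- convexity bounds
    have hsum : x - y + u = (x - z₂) + (z₁ - y) := by rw [hu]; abel
    have hsum' : x - y - u = (x - z₁) + (z₂ - y) := by rw [hu]; abel
    have hxyu : ‖x - y + u‖ ≤ (1 + δ) * d := by
      rw [hsum]
      refine (norm_add_le _ _).trans ?_
      calc ‖x - z₂‖ + ‖z₁ - y‖ ≤ lam * ((1 + δ) * d) + (1 - lam) * ((1 + δ) * d) :=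
            add_le_add h2x h1y
        _ = (1 + δ) * d := by ring
    have hxyu' : ‖x - y - u‖ ≤ (1 + δ) * d := by
      rw [hsum']
      refine (norm_add_le _ _).trans ?_
      calc ‖x - z₁‖ + ‖z₂ - y‖ ≤ lam * ((1 + δ) * d) + (1 - lam) * ((1 + δ) * d) :=
            add_le_add h1x h2y
        _ = (1 + δ) * d := by ring
    have hconv : ‖x - y + α • u‖ ≤ (1 + δ) * d := by
      have hid : x - y + α • u = (1 - α) • (x - y) + α • (x - y + u) := by module
      rw [hid]
      calc ‖(1 - α) • (x - y) + α • (x - y + u)‖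
          ≤ ‖(1 - α) • (x - y)‖ + ‖α • (x - y + u)‖ := norm_add_le _ _
        _ = (1 - α) * d + α * ‖x - y + u‖ := by
            rw [norm_smul, norm_smul, Real.norm_eq_abs, Real.norm_eq_abs,
              abs_of_nonneg (by linarith : (0:ℝ) ≤ 1 - α), abs_of_nonneg hα0.le]
        _ ≤ (1 - α) * d + α * ((1 + δ) * d) := by
            linarith [mul_le_mul_of_nonneg_left hxyu hα0.le]
        _ = d + α * (δ * d) := by ring
        _ ≤ d + 1 * (δ * d) :=
            add_le_add (le_refl d) (mul_le_mul_of_nonneg_right (by linarith : α ≤ 1)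
              (mul_nonneg hδ.le (norm_nonneg _)))
        _ = (1 + δ) * d := by ring
    have hconv' : ‖x - y - α • u‖ ≤ (1 + δ) * d := by
      have hid : x - y - α • u = (1 - α) • (x - y) + α • (x - y - u) := by module
      rw [hid]
      calc ‖(1 - α) • (x - y) + α • (x - y - u)‖
          ≤ ‖(1 - α) • (x - y)‖ + ‖α • (x - y - u)‖ := norm_add_le _ _
        _ = (1 - α) * d + α * ‖x - y - u‖ := by
            rw [norm_smul, norm_smul, Real.norm_eq_abs, Real.norm_eq_abs,
              abs_of_nonneg (by linarith : (0:ℝ) ≤ 1 - α), abs_of_nonneg hα0.le]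
        _ ≤ (1 - α) * d + α * ((1 + δ) * d) := by
            linarith [mul_le_mul_of_nonneg_left hxyu' hα0.le]
        _ = d + α * (δ * d) := by ring
        _ ≤ d + 1 * (δ * d) :=
            add_le_add (le_refl d) (mul_le_mul_of_nonneg_right (by linarith : α ≤ 1)
              (mul_nonneg hδ.le (norm_nonneg _)))
        _ = (1 + δ) * d := by ring
    -- the rescaled vector in Z
    set ζ : Y := ‖w‖⁻¹ • w with hζd
    have hζZ : ζ ∈ Z := Z.smul_mem _ hwZ
    have hζ1 : ‖ζ‖ = 1 := by
      rw [hζd, norm_smul, norm_inv, norm_norm, inv_mul_cancel₀ hw0]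
    have hPζ := hP ζ hζZ hζ1
    set z : Y := d • (t • ζ) with hzd
    have hde : d • (d⁻¹ • (x - y)) = x - y := by
      rw [smul_smul, mul_inv_cancel₀ (ne_of_gt hd), one_smul]
    have hzp : ‖x - y + z‖ = d * ‖d⁻¹ • (x - y) + t • ζ‖ := by
      have : x - y + z = d • (d⁻¹ • (x - y) + t • ζ) := by
        rw [smul_add, hde, hzd]
      rw [this, norm_smul, Real.norm_eq_abs, abs_of_pos hd]
    have hzm : ‖x - y - z‖ = d * ‖d⁻¹ • (x - y) - t • ζ‖ := by
      have : x - y - z = d • (d⁻¹ • (x - y) - t • ζ) := by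
        rw [smul_sub, hde, hzd]
      rw [this, norm_smul, Real.norm_eq_abs, abs_of_pos hd]
    have hmax : (1 + 3 * δ) * d ≤ max ‖x - y + z‖ ‖x - y - z‖ := by
      rcases max_choice ‖d⁻¹ • (x - y) + t • ζ‖ ‖d⁻¹ • (x - y) - t • ζ‖ with h | h
      · refine le_trans ?_ (le_max_left ‖x - y + z‖ ‖x - y - z‖)
        rw [hzp]
        rw [h] at hPζ
        nlinarith
      · refine le_trans ?_ (le_max_right ‖x - y + z‖ ‖x - y - z‖)
        rw [hzm]
        rw [h] at hPζ
        nlinarith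
    -- z is close to α • u
    have huw : u = w + m := by rw [hw]; abel
    have hzsm : z = (d * t * ‖w‖⁻¹) • w := by
      rw [hzd, hζd, smul_smul, smul_smul, mul_assoc]
    have hid2 : z - α • u = (d * t * ‖w‖⁻¹ - α) • w - α • m := by
      rw [hzsm, huw]; module
    have hc1 : |d * t * ‖w‖⁻¹ - α| * ‖w‖ = |d * t - α * ‖w‖| := by
      have hmm : (d * t * ‖w‖⁻¹ - α) * ‖w‖ = d * t - α * ‖w‖ := by
        rw [sub_mul, mul_assoc, inv_mul_cancel₀ hw0, mul_one]
      rw [← hmm, abs_mul, abs_of_nonneg (norm_nonneg w)]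
    have hc2 : |d * t - α * ‖w‖| ≤ α * ‖m‖ := by
      have hdt : d * t = α * ‖u‖ := by rw [hαu]; ring
      rw [hdt, ← mul_sub, abs_mul, abs_of_pos hα0]
      have humw : u - w = m := by rw [hw]; abel
      have h3 := abs_norm_sub_norm_le u w
      rw [humw] at h3
      exact mul_le_mul_of_nonneg_left h3 hα0.le
    have hzu : ‖z - α • u‖ < ε := by
      rw [hid2]
      calc ‖(d * t * ‖w‖⁻¹ - α) • w - α • m‖
          ≤ ‖(d * t * ‖w‖⁻¹ - α) • w‖ + ‖α • m‖ := norm_sub_le _ _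
        _ = |d * t * ‖w‖⁻¹ - α| * ‖w‖ + α * ‖m‖ := by
            rw [norm_smul, norm_smul, Real.norm_eq_abs, Real.norm_eq_abs,
              abs_of_pos hα0]
        _ ≤ α * ‖m‖ + α * ‖m‖ := by rw [hc1]; linarith
        _ < ε := by
            have h2a : α * ‖m‖ ≤ 1 / 2 * ‖m‖ :=
              mul_le_mul_of_nonneg_right hα2.le (norm_nonneg m)
            linarith
    -- the contradiction
    have hfin1 : ‖x - y + z‖ < (1 + 2 * δ) * d := by
      have hsplit : x - y + z = (x - y + α • u) + (z - α • u) := by abel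
      calc ‖x - y + z‖ ≤ ‖x - y + α • u‖ + ‖z - α • u‖ := by
            rw [hsplit]; exact norm_add_le _ _
        _ < (1 + δ) * d + ε := add_lt_add_of_le_of_lt hconv hzu
        _ ≤ (1 + 2 * δ) * d := by linarith [hε1]
    have hfin2 : ‖x - y - z‖ < (1 + 2 * δ) * d := by
      have hsplit : x - y - z = (x - y - α • u) - (z - α • u) := by abel
      calc ‖x - y - z‖ ≤ ‖x - y - α • u‖ + ‖z - α • u‖ := by
            rw [hsplit]; exact norm_sub_le _ _
        _ < (1 + δ) * d + ε := add_lt_add_of_le_of_lt hconv' hzu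
        _ ≤ (1 + 2 * δ) * d := by linarith [hε1]
    have hmaxlt : max ‖x - y + z‖ ‖x - y - z‖ < (1 + 2 * δ) * d := max_lt hfin1 hfin2
    linarith [hmax, hmaxlt, mul_pos hδ hd]
  -- cover the image of the barycenter set in the quotient
  have hcomp : IsCompact (Metric.closedBall (0 : Y ⧸ Z) (‖x‖ + lam * ((1 + δ) * d))) :=
    isCompact_closedBall _ _
  obtain ⟨T, hTsub, hTfin, hTcov⟩ := hcomp.finite_cover_balls (half_pos hεpos)
  set f : (Y ⧸ Z) → Y := fun c =>
    if h : ∃ z', z' ∈ Bar lam x y δ ∧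
        (Submodule.Quotient.mk z' : Y ⧸ Z) ∈ Metric.ball c (ε / 2)
    then h.choose else x
  refine ⟨hTfin.toFinset.image f, ?_⟩
  intro z hz
  have hzball : (Submodule.Quotient.mk z : Y ⧸ Z) ∈
      Metric.closedBall (0 : Y ⧸ Z) (‖x‖ + lam * ((1 + δ) * d)) := by
    have h1 := (hBarb z hz).1
    have h2 : ‖z‖ ≤ ‖x‖ + ‖x - z‖ := by
      have h := norm_sub_le x (x - z)
      rwa [sub_sub_cancel] at h
    rw [Metric.mem_closedBall, dist_zero_right]
    calc ‖(Submodule.Quotient.mk z : Y ⧸ Z)‖ ≤ ‖z‖ := Submodule.Quotient.norm_mk_le _ _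
      _ ≤ ‖x‖ + lam * ((1 + δ) * d) := by linarith
  obtain ⟨c, hcT, hc⟩ := Set.mem_iUnion₂.mp (hTcov hzball)
  have hex : ∃ z', z' ∈ Bar lam x y δ ∧
      (Submodule.Quotient.mk z' : Y ⧸ Z) ∈ Metric.ball c (ε / 2) := ⟨z, hz, hc⟩
  have hfc : f c ∈ Bar lam x y δ ∧
      (Submodule.Quotient.mk (f c) : Y ⧸ Z) ∈ Metric.ball c (ε / 2) := by
    simp only [f, dif_pos hex]
    exact hex.choose_spec
  have hdist : ‖(Submodule.Quotient.mk (z - f c) : Y ⧸ Z)‖ < ε := by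
    rw [Submodule.Quotient.mk_sub, ← dist_eq_norm]
    calc dist (Submodule.Quotient.mk z : Y ⧸ Z) (Submodule.Quotient.mk (f c)) ≤
        dist (Submodule.Quotient.mk z : Y ⧸ Z) c + dist c (Submodule.Quotient.mk (f c)) :=
          dist_triangle _ _ _
      _ < ε / 2 + ε / 2 := by
          refine add_lt_add (Metric.mem_ball.mp hc) ?_
          rw [dist_comm]
          exact Metric.mem_ball.mp hfc.2
      _ = ε := by ring
  have hkey := key z hz (f c) hfc.1 hdist
  refine Set.mem_iUnion₂.mpr ⟨f c, ?_, ?_⟩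
  · exact Finset.mem_image.mpr ⟨c, hTfin.mem_toFinset.mpr hcT, rfl⟩
  · rw [Metric.mem_closedBall, dist_eq_norm]
    exact hkey

/-- If the norm of `Y` is asymptotically midpoint uniformly
convex, then every approximate barycenter set `Bar_λ(x, y, δ̃_Y(t)/4)` is contained
in `S + 4t·max{λ,1−λ}·‖x−y‖·B_Y` for some finite set `S ⊆ Y`. -/
theorem bar_subset_finite_union_balls (Y : Type*) [NormedAddCommGroup Y]
    [NormedSpace ℝ Y] (hY : ∀ t ∈ Set.Ioo (0 : ℝ) 1, 0 < amuc Y t) :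
    ∀ lam ∈ Set.Ioo (0 : ℝ) 1, ∀ t ∈ Set.Ioo (0 : ℝ) 1, ∀ x y : Y,
      ∃ S : Finset Y,
        Bar lam x y (amuc Y t / 4) ⊆
          ⋃ s ∈ S, Metric.closedBall s (4 * t * max lam (1 - lam) * ‖x - y‖) := by
  intro lam hlam t ht x y
  classical
  obtain ⟨hlam0, hlam1⟩ := hlam
  obtain ⟨ht0, ht1⟩ := ht
  have hamuc := hY t ⟨ht0, ht1⟩
  have hδ : 0 < amuc Y t / 4 := by linarith
  rcases eq_or_lt_of_le (norm_nonneg (x - y)) with hd0 | hd0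
  · -- degenerate case `x = y`
    refine ⟨{x}, fun z hz => ?_⟩
    have h1 : ‖x - z‖ / lam ≤ (1 + amuc Y t / 4) * ‖x - y‖ := le_trans (le_max_left _ _) hz
    rw [← hd0, mul_zero] at h1
    rw [div_le_iff₀ hlam0, zero_mul] at h1
    have hzx : z = x := by
      have hx0 : ‖x - z‖ = 0 := le_antisymm h1 (norm_nonneg _)
      have := sub_eq_zero.mp (norm_eq_zero.mp hx0)
      exact this.symm
    refine Set.mem_iUnion₂.mpr ⟨x, Finset.mem_singleton_self x, ?_⟩
    rw [Metric.mem_closedBall, hzx, dist_self, ← hd0, mul_zero]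
  · -- main case
    have he : ‖‖x - y‖⁻¹ • (x - y)‖ = 1 := by
      rw [norm_smul, norm_inv, norm_norm, inv_mul_cancel₀ (ne_of_gt hd0)]
    have hc : 1 + 3 * (amuc Y t / 4) < amuc Y t + 1 := by linarith
    obtain ⟨Z, hZc, hZf, hP⟩ := exists_good_subspace Y t he hc
    exact cover_of_good_subspace Y hlam0 hlam1 ht0 hδ x y hd0 Z hZc hZf hP

end DiamondPaper
end

section
/- Let G be a connected simple graph with shortest-path metric d_G and distinguished vertices v_b, v_t at finite distance h := d_G(v_b, v_t), and suppose that infinitely many vertices x of G satisfy d_G(v_b, x) + d_G(x, v_t) = h (as holds for any infinite bundle with finite height). Then there exists ρ > 0, depending only on G, such that for every Banach space Y whose norm is asymptotically midpoint uniformly convex, every C ≥ 1, and every map f from the vertices of G into Y satisfying d_G(x,y)/C ≤ ‖f(x) − f(y)‖ ≤ d_G(x,y) for all vertices x, y, one has ‖f(v_t) − f(v_b)‖ < (1 − (1/5)·δ̃_Y(1/(9ρC)))·h. -/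
namespace DiamondPaper

section Aux

lemma exists_close_pair {Y : Type} [NormedAddCommGroup Y] [NormedSpace ℝ Y]
    (Z : Submodule ℝ Y) (hc : IsClosed (Z : Set Y)) (hfd : FiniteDimensional ℝ (Y ⧸ Z))
    {T : Set Y} (hT : T.Infinite) {R : ℝ} (hR : ∀ p ∈ T, ‖p‖ ≤ R)
    {ε : ℝ} (hε : 0 < ε) :
    ∃ p ∈ T, ∃ q ∈ T, p ≠ q ∧ ∃ z ∈ Z, ‖p - q - z‖ < ε := by
  haveI := hc
  have hQ : IsCompact (Metric.closedBall (0 : Y ⧸ Z) R) := isCompact_closedBall _ _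
  obtain ⟨s, hsfin, hscov⟩ := Metric.totallyBounded_iff.mp hQ.totallyBounded (ε/2) (by linarith)
  have key : ∀ x : T, ∃ c : s,
      (Submodule.Quotient.mk x.1 : Y ⧸ Z) ∈ Metric.ball (c : Y ⧸ Z) (ε/2) := by
    rintro ⟨x, hx⟩
    have hmem : (Submodule.Quotient.mk x : Y ⧸ Z) ∈ Metric.closedBall (0 : Y ⧸ Z) R := by
      simp only [Metric.mem_closedBall, dist_zero_right]
      exact (Submodule.Quotient.norm_mk_le Z x).trans (hR x hx)
    have := hscov hmem
    simp only [Set.mem_iUnion] at this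
    obtain ⟨c, hcs, hball⟩ := this
    exact ⟨⟨c, hcs⟩, hball⟩
  choose g hg using key
  haveI : Infinite T := hT.to_subtype
  haveI : Finite s := hsfin.to_subtype
  obtain ⟨a, b, hab, hgab⟩ := Finite.exists_ne_map_eq_of_infinite g
  have hdist : ‖(Submodule.Quotient.mk (a.1 - b.1) : Y ⧸ Z)‖ < ε := by
    have h1 := hg a
    have h2 := hg b
    rw [hgab] at h1
    have hd : dist (Submodule.Quotient.mk a.1 : Y ⧸ Z) (Submodule.Quotient.mk b.1) < ε := by
      calc dist (Submodule.Quotient.mk a.1 : Y ⧸ Z) (Submodule.Quotient.mk b.1)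
          ≤ dist (Submodule.Quotient.mk a.1 : Y ⧸ Z) (g b : Y ⧸ Z)
            + dist (g b : Y ⧸ Z) (Submodule.Quotient.mk b.1) := dist_triangle _ _ _
        _ < ε/2 + ε/2 := by
            refine add_lt_add (Metric.mem_ball.mp h1) ?_
            rw [dist_comm]; exact Metric.mem_ball.mp h2
        _ = ε := by ring
    rwa [dist_eq_norm, ← Submodule.Quotient.mk_sub] at hd
  obtain ⟨m, hm, hmn⟩ := Submodule.Quotient.norm_mk_lt
    (Submodule.Quotient.mk (a.1 - b.1) : Y ⧸ Z)
    (show (0:ℝ) < ε - ‖(Submodule.Quotient.mk (a.1 - b.1) : Y ⧸ Z)‖ by linarith)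
  refine ⟨a.1, a.2, b.1, b.2, fun h => hab (Subtype.ext h), a.1 - b.1 - m, ?_, ?_⟩
  · rw [← Submodule.Quotient.eq] at *
    simpa using hm.symm
  · have : a.1 - b.1 - (a.1 - b.1 - m) = m := by abel
    rw [this]
    linarith

variable {Y : Type} [NormedAddCommGroup Y] [NormedSpace ℝ Y]

/-- The index type of cofinite-dimensional closed subspaces. -/
abbrev Cof (Y : Type) [NormedAddCommGroup Y] [NormedSpace ℝ Y] :=
  {Z : Submodule ℝ Y // IsClosed (Z : Set Y) ∧ FiniteDimensional ℝ (Y ⧸ Z)}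

noncomputable def innerInf (t : ℝ) (y : Y) (Z : Cof Y) : ℝ :=
  ⨅ z : {z : Y // z ∈ Z.1 ∧ ‖z‖ = 1}, max ‖y + t • z.1‖ ‖y - t • z.1‖

noncomputable def supD (t : ℝ) (y : Y) : ℝ := ⨆ Z : Cof Y, innerInf t y Z

lemma amuc_eq (t : ℝ) :
    amuc Y t = (⨅ y : {y : Y // ‖y‖ = 1}, supD t y.1) - 1 := rfl

def topCof : Cof Y := by
  refine ⟨⊤, isClosed_univ, ?_⟩
  haveI : Subsingleton (Y ⧸ (⊤ : Submodule ℝ Y)) :=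
    Submodule.Quotient.subsingleton_iff.mpr rfl
  infer_instance

instance : Nonempty (Cof Y) := ⟨topCof⟩

lemma innerInf_nonneg (t : ℝ) (y : Y) (Z : Cof Y) : 0 ≤ innerInf t y Z :=
  Real.iInf_nonneg fun z => le_trans (norm_nonneg _) (le_max_left _ _)

lemma innerInf_le {t : ℝ} (ht : 0 ≤ t) {y : Y} (hy : ‖y‖ = 1) (Z : Cof Y) :
    innerInf t y Z ≤ 1 + t := by
  rcases isEmpty_or_nonempty {z : Y // z ∈ Z.1 ∧ ‖z‖ = 1} with h | h
  · rw [innerInf, Real.iInf_of_isEmpty]; linarith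
  · obtain ⟨z⟩ := h
    have hb : BddBelow (Set.range fun z : {z : Y // z ∈ Z.1 ∧ ‖z‖ = 1} =>
        max ‖y + t • z.1‖ ‖y - t • z.1‖) :=
      ⟨0, by rintro _ ⟨w, rfl⟩; exact le_trans (norm_nonneg _) (le_max_left _ _)⟩
    refine le_trans (ciInf_le hb z) ?_
    have h1 : ‖y + t • z.1‖ ≤ 1 + t := by
      calc ‖y + t • z.1‖ ≤ ‖y‖ + ‖t • z.1‖ := norm_add_le _ _
        _ = 1 + t := by rw [hy, norm_smul, z.2.2, Real.norm_eq_abs, abs_of_nonneg ht, mul_one]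
    have h2 : ‖y - t • z.1‖ ≤ 1 + t := by
      calc ‖y - t • z.1‖ ≤ ‖y‖ + ‖t • z.1‖ := norm_sub_le _ _
        _ = 1 + t := by rw [hy, norm_smul, z.2.2, Real.norm_eq_abs, abs_of_nonneg ht, mul_one]
    exact max_le h1 h2

lemma innerInf_le_pt {t : ℝ} (y : Y) (Z : Cof Y) {z : Y} (hz : z ∈ Z.1) (hz1 : ‖z‖ = 1) :
    innerInf t y Z ≤ max ‖y + t • z‖ ‖y - t • z‖ := by
  have hb : BddBelow (Set.range fun z : {z : Y // z ∈ Z.1 ∧ ‖z‖ = 1} =>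
      max ‖y + t • z.1‖ ‖y - t • z.1‖) :=
    ⟨0, by rintro _ ⟨w, rfl⟩; exact le_trans (norm_nonneg _) (le_max_left _ _)⟩
  exact ciInf_le hb ⟨z, hz, hz1⟩

lemma supD_le {t : ℝ} (ht : 0 ≤ t) {y : Y} (hy : ‖y‖ = 1) : supD t y ≤ 1 + t :=
  ciSup_le fun Z => innerInf_le ht hy Z

lemma supD_nonneg {t : ℝ} (ht : 0 ≤ t) {y : Y} (hy : ‖y‖ = 1) : 0 ≤ supD t y := by
  refine le_trans (innerInf_nonneg t y topCof) (le_ciSup ?_ topCof)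
  exact ⟨1 + t, by rintro _ ⟨Z, rfl⟩; exact innerInf_le ht hy Z⟩

lemma amuc_add_one_le_supD {t : ℝ} (ht : 0 ≤ t) {y : Y} (hy : ‖y‖ = 1) :
    amuc Y t + 1 ≤ supD t y := by
  rw [amuc_eq, sub_add_cancel]
  exact ciInf_le ⟨0, by rintro _ ⟨w, rfl⟩; exact supD_nonneg ht w.2⟩ (⟨y, hy⟩ : {y : Y // ‖y‖ = 1})

lemma amuc_le_t {t : ℝ} (ht : 0 ≤ t) {y : Y} (hy : ‖y‖ = 1) : amuc Y t ≤ t := by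
  have := (amuc_add_one_le_supD ht hy).trans (supD_le ht hy)
  linarith

lemma exists_good_Z {t : ℝ} (ht : 0 ≤ t) {y : Y} (hy : ‖y‖ = 1) {ε : ℝ} (hε : 0 < ε) :
    ∃ Z : Cof Y, ∀ z ∈ Z.1, ‖z‖ = 1 →
      amuc Y t + 1 - ε < max ‖y + t • z‖ ‖y - t • z‖ := by
  have h1 : amuc Y t + 1 - ε < supD t y := by
    have := amuc_add_one_le_supD ht hy; linarith
  obtain ⟨Z, hZ⟩ := exists_lt_of_lt_ciSup h1
  exact ⟨Z, fun z hz hz1 => lt_of_lt_of_le hZ (innerInf_le_pt y Z hz hz1)⟩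

lemma norm_normalize_sub {u z : Y} (hu : u ≠ 0) (hz : z ≠ 0) :
    ‖‖u‖⁻¹ • u - ‖z‖⁻¹ • z‖ ≤ 2 * ‖u - z‖ / ‖u‖ := by
  have ha : (0:ℝ) < ‖u‖ := norm_pos_iff.mpr hu
  have hb : (0:ℝ) < ‖z‖ := norm_pos_iff.mpr hz
  have e : ‖u‖⁻¹ • u - ‖z‖⁻¹ • z = ‖u‖⁻¹ • (u - z) + (‖u‖⁻¹ - ‖z‖⁻¹) • z := by
    module
  rw [e]
  have h3 : |‖z‖ - ‖u‖| ≤ ‖u - z‖ := by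
    rw [abs_sub_comm]
    exact abs_norm_sub_norm_le u z
  calc ‖‖u‖⁻¹ • (u - z) + (‖u‖⁻¹ - ‖z‖⁻¹) • z‖
      ≤ ‖‖u‖⁻¹ • (u - z)‖ + ‖(‖u‖⁻¹ - ‖z‖⁻¹) • z‖ := norm_add_le _ _
    _ = ‖u‖⁻¹ * ‖u - z‖ + |‖u‖⁻¹ - ‖z‖⁻¹| * ‖z‖ := by
        rw [norm_smul, norm_smul, Real.norm_eq_abs, Real.norm_eq_abs,
          abs_of_pos (inv_pos.mpr ha)]
    _ ≤ 2 * ‖u - z‖ / ‖u‖ := by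
        have h2 : |‖u‖⁻¹ - ‖z‖⁻¹| * ‖z‖ = |‖z‖ - ‖u‖| / ‖u‖ := by
          rw [show ‖u‖⁻¹ - ‖z‖⁻¹ = (‖z‖ - ‖u‖) / (‖u‖ * ‖z‖) by field_simp,
            abs_div, abs_of_pos (mul_pos ha hb)]
          field_simp
        rw [h2]
        have h4 : |‖z‖ - ‖u‖| / ‖u‖ ≤ ‖u - z‖ / ‖u‖ := by gcongr
        have h5 : ‖u‖⁻¹ * ‖u - z‖ = ‖u - z‖ / ‖u‖ := by ring
        rw [h5]
        have : 2 * ‖u - z‖ / ‖u‖ = ‖u - z‖ / ‖u‖ + ‖u - z‖ / ‖u‖ := by ring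
        linarith

end Aux

set_option maxHeartbeats 1000000 in
/-- Let `G` be a connected graph with distinguished vertices
`v_b`, `v_t`, with infinitely many vertices `x` satisfying
`d(v_b,x) + d(x,v_t) = d(v_b,v_t)`. Then there is `ρ > 0`, depending only on `G`,
such that for every Banach space `Y` with AMUC norm, every `C ≥ 1` and every
non-expansive map `f` with compression at least `1/C`, one has
`‖f(v_t) − f(v_b)‖ < (1 − (1/5)·δ̃_Y(1/(9ρC)))·d(v_b,v_t)`. -/
theorem bundle_shrinking (V : Type) (G : SimpleGraph V) (hconn : G.Connected)
    (vb vt : V)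
    (hinf : {x : V | G.dist vb x + G.dist x vt = G.dist vb vt}.Infinite) :
    ∃ ρ : ℝ, 0 < ρ ∧
      ∀ (Y : Type) [NormedAddCommGroup Y] [NormedSpace ℝ Y],
        (∀ t ∈ Set.Ioo (0 : ℝ) 1, 0 < amuc Y t) →
        ∀ C : ℝ, 1 ≤ C → ∀ f : V → Y,
          (∀ x y : V, (G.dist x y : ℝ) / C ≤ ‖f x - f y‖ ∧
            ‖f x - f y‖ ≤ (G.dist x y : ℝ)) →
          ‖f vt - f vb‖ <
            (1 - (1/5 : ℝ) * amuc Y (1 / (9 * ρ * C))) * (G.dist vb vt : ℝ) := by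
  classical
  set h : ℕ := G.dist vb vt with hh
  -- h ≥ 1
  have h1 : 1 ≤ h := by
    rcases Nat.eq_zero_or_pos h with h0 | h1
    · exfalso
      apply hinf
      have hsub : {x : V | G.dist vb x + G.dist x vt = G.dist vb vt} ⊆ {vb} := by
        intro x hx
        simp only [Set.mem_setOf_eq, ← hh, h0] at hx
        have : G.dist vb x = 0 := by omega
        have := (hconn.dist_eq_zero_iff).mp this
        simp [this.symm]
      exact (Set.finite_singleton vb).subset hsub
    · exact h1
  -- pigeonhole: a level with infinitely many vertices
  obtain ⟨k, hkk, hSk⟩ : ∃ k ∈ Finset.range (h+1),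
      {x : V | (G.dist vb x + G.dist x vt = h) ∧ G.dist vb x = k}.Infinite := by
    by_contra hcon
    push_neg at hcon
    apply hinf
    have hsub : {x : V | G.dist vb x + G.dist x vt = G.dist vb vt} ⊆
        ⋃ k ∈ Finset.range (h+1),
          {x : V | (G.dist vb x + G.dist x vt = h) ∧ G.dist vb x = k} := by
      intro x hx
      simp only [Set.mem_setOf_eq, ← hh] at hx
      simp only [Set.mem_iUnion]
      exact ⟨G.dist vb x, by simp only [Finset.mem_range]; omega, hx, rfl⟩
    exact Set.Finite.subset (Set.Finite.biUnion (Finset.range (h+1)).finite_toSet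
      (fun k hk => hcon k hk)) hsub
  refine ⟨(h:ℝ), by positivity, ?_⟩
  intro Y _ _ hAMUC C hC f hf
  set t : ℝ := 1 / (9 * (h:ℝ) * C) with hts
  have hh1 : (1:ℝ) ≤ (h:ℝ) := by exact_mod_cast h1
  have hC0 : (0:ℝ) < C := by linarith
  have ht0 : 0 < t := by rw [hts]; positivity
  have ht1 : t < 1 := by
    rw [hts, div_lt_one (by positivity)]
    nlinarith
  set δ : ℝ := amuc Y t with hδs
  have hδ : 0 < δ := hAMUC t ⟨ht0, ht1⟩
  set y : Y := f vt - f vb with hys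
  have hdtb : (G.dist vt vb : ℝ) = (h:ℝ) := by rw [SimpleGraph.dist_comm, ← hh]
  have hyub : ‖y‖ ≤ (h:ℝ) := by
    have := (hf vt vb).2; rwa [hdtb] at this
  have hylb : (h:ℝ)/C ≤ ‖y‖ := by
    have := (hf vt vb).1; rwa [hdtb] at this
  have hy0 : (0:ℝ) < ‖y‖ := lt_of_lt_of_le (by positivity) hylb
  have hyne : y ≠ 0 := norm_pos_iff.mp hy0
  set yhat : Y := ‖y‖⁻¹ • y with hyhats
  have hyhat : ‖yhat‖ = 1 := norm_smul_inv_norm hyne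
  have hδt : δ ≤ t := amuc_le_t ht0.le hyhat
  have hδ1 : δ ≤ 1 := hδt.trans ht1.le
  by_contra hcon
  push_neg at hcon
  have hA : (1 - (1/5) * δ) * (h:ℝ) ≤ ‖y‖ := hcon
  -- good Z
  obtain ⟨Z, hZ⟩ := exists_good_Z (Y := Y) ht0.le hyhat (ε := δ/5) (by positivity)
  -- the level set and the image set
  set S : Set V := {x : V | (G.dist vb x + G.dist x vt = h) ∧ G.dist vb x = k} with hSs
  have hTinj : Set.InjOn (fun x => f x - f vb) S := by
    intro a _ b _ hab
    by_contra hne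
    have hd : 0 < G.dist a b := hconn.pos_dist_of_ne hne
    have hlow := (hf a b).1
    have hfab : f a = f b := by
      have h' : f a - f vb = f b - f vb := hab
      have := sub_left_injective h'
      exact this
    rw [hfab, sub_self, norm_zero] at hlow
    have hdc : (0:ℝ) < (G.dist a b : ℝ) := by exact_mod_cast hd
    have : (0:ℝ) < (G.dist a b : ℝ)/C := by positivity
    linarith
  have hTinf : ((fun x => f x - f vb) '' S).Infinite := hSk.image hTinj
  have hTbound : ∀ p ∈ (fun x => f x - f vb) '' S, ‖p‖ ≤ (h:ℝ) := by
    rintro _ ⟨x, hx, rfl⟩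
    have hk : G.dist vb x = k := hx.2
    have hkh : (G.dist vb x : ℝ) ≤ (h:ℝ) := by
      have hx1 : G.dist vb x + G.dist x vt = h := hx.1
      have hle : G.dist vb x ≤ h := by omega
      exact_mod_cast hle
    have h2 := (hf x vb).2
    rw [SimpleGraph.dist_comm] at h2
    exact h2.trans hkh
  obtain ⟨p, hp, q, hq, hpq, z, hzZ, hznear⟩ :=
    exists_close_pair Z.1 Z.2.1 Z.2.2 hTinf hTbound
      (ε := δ/(10*C)) (by positivity)
  obtain ⟨a, haS, rfl⟩ := hp
  obtain ⟨b, hbS, rfl⟩ := hq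
  set u : Y := f a - f b with hus
  have hured : (f a - f vb) - (f b - f vb) = u := by rw [hus]; abel
  rw [hured] at hznear
  have hab : a ≠ b := by
    intro he; exact hpq (by rw [he])
  have hdab : 1 ≤ G.dist a b := hconn.pos_dist_of_ne hab
  have hulb : 1/C ≤ ‖u‖ := by
    have hl := (hf a b).1
    have h1d : (1:ℝ) ≤ (G.dist a b : ℝ) := by exact_mod_cast hdab
    calc 1/C ≤ (G.dist a b : ℝ)/C := by gcongr
      _ ≤ ‖u‖ := hl
  have hu0 : (0:ℝ) < ‖u‖ := lt_of_lt_of_le (by positivity) hulb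
  have hune : u ≠ 0 := norm_pos_iff.mp hu0
  have hzlb : ‖u‖ - δ/(10*C) ≤ ‖z‖ := by
    have : ‖u‖ ≤ ‖u - z‖ + ‖z‖ := by
      calc ‖u‖ = ‖(u - z) + z‖ := by rw [sub_add_cancel]
        _ ≤ ‖u - z‖ + ‖z‖ := norm_add_le _ _
    linarith
  have hz0 : (0:ℝ) < ‖z‖ := by
    have hd1 : δ/(10*C) ≤ 1/(10*C) := by gcongr
    have e : 1/C - 1/(10*C) = 9/(10*C) := by field_simp; ring
    have : (0:ℝ) < 9/(10*C) := by positivity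
    linarith
  have hzne : z ≠ 0 := norm_pos_iff.mp hz0
  set zhat : Y := ‖z‖⁻¹ • z with hzhats
  have hzhatmem : zhat ∈ Z.1 := Z.1.smul_mem _ hzZ
  have hzhat1 : ‖zhat‖ = 1 := norm_smul_inv_norm hzne
  have hmax1 : 1 + δ - δ/5 < max ‖yhat + t • zhat‖ ‖yhat - t • zhat‖ := by
    have := hZ zhat hzhatmem hzhat1
    rw [← hδs] at this
    linarith
  set w : Y := ‖u‖⁻¹ • u with hws
  have hwz : ‖w - zhat‖ ≤ δ/5 := by
    have h1 := norm_normalize_sub hune hzne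
    have h2 : 2 * ‖u - z‖ / ‖u‖ ≤ 2 * (δ/(10*C)) / (1/C) := by
      apply div_le_div₀ (by positivity) (by linarith) (by positivity) hulb
    have h3 : 2 * (δ/(10*C)) / (1/C) = δ/5 := by field_simp; ring
    rw [h3] at h2
    exact (h1.trans h2)
  have hmax2 : 1 + 3*δ/5 < max ‖yhat + t • w‖ ‖yhat - t • w‖ := by
    have hsmall : t * ‖zhat - w‖ ≤ δ/5 := by
      have h1 : ‖zhat - w‖ ≤ δ/5 := by rw [norm_sub_rev]; exact hwz
      have h2 : t * ‖zhat - w‖ ≤ ‖zhat - w‖ :=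
        mul_le_of_le_one_left (norm_nonneg _) ht1.le
      linarith
    rcases lt_max_iff.mp hmax1 with hc | hc
    · have e : yhat + t • zhat = (yhat + t • w) + t • (zhat - w) := by module
      have : ‖yhat + t • zhat‖ ≤ ‖yhat + t • w‖ + t * ‖zhat - w‖ := by
        rw [e]
        refine (norm_add_le _ _).trans ?_
        rw [norm_smul, Real.norm_eq_abs, abs_of_pos ht0]
      have : 1 + 3*δ/5 < ‖yhat + t • w‖ := by linarith
      exact lt_max_iff.mpr (Or.inl this)
    · have e : yhat - t • zhat = (yhat - t • w) - t • (zhat - w) := by module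
      have : ‖yhat - t • zhat‖ ≤ ‖yhat - t • w‖ + t * ‖zhat - w‖ := by
        rw [e]
        refine (norm_sub_le _ _).trans ?_
        rw [norm_smul, Real.norm_eq_abs, abs_of_pos ht0]
      have : 1 + 3*δ/5 < ‖yhat - t • w‖ := by linarith
      exact lt_max_iff.mpr (Or.inr this)
  -- the scaling parameter
  set τ : ℝ := t * ‖y‖ / ‖u‖ with hτs
  have hτ0 : 0 < τ := by rw [hτs]; positivity
  have hτ1 : τ ≤ 1 := by
    have h2 : t * ‖y‖ / ‖u‖ ≤ t * (h:ℝ) / (1/C) := by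
      apply div_le_div₀ (by positivity) (by nlinarith) (by positivity) hulb
    have h3 : t * (h:ℝ) / (1/C) = 1/9 := by
      rw [hts]; field_simp
    rw [hτs]
    rw [h3] at h2
    linarith
  -- endpoint bounds
  have hbd : ∀ c : V, c ∈ S → ‖f vt - f c‖ + ‖f c - f vb‖ ≤ (h:ℝ) := by
    intro c hc
    have h1 := (hf vt c).2
    have h2 := (hf c vb).2
    have hsum : G.dist vt c + G.dist c vb = h := by
      have hc1 : G.dist vb c + G.dist c vt = h := hc.1
      rw [SimpleGraph.dist_comm (u := vt), SimpleGraph.dist_comm (u := c) (v := vb)]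
      omega
    have hcast : (G.dist vt c : ℝ) + (G.dist c vb : ℝ) = (h:ℝ) := by exact_mod_cast hsum
    linarith
  have hyu_p : ‖y + u‖ ≤ (h:ℝ) := by
    have e : y + u = (f vt - f b) + (f a - f vb) := by rw [hys, hus]; abel
    have h1 := hbd b hbS
    have h2 := hbd a haS
    calc ‖y + u‖ = ‖(f vt - f b) + (f a - f vb)‖ := by rw [e]
      _ ≤ ‖f vt - f b‖ + ‖f a - f vb‖ := norm_add_le _ _
      _ ≤ (h:ℝ) := by
          have h3 := (hf vt b).2
          have h4 := (hf a vb).2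
          have hsum : G.dist vt b + G.dist a vb = h := by
            have hb1 : G.dist vb b + G.dist b vt = h := hbS.1
            have hb2 : G.dist vb b = k := hbS.2
            have ha1 : G.dist vb a + G.dist a vt = h := haS.1
            have ha2 : G.dist vb a = k := haS.2
            rw [SimpleGraph.dist_comm (u := vt) (v := b),
              SimpleGraph.dist_comm (u := a) (v := vb)]
            omega
          have hcast : (G.dist vt b : ℝ) + (G.dist a vb : ℝ) = (h:ℝ) := by
            exact_mod_cast hsum
          linarith
  have hyu_m : ‖y - u‖ ≤ (h:ℝ) := by
    have e : y - u = (f vt - f a) + (f b - f vb) := by rw [hys, hus]; abel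
    calc ‖y - u‖ = ‖(f vt - f a) + (f b - f vb)‖ := by rw [e]
      _ ≤ ‖f vt - f a‖ + ‖f b - f vb‖ := norm_add_le _ _
      _ ≤ (h:ℝ) := by
          have h3 := (hf vt a).2
          have h4 := (hf b vb).2
          have hsum : G.dist vt a + G.dist b vb = h := by
            have hb1 : G.dist vb b + G.dist b vt = h := hbS.1
            have hb2 : G.dist vb b = k := hbS.2
            have ha1 : G.dist vb a + G.dist a vt = h := haS.1
            have ha2 : G.dist vb a = k := haS.2
            rw [SimpleGraph.dist_comm (u := vt) (v := a),
              SimpleGraph.dist_comm (u := b) (v := vb)]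
            omega
          have hcast : (G.dist vt a : ℝ) + (G.dist b vb : ℝ) = (h:ℝ) := by
            exact_mod_cast hsum
          linarith
  -- convexity
  have hconvp : ‖y + τ • u‖ ≤ (h:ℝ) := by
    have e : y + τ • u = (1-τ) • y + τ • (y + u) := by module
    rw [e]
    calc ‖(1-τ) • y + τ • (y + u)‖ ≤ ‖(1-τ) • y‖ + ‖τ • (y + u)‖ := norm_add_le _ _
      _ = (1-τ) * ‖y‖ + τ * ‖y + u‖ := by
          rw [norm_smul, norm_smul, Real.norm_eq_abs, Real.norm_eq_abs,
            abs_of_nonneg (by linarith), abs_of_nonneg hτ0.le]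
      _ ≤ (1-τ) * (h:ℝ) + τ * (h:ℝ) := by
          have := mul_le_mul_of_nonneg_left hyub (show (0:ℝ) ≤ 1-τ by linarith)
          have := mul_le_mul_of_nonneg_left hyu_p hτ0.le
          linarith
      _ = (h:ℝ) := by ring
  have hconvm : ‖y - τ • u‖ ≤ (h:ℝ) := by
    have e : y - τ • u = (1-τ) • y + τ • (y - u) := by module
    rw [e]
    calc ‖(1-τ) • y + τ • (y - u)‖ ≤ ‖(1-τ) • y‖ + ‖τ • (y - u)‖ := norm_add_le _ _
      _ = (1-τ) * ‖y‖ + τ * ‖y - u‖ := by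
          rw [norm_smul, norm_smul, Real.norm_eq_abs, Real.norm_eq_abs,
            abs_of_nonneg (by linarith), abs_of_nonneg hτ0.le]
      _ ≤ (1-τ) * (h:ℝ) + τ * (h:ℝ) := by
          have := mul_le_mul_of_nonneg_left hyub (show (0:ℝ) ≤ 1-τ by linarith)
          have := mul_le_mul_of_nonneg_left hyu_m hτ0.le
          linarith
      _ = (h:ℝ) := by ring
  -- scaling identities
  have hsc : ‖y‖ • (t • w) = τ • u := by
    rw [hws, smul_smul, smul_smul, hτs]
    congr 1
    field_simp
  have hscy : ‖y‖ • yhat = y := by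
    rw [hyhats]
    exact smul_inv_smul₀ (norm_ne_zero_iff.mpr hyne) y
  have hescp : ‖y‖ • (yhat + t • w) = y + τ • u := by rw [smul_add, hscy, hsc]
  have hescm : ‖y‖ • (yhat - t • w) = y - τ • u := by rw [smul_sub, hscy, hsc]
  have hnp : ‖y‖ * ‖yhat + t • w‖ = ‖y + τ • u‖ := by
    rw [← hescp, norm_smul, Real.norm_eq_abs, abs_of_pos hy0]
  have hnm : ‖y‖ * ‖yhat - t • w‖ = ‖y - τ • u‖ := by
    rw [← hescm, norm_smul, Real.norm_eq_abs, abs_of_pos hy0]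
  -- final contradiction
  rcases lt_max_iff.mp hmax2 with hM | hM
  · have hle : ‖y‖ * ‖yhat + t • w‖ ≤ (h:ℝ) := by rw [hnp]; exact hconvp
    nlinarith [mul_le_mul hA hM.le (by positivity) (norm_nonneg y), hδ, hδ1, hh1]
  · have hle : ‖y‖ * ‖yhat - t • w‖ ≤ (h:ℝ) := by rw [hnm]; exact hconvm
    nlinarith [mul_le_mul hA hM.le (by positivity) (norm_nonneg y), hδ, hδ1, hh1]


end DiamondPaper
end

section
/- Let Y be a Banach space admitting an equivalent norm |·| (i.e., a·‖y‖ ≤ |y| ≤ b·‖y‖ for some a, b > 0 and all y ∈ Y) that is asymptotically midpoint uniformly convex. Then sup_{k∈ℕ} c_Y(G_k) = ∞; that is, for every D ≥ 1 there is k ∈ ℕ such that G_k admits no bi-Lipschitz embedding into Y with distortion at most D. If, moreover, the equivalent AMUC norm has power type p for some p ∈ (1,∞) — i.e., there is γ > 0 such that its modulus satisfies δ̃(t) ≥ γ·t^p for all t ∈ (0,1) — then there is a constant c > 0 such that c_Y(G_k) ≥ c·k^{1/p} for all k ≥ 1. -/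
set_option maxHeartbeats 1000000


namespace DiamondPaper

/-- `f` is a bi-Lipschitz embedding of `G_k` into `Y` with distortion at most
`D`. -/
def EmbedsWith (k : ℕ) (Y : Type*) [NormedAddCommGroup Y] (D : ℝ) : Prop :=
  ∃ (s : ℝ) (f : Vert k → Y), 0 < s ∧
    ∀ x y : Vert k,
      s * ((Gk k).dist x y : ℝ) ≤ ‖f x - f y‖ ∧
      ‖f x - f y‖ ≤ D * s * ((Gk k).dist x y : ℝ)

/-- In a compact set, any sequence has two terms at distance `< ε`. -/
lemma exists_close_pair_s16 {X : Type*} [PseudoMetricSpace X] {s : Set X} (hs : IsCompact s)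
    (y : ℕ → X) (hy : ∀ n, y n ∈ s) {ε : ℝ} (hε : 0 < ε) :
    ∃ n m : ℕ, n ≠ m ∧ dist (y n) (y m) < ε := by
  obtain ⟨t, htf, hst⟩ := Metric.totallyBounded_iff.mp hs.totallyBounded (ε/2) (by linarith)
  haveI := htf.to_subtype
  have hc : ∀ n : ℕ, ∃ c : t, y n ∈ Metric.ball (c : X) (ε/2) := by
    intro n
    have := hst (hy n)
    simp only [Set.mem_iUnion] at this
    obtain ⟨c, hct, hc⟩ := this
    exact ⟨⟨c, hct⟩, hc⟩
  choose F hF using hc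
  obtain ⟨n, m, hnm, hFnm⟩ := Finite.exists_ne_map_eq_of_infinite F
  refine ⟨n, m, hnm, ?_⟩
  have h1 := hF n
  have h2 := hF m
  rw [hFnm] at h1
  calc dist (y n) (y m) ≤ dist (y n) (F m : X) + dist (F m : X) (y m) := dist_triangle _ _ _
    _ < ε/2 + ε/2 := by
        rw [Metric.mem_ball] at h1 h2
        rw [dist_comm (F m : X) (y m)]
        exact add_lt_add h1 h2
    _ = ε := by ring

section LemmaA

variable {Y : Type} [NormedAddCommGroup Y] [NormedSpace ℝ Y]
    (N : Y → ℝ) (a b : ℝ)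

/-- The AMUC midpoint-clustering estimate: if a sequence of `δ`-approximate metric
midpoints of `U, W` is `c·d₀`-separated with `c > t`, then `amucWith t ≤ δ`. -/
lemma lemmaA (ha : 0 < a) (hb : 0 < b)
    (hN : ∀ y : Y, a * ‖y‖ ≤ N y ∧ N y ≤ b * ‖y‖)
    (hadd : ∀ x y : Y, N (x + y) ≤ N x + N y)
    (hsmul : ∀ (c : ℝ) (y : Y), N (c • y) = |c| * N y)
    {t c δ d0 : ℝ} (ht : 0 < t) (htc : t < c)
    {U W : Y} (hUW : N (U - W) = d0) (hd0 : 0 < d0)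
    (y : ℕ → Y)
    (hmid : ∀ n, max (N (U - y n)) (N (y n - W)) ≤ (1 + δ) * d0 / 2)
    (hsep : ∀ n m : ℕ, n ≠ m → c * d0 ≤ N (y n - y m)) :
    amucWith Y N t ≤ δ := by
  have hN0 : ∀ x : Y, 0 ≤ N x := fun x =>
    le_trans (mul_nonneg ha.le (norm_nonneg x)) (hN x).1
  -- δ ≥ 0
  have hδ0 : 0 ≤ δ := by
    have h1 : N (U - W) ≤ N (U - y 0) + N (y 0 - W) := by
      have : U - W = (U - y 0) + (y 0 - W) := by abel
      rw [this]; exact hadd _ _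
    have h2 := hmid 0
    have h3 : N (U - y 0) ≤ (1 + δ) * d0 / 2 := le_trans (le_max_left _ _) h2
    have h4 : N (y 0 - W) ≤ (1 + δ) * d0 / 2 := le_trans (le_max_right _ _) h2
    nlinarith [hUW]
  -- the normalized vector
  set yhat : Y := (1 / d0) • (U - W) with hyhat
  have hNyhat : N yhat = 1 := by
    rw [hyhat, hsmul, hUW, abs_of_pos (by positivity : (0:ℝ) < 1/d0)]
    field_simp
  rw [amucWith, sub_le_iff_le_add]
  have hbdd : BddBelow (Set.range fun y' : {y : Y // N y = 1} =>
      ⨆ Z : {Z : Submodule ℝ Y // IsClosed (Z : Set Y) ∧ FiniteDimensional ℝ (Y ⧸ Z)},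
        ⨅ z : {z : Y // z ∈ Z.1 ∧ N z = 1},
          max (N (y'.1 + t • z.1)) (N (y'.1 - t • z.1))) := by
    refine ⟨0, ?_⟩
    rintro x ⟨y', rfl⟩
    exact Real.iSup_nonneg fun Z => Real.iInf_nonneg fun z =>
      le_max_of_le_left (hN0 _)
  refine le_trans (ciInf_le hbdd ⟨yhat, hNyhat⟩) ?_
  refine Real.iSup_le ?_ (by linarith)
  rintro ⟨Z, hZc, hZf⟩
  -- for every ζ > 0, the inner inf is at most 1 + δ + ζ
  have key : ∀ ζ : ℝ, 0 < ζ →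
      (⨅ z : {z : Y // z ∈ Z ∧ N z = 1},
        max (N (yhat + t • z.1)) (N (yhat - t • z.1))) ≤ 1 + δ + ζ := by
    intro ζ hζ
    haveI : IsClosed (Z : Set Y) := hZc
    -- quotient space is proper
    haveI : ProperSpace (Y ⧸ Z) := FiniteDimensional.proper ℝ (Y ⧸ Z)
    set ε' : ℝ := min ((c - t) * d0 / b) (ζ * d0 / b) with hε'
    have hct : 0 < c - t := sub_pos.mpr htc
    have hε'pos : 0 < ε' := by
      apply lt_min
      · exact div_pos (mul_pos hct hd0) hb
      · positivity
    -- the quotient sequence is bounded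
    set q : ℕ → Y ⧸ Z := fun n => Z.mkQ (y n) with hq
    have hqb : ∀ n, q n ∈ Metric.closedBall (0 : Y ⧸ Z) (‖U‖ + (1 + δ) * d0 / (2 * a)) := by
      intro n
      rw [Metric.mem_closedBall, dist_zero_right]
      have h1 : ‖q n‖ ≤ ‖y n‖ := by
        rw [hq]; simp only [Submodule.mkQ_apply]
        exact Submodule.Quotient.norm_mk_le Z (y n)
      have h2 : ‖y n‖ ≤ ‖U‖ + ‖U - y n‖ := by
        calc ‖y n‖ = ‖U - (U - y n)‖ := by rw [sub_sub_cancel]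
          _ ≤ ‖U‖ + ‖U - y n‖ := norm_sub_le _ _
      have h3 : a * ‖U - y n‖ ≤ N (U - y n) := (hN _).1
      have h4 : N (U - y n) ≤ (1 + δ) * d0 / 2 := le_trans (le_max_left _ _) (hmid n)
      have h5 : ‖U - y n‖ ≤ (1 + δ) * d0 / (2 * a) := by
        rw [le_div_iff₀ (by positivity)]
        nlinarith
      linarith
    obtain ⟨n, m, hnm, hdq⟩ := exists_close_pair_s16 (isCompact_closedBall _ _) q hqb
      (show (0:ℝ) < ε'/2 by positivity)
    -- get a good representative
    have hqnm : ‖q n - q m‖ < ε' / 2 := by rwa [← dist_eq_norm]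
    have hqsub : q n - q m = Z.mkQ (y n - y m) := (map_sub (Z.mkQ) _ _).symm
    rw [hqsub, Submodule.mkQ_apply] at hqnm
    obtain ⟨v, hv1, hv2⟩ := Submodule.Quotient.norm_mk_lt
      (Submodule.Quotient.mk (y n - y m) : Y ⧸ Z)
      (show (0:ℝ) < ε'/2 by positivity)
    -- hv1 : mk v = mk (y n - y m), hv2 : ‖v‖ < ‖mk (y n - y m)‖ + ε'/2 < ε'
    have hvsmall : ‖v‖ < ε' := by
      calc ‖v‖ < ‖(Submodule.Quotient.mk (y n - y m) : Y ⧸ Z)‖ + ε'/2 := hv2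
        _ < ε'/2 + ε'/2 := by linarith
        _ = ε' := by ring
    have hz' : (y n - y m) - v ∈ Z := by
      have := (Submodule.Quotient.eq Z).mp hv1
      have h2 : -(v - (y n - y m)) ∈ Z := Z.neg_mem this
      simpa [neg_sub] using h2
    set z' : Y := (y n - y m) - v with hz'def
    -- norm bounds on z'
    have hNv : N v ≤ b * ε' := le_trans (hN v).2 (by nlinarith [hvsmall])
    have hNynm : c * d0 ≤ N (y n - y m) := hsep n m hnm
    have hNz'low : t * d0 ≤ N z' := by
      have h1 : N (y n - y m) ≤ N z' + N v := by
        have : y n - y m = z' + v := by rw [hz'def]; abel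
        rw [this]; exact hadd _ _
      have hbe : b * ε' ≤ (c - t) * d0 := by
        have := min_le_left ((c - t) * d0 / b) (ζ * d0 / b)
        calc b * ε' ≤ b * ((c - t) * d0 / b) := by
              apply mul_le_mul_of_nonneg_left _ hb.le
              rw [hε']; exact this
          _ = (c - t) * d0 := by field_simp
      nlinarith
    have hNz'pos : 0 < N z' := lt_of_lt_of_le (by positivity) hNz'low
    set z : Y := (1 / N z') • z' with hzdef
    have hzZ : z ∈ Z := Z.smul_mem _ hz'
    have hNz : N z = 1 := by
      rw [hzdef, hsmul, abs_of_pos (by positivity : (0:ℝ) < 1 / N z')]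
      field_simp
    -- key upper bounds
    have hplus : N ((U - W) + z') ≤ (1 + δ) * d0 + b * ε' := by
      have hrw : (U - W) + z' = ((U - y m) + (y n - W)) + (-v) := by
        rw [hz'def]; abel
      rw [hrw]
      calc N (((U - y m) + (y n - W)) + (-v)) ≤ N ((U - y m) + (y n - W)) + N (-v) := hadd _ _
        _ ≤ N (U - y m) + N (y n - W) + N (-v) := by linarith [hadd (U - y m) (y n - W)]
        _ ≤ (1 + δ) * d0 / 2 + (1 + δ) * d0 / 2 + N v := by
            have h1 := le_trans (le_max_left _ _) (hmid m)
            have h2 := le_trans (le_max_right _ _) (hmid n)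
            have h3 : N (-v) = N v := by
              have : (-v : Y) = (-1 : ℝ) • v := by simp
              rw [this, hsmul]; simp
            linarith
        _ ≤ (1 + δ) * d0 + b * ε' := by linarith
    have hminus : N ((U - W) - z') ≤ (1 + δ) * d0 + b * ε' := by
      have hrw : (U - W) - z' = ((U - y n) + (y m - W)) + v := by
        rw [hz'def]; abel
      rw [hrw]
      calc N (((U - y n) + (y m - W)) + v) ≤ N ((U - y n) + (y m - W)) + N v := hadd _ _
        _ ≤ N (U - y n) + N (y m - W) + N v := by linarith [hadd (U - y n) (y m - W)]
        _ ≤ (1 + δ) * d0 / 2 + (1 + δ) * d0 / 2 + N v := by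
            have h1 := le_trans (le_max_left _ _) (hmid n)
            have h2 := le_trans (le_max_right _ _) (hmid m)
            linarith
        _ ≤ (1 + δ) * d0 + b * ε' := by linarith
    -- convexity step
    set τ : ℝ := t * d0 / N z' with hτdef
    have hτpos : 0 < τ := by positivity
    have hτlt : τ ≤ 1 := by
      rw [hτdef, div_le_one hNz'pos]; exact hNz'low
    have hcombp : yhat + t • z = (1 - τ) • yhat + (τ / d0) • ((U - W) + z') := by
      rw [hyhat, hzdef, hτdef]
      match_scalars <;> field_simp <;> ring
    have hcombm : yhat - t • z = (1 - τ) • yhat + (τ / d0) • ((U - W) - z') := by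
      rw [hyhat, hzdef, hτdef]
      match_scalars <;> field_simp <;> ring
    have hbound : ∀ x : Y, N ((U - W) + x) ≤ (1 + δ) * d0 + b * ε' →
        N ((1 - τ) • yhat + (τ / d0) • ((U - W) + x)) ≤ 1 + δ + ζ := by
      intro x hx
      calc N ((1 - τ) • yhat + (τ / d0) • ((U - W) + x))
          ≤ N ((1 - τ) • yhat) + N ((τ / d0) • ((U - W) + x)) := hadd _ _
        _ = (1 - τ) * N yhat + (τ / d0) * N ((U - W) + x) := by
            rw [hsmul (1 - τ) yhat, hsmul (τ / d0) ((U - W) + x),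
              abs_of_nonneg (by linarith : (0:ℝ) ≤ 1 - τ),
              abs_of_pos (div_pos hτpos hd0)]
        _ ≤ (1 - τ) * 1 + (τ / d0) * ((1 + δ) * d0 + b * ε') := by
            rw [hNyhat]
            have : (0:ℝ) ≤ τ / d0 := by positivity
            nlinarith
        _ = 1 + τ * (δ + b * ε' / d0) := by field_simp; ring
        _ ≤ 1 + δ + ζ := by
            have hbε : b * ε' / d0 ≤ ζ := by
              rw [div_le_iff₀ hd0]
              have := min_le_right ((c - t) * d0 / b) (ζ * d0 / b)
              calc b * ε' ≤ b * (ζ * d0 / b) := by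
                    apply mul_le_mul_of_nonneg_left _ hb.le
                    rw [hε']; exact this
                _ = ζ * d0 := by field_simp
            have h1 : τ * (δ + b * ε' / d0) ≤ δ + b * ε' / d0 := by
              have h2 : (0:ℝ) ≤ δ + b * ε' / d0 := by positivity
              nlinarith
            linarith
    have hfin : max (N (yhat + t • z)) (N (yhat - t • z)) ≤ 1 + δ + ζ := by
      apply max_le
      · rw [hcombp]; exact hbound z' hplus
      · rw [hcombm]
        have := hbound (-z') (by rwa [← sub_eq_add_neg])
        rwa [← sub_eq_add_neg] at this
    refine le_trans (ciInf_le ?_ ⟨z, hzZ, hNz⟩) hfin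
    refine ⟨0, ?_⟩
    rintro x ⟨z0, rfl⟩
    exact le_max_of_le_left (hN0 _)
  -- conclude
  exact le_of_forall_pos_le_add fun ζ hζ => (key ζ hζ).trans (by linarith)

end LemmaA
/-! ### Walk length bounds via the real coordinate -/

lemma walk_rdiff {k : ℕ} {x y : Vert k} (w : (Gk k).Walk x y) :
    |x.1.2 - y.1.2| ≤ (w.length : ℝ) * (1/2)^k := by
  induction w with
  | nil => simp
  | @cons u v' y' h p ih =>
    have h2 : |u.1.2 - v'.1.2| = (1/2:ℝ)^k := h.2
    calc |u.1.2 - y'.1.2| ≤ |u.1.2 - v'.1.2| + |v'.1.2 - y'.1.2| := abs_sub_le _ _ _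
      _ ≤ (1/2:ℝ)^k + (p.length : ℝ) * (1/2)^k := by rw [h2]; linarith [ih]
      _ = (((p.length : ℕ) + 1 : ℕ) : ℝ) * (1/2)^k := by push_cast; ring
      _ = ((SimpleGraph.Walk.cons h p).length : ℝ) * (1/2)^k := by
          rw [SimpleGraph.Walk.length_cons]

lemma dist_ge {k : ℕ} {x y : Vert k} (h : (Gk k).Reachable x y) :
    2^k * |x.1.2 - y.1.2| ≤ ((Gk k).dist x y : ℝ) := by
  obtain ⟨w, hw⟩ := h.exists_walk_length_eq_dist
  have h1 := walk_rdiff w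
  rw [hw] at h1
  have hpow : (2:ℝ)^k * (1/2)^k = 1 := by
    rw [← mul_pow]; norm_num
  calc 2^k * |x.1.2 - y.1.2| ≤ 2^k * (((Gk k).dist x y : ℝ) * (1/2)^k) := by
        apply mul_le_mul_of_nonneg_left h1 (by positivity)
    _ = ((Gk k).dist x y : ℝ) * (2^k * (1/2)^k) := by ring
    _ = ((Gk k).dist x y : ℝ) := by rw [hpow, mul_one]

/-! ### Denominator forcing -/

lemma bset_denom {m c i : ℕ} {r : ℝ} (hr : r ∈ Bset m) (hi1 : 1 ≤ i) (hi2 : i ≤ 2^c)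
    (hlo : ((i:ℝ)-1)/2^c < r) (hhi : r < (i:ℝ)/2^c) : c + 1 ≤ m := by
  by_contra hcon
  push_neg at hcon
  have hmc : m ≤ c := by omega
  have h2c : (0:ℝ) < 2^c := by positivity
  rcases m with _ | m'
  · simp only [Bset, Set.mem_insert_iff, Set.mem_singleton_iff] at hr
    rcases hr with rfl | rfl
    · have hi1' : (1:ℝ) ≤ (i:ℝ) := by exact_mod_cast hi1
      have : (0:ℝ) ≤ ((i:ℝ)-1)/2^c := div_nonneg (by linarith) h2c.le
      linarith
    · have hi2' : ((i:ℝ)) ≤ (2:ℝ)^c := by exact_mod_cast hi2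
      rw [lt_div_iff₀ h2c] at hhi
      linarith
  · obtain ⟨l, hl1, hl2, hrq⟩ := hr
    set e := c - (m' + 1) with he
    have hce : c = (m' + 1) + e := by omega
    set q : ℕ := (2*l - 1) * 2^e with hq
    have hrq2 : r = (q:ℝ)/2^c := by
      rw [hrq, hce, pow_add, hq]
      push_cast [Nat.cast_sub (by omega : 1 ≤ 2*l)]
      have h1 : ((2:ℝ)^(m'+1)) ≠ 0 := by positivity
      have h2 : ((2:ℝ)^e) ≠ 0 := by positivity
      field_simp
      ring
    rw [hrq2] at hlo hhi
    rw [div_lt_div_iff₀ h2c h2c] at hlo hhi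
    have hlo' : (i:ℝ) - 1 < (q:ℝ) := lt_of_mul_lt_mul_right hlo h2c.le
    have hhi' : (q:ℝ) < (i:ℝ) := lt_of_mul_lt_mul_right hhi h2c.le
    have hq1 : q < i := by exact_mod_cast hhi'
    have hq2 : (i:ℝ) < (q:ℝ) + 1 := by linarith
    have hq3 : i < q + 1 := by exact_mod_cast hq2
    omega

/-! ### Initial segments -/

def Iseg (C F : Finset ℕ) : Prop :=
  C ⊆ F ∧ ∀ c ∈ C, ∀ f ∈ F, f ∉ C → c < f

lemma iseg_step {C F F' : Finset ℕ} (hcard : C.card ≤ F'.card)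
    (h : Prec F F' ∨ Prec F' F) (hC : Iseg C F) : Iseg C F' := by
  rcases h with hP | hP
  · -- going up
    constructor
    · exact hC.1.trans hP.1
    · intro c hc f hf hfC
      by_cases hfF : f ∈ F
      · exact hC.2 c hc f hfF hfC
      · exact hP.2.2 c (hC.1 hc) f hf (fun hcon => hfF hcon)
  · -- going down
    have hsub : C ⊆ F' := by
      intro c hc
      by_contra hcF'
      have hcF : c ∈ F := hC.1 hc
      have hall : ∀ x ∈ F', x < c := fun x hx => hP.2.2 x hx c hcF hcF'
      have hsub2 : F' ⊆ F.filter (· < c) := by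
        intro x hx
        rw [Finset.mem_filter]
        exact ⟨hP.1 hx, hall x hx⟩
      have hsub3 : F.filter (· < c) ⊆ C.erase c := by
        intro y hy
        rw [Finset.mem_filter] at hy
        rw [Finset.mem_erase]
        have hyC : y ∈ C := by
          by_contra hyC
          exact absurd (hC.2 c hc y hy.1 hyC) (not_lt.mpr hy.2.le)
        exact ⟨ne_of_lt hy.2, hyC⟩
      have h1 : F'.card ≤ (C.erase c).card :=
        le_trans (Finset.card_le_card hsub2) (Finset.card_le_card hsub3)
      rw [Finset.card_erase_of_mem hc] at h1
      have hCpos : 0 < C.card := Finset.card_pos.mpr ⟨c, hc⟩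
      omega
    refine ⟨hsub, ?_⟩
    intro c hc f hf hfC
    exact hC.2 c hc f (hP.1 hf) hfC

lemma walk_iseg {k c i : ℕ} (C : Finset ℕ) (hCcard : C.card = c + 1)
    (hi1 : 1 ≤ i) (hi2 : i ≤ 2^c)
    {x y : Vert k} (w : (Gk k).Walk x y)
    (hin : ∀ z ∈ w.support, ((i:ℝ)-1)/2^c < z.1.2 ∧ z.1.2 < (i:ℝ)/2^c)
    (hx : Iseg C x.1.1) : Iseg C y.1.1 := by
  induction w with
  | nil => exact hx
  | @cons u v' y' h p ih =>
    have hv'in : v' ∈ (SimpleGraph.Walk.cons h p).support := by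
      rw [SimpleGraph.Walk.support_cons]
      exact List.mem_cons_of_mem _ p.start_mem_support
    have hv'card : c + 1 ≤ v'.1.1.card := by
      have := hin v' hv'in
      exact bset_denom v'.2.2 hi1 hi2 this.1 this.2
    have hstep : Iseg C v'.1.1 := by
      apply iseg_step (by omega) h.1 hx
    apply ih ?_ hstep
    intro z hz
    apply hin
    rw [SimpleGraph.Walk.support_cons]
    exact List.mem_cons_of_mem _ hz


/-! ### Vertical (sub-diamond) pairs -/

/-- `u, v` is a bottom/top pair of a sub-diamond of scale `2^j` in `G_k`. -/
def SDp (k j : ℕ) (u v : Vert k) : Prop :=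
  ∃ kj i : ℕ, k = j + kj ∧ 1 ≤ i ∧ i ≤ 2^kj ∧
    u.1.2 = ((i:ℝ)-1)/2^kj ∧ v.1.2 = (i:ℝ)/2^kj ∧
    ((Prec u.1.1 v.1.1 ∧ v.1.1.card = kj) ∨ (Prec v.1.1 u.1.1 ∧ u.1.1.card = kj) ∨
     (u.1.1 = ∅ ∧ v.1.1 = ∅ ∧ j = k))

/-- separation of distinct midpoints: every walk between them is long. -/
lemma sep_walk {k j' kj i : ℕ} (hk : k = (j'+1) + kj) (hi1 : 1 ≤ i) (hi2 : i ≤ 2^kj)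
    {mt mt' : Vert k}
    (hr : mt.1.2 = (2*(i:ℝ)-1)/2^(kj+1)) (hr' : mt'.1.2 = (2*(i:ℝ)-1)/2^(kj+1))
    (hcard : mt.1.1.card = kj+1)
    (hnsub : ¬ mt.1.1 ⊆ mt'.1.1)
    (w : (Gk k).Walk mt mt') : (2:ℝ)^(j'+1) ≤ (w.length : ℝ) := by
  have h2kj : (0:ℝ) < 2^kj := by positivity
  have hmid_in : ∀ r : ℝ, r = (2*(i:ℝ)-1)/2^(kj+1) →
      ((i:ℝ)-1)/2^kj < r ∧ r < (i:ℝ)/2^kj := by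
    intro r hrr
    rw [hrr, pow_succ]
    constructor
    · rw [div_lt_div_iff₀ (by positivity) (by positivity)]
      have hi1' : (1:ℝ) ≤ (i:ℝ) := by exact_mod_cast hi1
      nlinarith
    · rw [div_lt_div_iff₀ (by positivity) (by positivity)]
      nlinarith
  by_cases hall : ∀ z ∈ w.support, ((i:ℝ)-1)/2^kj < z.1.2 ∧ z.1.2 < (i:ℝ)/2^kj
  · exfalso
    have hIseg : Iseg mt.1.1 mt'.1.1 := by
      apply walk_iseg (c := kj) mt.1.1 hcard hi1 hi2 w hall
      exact ⟨Finset.Subset.refl _, fun c hc f hf hfC => absurd hf hfC⟩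
    exact hnsub hIseg.1
  · push_neg at hall
    obtain ⟨z, hzsup, hzbad⟩ := hall
    -- z is r-far from the common midpoint value
    have e1 : (2*(i:ℝ)-1)/2^(kj+1) - ((i:ℝ)-1)/2^kj = 1/2^(kj+1) := by
      rw [pow_succ]
      have h1 : ((2:ℝ)^kj) ≠ 0 := by positivity
      field_simp
      ring
    have e2 : (i:ℝ)/2^kj - (2*(i:ℝ)-1)/2^(kj+1) = 1/2^(kj+1) := by
      rw [pow_succ]
      have h1 : ((2:ℝ)^kj) ≠ 0 := by positivity
      field_simp
      ring
    have hpos2 : (0:ℝ) < 1/2^(kj+1) := by positivity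
    have hfar : 1/2^(kj+1) ≤ |mt.1.2 - z.1.2| := by
      rw [hr]
      by_cases hA : (i:ℝ)/2^kj ≤ z.1.2
      · rw [abs_sub_comm, abs_of_nonneg (by linarith)]
        linarith
      · have hAlo : z.1.2 ≤ ((i:ℝ)-1)/2^kj := by
          by_contra h3
          push_neg at h3
          exact hA (hzbad h3)
        rw [abs_of_nonneg (by linarith)]
        linarith
    have hfar' : 1/2^(kj+1) ≤ |z.1.2 - mt'.1.2| := by
      rw [hr', ← hr, abs_sub_comm]
      exact hfar
    -- split the walk at z
    haveI : DecidableEq (Vert k) := Classical.decEq _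
    have hspec := SimpleGraph.Walk.take_spec w hzsup
    have hlen : w.length = (w.takeUntil z hzsup).length + (w.dropUntil z hzsup).length := by
      conv_lhs => rw [← hspec]
      rw [SimpleGraph.Walk.length_append]
    have key : ∀ (L : ℝ), 1/2^(kj+1) ≤ L * (1/2)^k → (2:ℝ)^j' ≤ L := by
      intro L h
      have h2k1 : (2:ℝ)^k = 2^j' * 2^(kj+1) := by
        rw [← pow_add]
        congr 1
        omega
      have hp1 : (0:ℝ) < 2^(kj+1) := by positivity
      have hp2 : (0:ℝ) < 2^j' := by positivity
      have hhalf : ((1:ℝ)/2)^k * (2^j' * 2^(kj+1)) = 1 := by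
        rw [div_pow, one_pow, ← h2k1]
        field_simp
      have hhalf2 : (1/(2:ℝ)^(kj+1)) * (2^j' * 2^(kj+1)) = 2^j' := by
        field_simp
      have hmm := mul_le_mul_of_nonneg_right h (mul_pos hp2 hp1).le
      rw [hhalf2, mul_assoc, hhalf, mul_one] at hmm
      exact hmm
    have hq1 : (2:ℝ)^j' ≤ ((w.takeUntil z hzsup).length : ℝ) :=
      key _ (le_trans hfar (walk_rdiff _))
    have hq2 : (2:ℝ)^j' ≤ ((w.dropUntil z hzsup).length : ℝ) :=
      key _ (le_trans hfar' (walk_rdiff _))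
    rw [hlen]
    push_cast
    rw [pow_succ]
    linarith


/-- Countably many midpoints of a scale-`2^(j'+1)` pair, with mutual separation. -/
lemma exists_mid {k j' : ℕ} {u v : Vert k} (h : SDp k (j'+1) u v) :
    ∃ m : ℕ → Vert k,
      (∀ t, SDp k j' u (m t) ∧ SDp k j' (m t) v) ∧
      (∀ t t' : ℕ, t ≠ t' → ∀ w : (Gk k).Walk (m t) (m t'), (2:ℝ)^(j'+1) ≤ (w.length : ℝ)) := by
  obtain ⟨kj, i, hk, hi1, hi2, hru, hrv, hcase⟩ := h
  set E : Finset ℕ := u.1.1 ∪ v.1.1 with hE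
  have husub : u.1.1 ⊆ E := Finset.subset_union_left
  have hvsub : v.1.1 ⊆ E := Finset.subset_union_right
  have hEcard : E.card = kj := by
    rcases hcase with ⟨hP, hc⟩ | ⟨hP, hc⟩ | ⟨h1, h2, h3⟩
    · rw [hE, Finset.union_eq_right.mpr hP.1]; exact hc
    · rw [hE, Finset.union_eq_left.mpr hP.1]; exact hc
    · rw [hE, h1, h2]
      simp
      omega
  have hucard : u.1.1.card ≤ kj := by
    calc u.1.1.card ≤ E.card := Finset.card_le_card husub
      _ = kj := hEcard
  have hvcard : v.1.1.card ≤ kj := by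
    calc v.1.1.card ≤ E.card := Finset.card_le_card hvsub
      _ = kj := hEcard
  set S : ℕ := E.sup id with hS
  set n : ℕ → ℕ := fun t => S + 1 + t with hn
  have hfresh : ∀ t, ∀ e ∈ E, e < n t := by
    intro t e he
    have h1 : e ≤ S := Finset.le_sup (f := id) he
    simp only [hn]
    omega
  have hnotmem : ∀ t, n t ∉ E := fun t hmem => lt_irrefl _ (hfresh t _ hmem)
  have hninj : ∀ t t', t ≠ t' → n t ≠ n t' := by
    intro t t' htt
    simp only [hn]
    omega
  -- the midpoint vertices
  have hkj1 : kj + 1 ≤ k := by omega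
  have hBmem : ((2*(i:ℝ)-1)/2^(kj+1)) ∈ Bset (kj+1) := ⟨i, hi1, hi2, rfl⟩
  have hvert : ∀ t, IsVertex k (insert (n t) E, (2*(i:ℝ)-1)/2^(kj+1)) := by
    intro t
    have hcardi : (insert (n t) E).card = kj + 1 := by
      rw [Finset.card_insert_of_notMem (hnotmem t), hEcard]
    exact ⟨by rw [hcardi]; exact hkj1, by rw [hcardi]; exact hBmem⟩
  set m : ℕ → Vert k := fun t => ⟨(insert (n t) E, (2*(i:ℝ)-1)/2^(kj+1)), hvert t⟩ with hm
  have hmcard : ∀ t, (m t).1.1.card = kj + 1 := by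
    intro t
    show (insert (n t) E).card = kj + 1
    rw [Finset.card_insert_of_notMem (hnotmem t), hEcard]
  have h2kj : ((2:ℝ)^kj) ≠ 0 := by positivity
  -- Prec from u and from v into the midpoint
  have hPrecu : ∀ t, Prec u.1.1 (m t).1.1 := by
    intro t
    refine ⟨husub.trans (Finset.subset_insert _ _), ?_, ?_⟩
    · rw [hmcard t]; omega
    · intro a ha b hb hbu
      rcases Finset.mem_insert.mp hb with rfl | hbE
      · exact hfresh t a (husub ha)
      · rcases hcase with ⟨hP, _⟩ | ⟨hP, _⟩ | ⟨h1, h2, _⟩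
        · rcases Finset.mem_union.mp hbE with hbu' | hbv
          · exact absurd hbu' hbu
          · exact hP.2.2 a ha b hbv hbu
        · exact absurd (hP.1 (by
            rcases Finset.mem_union.mp hbE with hbu' | hbv
            · exact absurd hbu' hbu
            · exact hbv)) hbu
        · rw [h1] at ha
          exact absurd ha (Finset.notMem_empty a)
  have hPrecv : ∀ t, Prec v.1.1 (m t).1.1 := by
    intro t
    refine ⟨hvsub.trans (Finset.subset_insert _ _), ?_, ?_⟩
    · rw [hmcard t]; omega
    · intro a ha b hb hbv
      rcases Finset.mem_insert.mp hb with rfl | hbE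
      · exact hfresh t a (hvsub ha)
      · rcases hcase with ⟨hP, _⟩ | ⟨hP, _⟩ | ⟨h1, h2, _⟩
        · exact absurd (hP.1 (by
            rcases Finset.mem_union.mp hbE with hbu | hbv'
            · exact hbu
            · exact absurd hbv' hbv)) hbv
        · rcases Finset.mem_union.mp hbE with hbu | hbv'
          · exact hP.2.2 a ha b hbu hbv
          · exact absurd hbv' hbv
        · rw [h2] at ha
          exact absurd ha (Finset.notMem_empty a)
  refine ⟨m, ?_, ?_⟩
  · intro t
    constructor
    · -- SDp k j' u (m t)
      refine ⟨kj + 1, 2*i - 1, by omega, by omega, ?_, ?_, ?_, ?_⟩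
      · have : 2^(kj+1) = 2^kj * 2 := pow_succ 2 kj
        omega
      · rw [hru]
        have hcast : ((2*i - 1 : ℕ) : ℝ) = 2*(i:ℝ) - 1 := by
          push_cast [Nat.cast_sub (by omega : 1 ≤ 2*i)]
          ring
        rw [hcast, pow_succ]
        field_simp
        ring
      · show (2*(i:ℝ)-1)/2^(kj+1) = ((2*i - 1 : ℕ) : ℝ)/2^(kj+1)
        have hcast : ((2*i - 1 : ℕ) : ℝ) = 2*(i:ℝ) - 1 := by
          push_cast [Nat.cast_sub (by omega : 1 ≤ 2*i)]
          ring
        rw [hcast]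
      · exact Or.inl ⟨hPrecu t, hmcard t⟩
    · -- SDp k j' (m t) v
      refine ⟨kj + 1, 2*i, by omega, by omega, ?_, ?_, ?_, ?_⟩
      · have : 2^(kj+1) = 2^kj * 2 := pow_succ 2 kj
        omega
      · show (2*(i:ℝ)-1)/2^(kj+1) = (((2*i : ℕ) : ℝ) - 1)/2^(kj+1)
        push_cast
        ring_nf
      · rw [hrv, pow_succ]
        push_cast
        field_simp
      · exact Or.inr (Or.inl ⟨hPrecv t, hmcard t⟩)
  · -- separation
    intro t t' htt w
    refine sep_walk hk hi1 hi2 rfl rfl (hmcard t) ?_ w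
    intro hsub
    have hmem : n t ∈ (m t').1.1 := hsub (Finset.mem_insert_self _ _)
    rcases Finset.mem_insert.mp hmem with heq | hE'
    · exact hninj t t' htt heq
    · exact hnotmem t hE'


lemma sdp_walk {k : ℕ} (hk : 1 ≤ k) :
    ∀ j, ∀ u v : Vert k, SDp k j u v → ∃ w : (Gk k).Walk u v, w.length = 2^j := by
  intro j
  induction j with
  | zero =>
    intro u v h
    obtain ⟨kj, i, hkk, hi1, hi2, hru, hrv, hcase⟩ := h
    have hkj : kj = k := by omega
    have hadj : (Gk k).Adj u v := by
      constructor
      · rcases hcase with ⟨hP, _⟩ | ⟨hP, _⟩ | ⟨_, _, h3⟩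
        · exact Or.inl hP
        · exact Or.inr hP
        · omega
      · rw [hru, hrv, hkj]
        rw [div_sub_div_same]
        have : ((i:ℝ) - 1) - i = -1 := by ring
        rw [this, abs_div, abs_neg, abs_one, div_pow, one_pow]
        congr 1
        exact abs_of_pos (by positivity)
    exact ⟨SimpleGraph.Walk.cons hadj SimpleGraph.Walk.nil, by simp⟩
  | succ j' ih =>
    intro u v h
    obtain ⟨m, hm, _⟩ := exists_mid h
    obtain ⟨w1, hw1⟩ := ih u (m 0) (hm 0).1
    obtain ⟨w2, hw2⟩ := ih (m 0) v (hm 0).2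
    refine ⟨w1.append w2, ?_⟩
    rw [SimpleGraph.Walk.length_append, hw1, hw2, pow_succ]
    omega

lemma sdp_dist {k : ℕ} (hk : 1 ≤ k) {j : ℕ} {u v : Vert k} (h : SDp k j u v) :
    ((Gk k).dist u v : ℝ) = 2^j := by
  obtain ⟨w, hw⟩ := sdp_walk hk j u v h
  have hle : (Gk k).dist u v ≤ 2^j := hw ▸ SimpleGraph.dist_le w
  have hge : (2:ℝ)^j ≤ ((Gk k).dist u v : ℝ) := by
    obtain ⟨kj, i, hkk, hi1, hi2, hru, hrv, hcase⟩ := h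
    have hd := dist_ge (k := k) (x := u) (y := v) ⟨w⟩
    have habs : |u.1.2 - v.1.2| = 1/2^kj := by
      rw [hru, hrv, div_sub_div_same]
      have : ((i:ℝ) - 1) - i = -1 := by ring
      rw [this, abs_div, abs_neg, abs_one]
      congr 1
      exact abs_of_pos (by positivity)
    rw [habs] at hd
    have hpows : (2:ℝ)^k * (1/2^kj) = 2^j := by
      rw [hkk, pow_add]
      field_simp
    rw [hpows] at hd
    exact hd
  have hle' : ((Gk k).dist u v : ℝ) ≤ 2^j := by
    calc ((Gk k).dist u v : ℝ) ≤ ((2^j : ℕ) : ℝ) := by exact_mod_cast hle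
      _ = 2^j := by push_cast; ring
  linarith

lemma sdp_exists {k : ℕ} (hk : 1 ≤ k) : ∀ d, d ≤ k → ∃ u v : Vert k, SDp k (k - d) u v := by
  intro d
  induction d with
  | zero =>
    intro _
    have hv0 : IsVertex k (∅, (0:ℝ)) := ⟨by simp, Or.inl rfl⟩
    have hv1 : IsVertex k (∅, (1:ℝ)) := ⟨by simp, Or.inr rfl⟩
    refine ⟨⟨(∅, 0), hv0⟩, ⟨(∅, 1), hv1⟩, 0, 1, by omega, le_refl 1, by norm_num, ?_, ?_, ?_⟩
    · norm_num
    · norm_num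
    · exact Or.inr (Or.inr ⟨rfl, rfl, by omega⟩)
  | succ d ih =>
    intro hd
    obtain ⟨u, v, h⟩ := ih (by omega)
    have heq : k - d = (k - (d+1)) + 1 := by omega
    rw [heq] at h
    obtain ⟨m, hm, _⟩ := exists_mid h
    exact ⟨u, m 0, (hm 0).1⟩


/-- The self-improvement estimates for a bi-Lipschitz embedding of `G_k`. -/
lemma keyEstimates {Y : Type} [NormedAddCommGroup Y] [NormedSpace ℝ Y]
    (N : Y → ℝ) (a b : ℝ) (ha : 0 < a) (hb : 0 < b)
    (hN : ∀ y : Y, a * ‖y‖ ≤ N y ∧ N y ≤ b * ‖y‖)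
    (hadd : ∀ x y : Y, N (x + y) ≤ N x + N y)
    (hsmul : ∀ (c : ℝ) (y : Y), N (c • y) = |c| * N y)
    (hamuc : ∀ t ∈ Set.Ioo (0 : ℝ) 1, 0 < amucWith Y N t)
    (k : ℕ) (hk : 1 ≤ k) (D s : ℝ) (f : Vert k → Y) (hs : 0 < s)
    (hf : ∀ x y : Vert k, s * ((Gk k).dist x y : ℝ) ≤ ‖f x - f y‖ ∧
      ‖f x - f y‖ ≤ D * s * ((Gk k).dist x y : ℝ)) :
    ∃ ρ : ℕ → ℝ,
      (∀ j, j ≤ k → a * s * 2^j ≤ ρ j ∧ ρ j ≤ b * (D * s * 2^j)) ∧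
      (∀ j, 1 ≤ j → j ≤ k → ∀ t : ℝ, 0 < t → t * ρ j < a * s * 2^j →
        (1 + amucWith Y N t) * ρ j ≤ 2 * ρ (j-1)) := by
  classical
  set T : ℕ → Set ℝ := fun j => {x | ∃ u v : Vert k, SDp k j u v ∧ x = N (f u - f v)}
    with hT
  have hTub : ∀ j, ∀ x ∈ T j, x ≤ b * (D * s * 2^j) := by
    rintro j x ⟨u, v, hsdp, rfl⟩
    calc N (f u - f v) ≤ b * ‖f u - f v‖ := (hN _).2
      _ ≤ b * (D * s * ((Gk k).dist u v : ℝ)) :=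
          mul_le_mul_of_nonneg_left (hf u v).2 hb.le
      _ = b * (D * s * 2^j) := by rw [sdp_dist hk hsdp]
  have hTlb : ∀ j, ∀ x ∈ T j, a * s * 2^j ≤ x := by
    rintro j x ⟨u, v, hsdp, rfl⟩
    calc a * s * 2^j = a * (s * ((Gk k).dist u v : ℝ)) := by
          rw [sdp_dist hk hsdp]; ring
      _ ≤ a * ‖f u - f v‖ := mul_le_mul_of_nonneg_left (hf u v).1 ha.le
      _ ≤ N (f u - f v) := (hN _).1
  have hTne : ∀ j, j ≤ k → (T j).Nonempty := by
    intro j hj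
    obtain ⟨u, v, hsdp⟩ := sdp_exists hk (k - j) (by omega)
    rw [show k - (k - j) = j by omega] at hsdp
    exact ⟨N (f u - f v), u, v, hsdp, rfl⟩
  have hTbdd : ∀ j, BddAbove (T j) := fun j => ⟨b * (D * s * 2^j), hTub j⟩
  refine ⟨fun j => sSup (T j), ?_, ?_⟩
  · intro j hj
    constructor
    · obtain ⟨x, hx⟩ := hTne j hj
      exact le_trans (hTlb j x hx) (le_csSup (hTbdd j) hx)
    · exact csSup_le (hTne j hj) (hTub j)
  · intro j hj1 hjk t ht htρ
    have hΔlb : 0 < amucWith Y N t := by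
      apply hamuc
      constructor
      · exact ht
      · -- t < 1 since t * ρ j < a*s*2^j ≤ ρ j and ρ j > 0
        obtain ⟨x, hx⟩ := hTne j hjk
        have hρlb : a * s * 2^j ≤ sSup (T j) := le_trans (hTlb j x hx) (le_csSup (hTbdd j) hx)
        have hρpos : 0 < sSup (T j) := lt_of_lt_of_le (by positivity) hρlb
        nlinarith
    set Δ : ℝ := amucWith Y N t with hΔ
    have h1Δ : 0 < 1 + Δ := by linarith
    refine le_of_forall_pos_le_add ?_
    intro ε hε
    set ε' : ℝ := ε / (1 + Δ) with hε'
    have hε'pos : 0 < ε' := by positivity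
    obtain ⟨x, hx, hxlt⟩ := exists_lt_of_lt_csSup (hTne j hjk)
      (show sSup (T j) - ε' < sSup (T j) by linarith)
    obtain ⟨u, v, hsdp, rfl⟩ := hx
    set d0 : ℝ := N (f u - f v) with hd0def
    have hd0lb : a * s * 2^j ≤ d0 := hTlb j _ ⟨u, v, hsdp, rfl⟩
    have hd0ub : d0 ≤ sSup (T j) := le_csSup (hTbdd j) ⟨u, v, hsdp, rfl⟩
    have hd0pos : 0 < d0 := lt_of_lt_of_le (by positivity) hd0lb
    have hsdp' : SDp k ((j-1)+1) u v := by rwa [Nat.sub_add_cancel hj1]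
    obtain ⟨m, hm, hsep⟩ := exists_mid hsdp'
    -- the midpoint images
    have hj1k : j - 1 ≤ k := by omega
    have hmid : ∀ n : ℕ, max (N (f u - f (m n))) (N (f (m n) - f v)) ≤
        (1 + (2 * sSup (T (j-1)) / d0 - 1)) * d0 / 2 := by
      intro n
      have he : (1 + (2 * sSup (T (j-1)) / d0 - 1)) * d0 / 2 = sSup (T (j-1)) := by
        field_simp
        ring
      rw [he]
      apply max_le
      · exact le_csSup (hTbdd (j-1)) ⟨u, m n, (hm n).1, rfl⟩
      · exact le_csSup (hTbdd (j-1)) ⟨m n, v, (hm n).2, rfl⟩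
    have hsep' : ∀ n n' : ℕ, n ≠ n' →
        (a * s * 2^j / d0) * d0 ≤ N (f (m n) - f (m n')) := by
      intro n n' hne
      have hreach : (Gk k).Reachable (m n) (m n') := by
        obtain ⟨w1, _⟩ := sdp_walk hk (j-1) u (m n) (hm n).1
        obtain ⟨w2, _⟩ := sdp_walk hk (j-1) u (m n') (hm n').1
        exact (SimpleGraph.Walk.reachable w1).symm.trans (SimpleGraph.Walk.reachable w2)
      obtain ⟨wd, hwd⟩ := hreach.exists_walk_length_eq_dist
      have hwlen := hsep n n' hne wd
      rw [hwd] at hwlen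
      have hdist : (2:ℝ)^j ≤ ((Gk k).dist (m n) (m n') : ℝ) := by
        rwa [show (j-1)+1 = j by omega] at hwlen
      have hcancel : (a * s * 2^j / d0) * d0 = a * s * 2^j := by
        field_simp
      rw [hcancel]
      calc a * s * 2^j = a * (s * 2^j) := by ring
        _ ≤ a * (s * ((Gk k).dist (m n) (m n') : ℝ)) := by
            apply mul_le_mul_of_nonneg_left _ ha.le
            exact mul_le_mul_of_nonneg_left hdist hs.le
        _ ≤ a * ‖f (m n) - f (m n')‖ :=
            mul_le_mul_of_nonneg_left (hf (m n) (m n')).1 ha.le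
        _ ≤ N (f (m n) - f (m n')) := (hN _).1
    have htc : t < a * s * 2^j / d0 := by
      rw [lt_div_iff₀ hd0pos]
      calc t * d0 ≤ t * sSup (T j) := mul_le_mul_of_nonneg_left hd0ub ht.le
        _ < a * s * 2^j := htρ
    have hA := lemmaA N a b ha hb hN hadd hsmul ht htc rfl hd0pos
      (fun n => f (m n)) hmid hsep'
    -- hA : Δ ≤ 2 * sSup (T (j-1)) / d0 - 1
    have h2 : (1 + Δ) * d0 ≤ 2 * sSup (T (j-1)) := by
      have h3 : 1 + Δ ≤ 2 * sSup (T (j-1)) / d0 := by linarith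
      calc (1 + Δ) * d0 ≤ (2 * sSup (T (j-1)) / d0) * d0 :=
            mul_le_mul_of_nonneg_right h3 hd0pos.le
        _ = 2 * sSup (T (j-1)) := by field_simp
    calc (1 + Δ) * sSup (T j) ≤ (1 + Δ) * (d0 + ε') :=
          mul_le_mul_of_nonneg_left (by linarith) h1Δ.le
      _ = (1 + Δ) * d0 + (1 + Δ) * ε' := by ring
      _ ≤ 2 * sSup (T (j-1)) + ε := by
          have : (1 + Δ) * ε' = ε := by rw [hε']; field_simp
          linarith

/-- If `Y` admits an equivalent asymptotically midpoint
uniformly convex norm `N`, then `sup_k c_Y(G_k) = ∞`; if moreover the modulus of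
`N` has power type `p ∈ (1,∞)`, then `c_Y(G_k) ≳ k^{1/p}`. -/
theorem no_equi_embedding (Y : Type) [NormedAddCommGroup Y] [NormedSpace ℝ Y]
    (N : Y → ℝ) (a b : ℝ) (ha : 0 < a) (hb : 0 < b)
    (hN : ∀ y : Y, a * ‖y‖ ≤ N y ∧ N y ≤ b * ‖y‖)
    (hadd : ∀ x y : Y, N (x + y) ≤ N x + N y)
    (hsmul : ∀ (c : ℝ) (y : Y), N (c • y) = |c| * N y)
    (hamuc : ∀ t ∈ Set.Ioo (0 : ℝ) 1, 0 < amucWith Y N t) :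
    (∀ D : ℝ, 1 ≤ D → ∃ k : ℕ, ¬ EmbedsWith k Y D) ∧
    (∀ p : ℝ, 1 < p → ∀ γ : ℝ, 0 < γ →
      (∀ t ∈ Set.Ioo (0 : ℝ) 1, γ * t ^ p ≤ amucWith Y N t) →
      ∃ c : ℝ, 0 < c ∧ ∀ k : ℕ, 1 ≤ k → ∀ D : ℝ,
        EmbedsWith k Y D → c * (k : ℝ) ^ (1 / p) ≤ D) := by
  constructor
  · -- Part 1: no uniform embedding
    intro D hD
    have hD0 : (0:ℝ) < D := lt_of_lt_of_le one_pos hD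
    set t1 : ℝ := min (a/(2*b*D)) (1/2) with ht1
    have ht1pos : 0 < t1 := lt_min (by positivity) (by norm_num)
    have ht1lt : t1 < 1 := lt_of_le_of_lt (min_le_right _ _) (by norm_num)
    have hΔpos : 0 < amucWith Y N t1 := hamuc t1 ⟨ht1pos, ht1lt⟩
    set Δ : ℝ := amucWith Y N t1 with hΔdef
    obtain ⟨k0, hk0⟩ := pow_unbounded_of_one_lt (b*D/a) (show (1:ℝ) < 1 + Δ by linarith)
    have hgen : ∀ K : ℕ, 1 ≤ K → EmbedsWith K Y D → (1+Δ)^K * a ≤ b*D := by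
      intro K hK1 hE
      obtain ⟨s, f, hs, hf⟩ := hE
      obtain ⟨ρ, hbounds, himp⟩ := keyEstimates N a b ha hb hN hadd hsmul hamuc K hK1 D s f hs hf
      have hind : ∀ d, d ≤ K → (1+Δ)^d * (a * s * 2^K) ≤ 2^d * ρ (K - d) := by
        intro d
        induction d with
        | zero =>
          intro _
          simpa using (hbounds K le_rfl).1
        | succ d ih =>
          intro hdK
          have hih := ih (by omega)
          have hj1 : 1 ≤ K - d := by omega
          have hjk : K - d ≤ K := by omega
          have hub := (hbounds (K-d) hjk).2
          have hlb := (hbounds (K-d) hjk).1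
          have hρpos : 0 < ρ (K-d) := lt_of_lt_of_le (by positivity) hlb
          have hcond : t1 * ρ (K - d) < a * s * 2^(K - d) := by
            have ht1le : t1 ≤ a/(2*b*D) := min_le_left _ _
            calc t1 * ρ (K-d) ≤ (a/(2*b*D)) * ρ (K-d) :=
                  mul_le_mul_of_nonneg_right ht1le hρpos.le
              _ ≤ (a/(2*b*D)) * (b*(D*s*2^(K-d))) :=
                  mul_le_mul_of_nonneg_left hub (by positivity)
              _ = a * s * 2^(K-d)/2 := by field_simp
              _ < a * s * 2^(K-d) := by
                  have : (0:ℝ) < a*s*2^(K-d) := by positivity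
                  linarith
          have himp' := himp (K-d) hj1 hjk t1 ht1pos hcond
          rw [show K - d - 1 = K - (d+1) by omega] at himp'
          calc (1+Δ)^(d+1) * (a*s*2^K) = (1+Δ) * ((1+Δ)^d * (a*s*2^K)) := by ring
            _ ≤ (1+Δ) * (2^d * ρ (K-d)) := mul_le_mul_of_nonneg_left hih (by linarith)
            _ = 2^d * ((1+Δ) * ρ (K-d)) := by ring
            _ ≤ 2^d * (2 * ρ (K-(d+1))) := mul_le_mul_of_nonneg_left himp' (by positivity)
            _ = 2^(d+1) * ρ (K-(d+1)) := by rw [pow_succ]; ring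
      have hfin := hind K le_rfl
      rw [Nat.sub_self] at hfin
      have hρ0 := (hbounds 0 (by omega)).2
      have h2K : (0:ℝ) < 2^K := by positivity
      have step : (1+Δ)^K * (a*s*2^K) ≤ 2^K * (b*(D*s*(1:ℝ))) := by
        have := mul_le_mul_of_nonneg_left hρ0 h2K.le
        simp only [pow_zero] at this
        linarith
      by_contra hcon
      push_neg at hcon
      have := mul_lt_mul_of_pos_right hcon (mul_pos hs h2K)
      nlinarith [step]
    refine ⟨max k0 1, ?_⟩
    intro hE
    have hXa := hgen (max k0 1) (le_max_right _ _) hE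
    have hpowK : (1+Δ)^k0 ≤ (1+Δ)^(max k0 1) :=
      pow_le_pow_right₀ (by linarith) (le_max_left _ _)
    have hlt : b*D < (1+Δ)^(max k0 1) * a := by
      have h1 : b*D/a < (1+Δ)^(max k0 1) := lt_of_lt_of_le hk0 hpowK
      calc b*D = (b*D/a) * a := by field_simp
        _ < (1+Δ)^(max k0 1) * a := mul_lt_mul_of_pos_right h1 ha
    linarith
  · -- Part 2: power-type lower bound
    intro p hp γ hγ hpt
    have hp0 : (0:ℝ) < p := by linarith
    have hp0' : p ≠ 0 := ne_of_gt hp0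
    refine ⟨(a/(2*b)) * γ^((1:ℝ)/p), by positivity, ?_⟩
    intro k hk D hEmb
    obtain ⟨s, f, hs, hf⟩ := hEmb
    obtain ⟨ρ, hbounds, himp⟩ := keyEstimates N a b ha hb hN hadd hsmul hamuc k hk D s f hs hf
    have hlb0 := (hbounds 0 (by omega)).1
    have hub0 := (hbounds 0 (by omega)).2
    simp only [pow_zero, mul_one] at hlb0 hub0
    have hD0 : (0:ℝ) < D := by
      by_contra hcon
      push_neg at hcon
      have h1 : D*s ≤ 0 := mul_nonpos_of_nonpos_of_nonneg hcon hs.le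
      have h2 : b*(D*s) ≤ 0 := mul_nonpos_of_nonneg_of_nonpos hb.le h1
      nlinarith [mul_pos ha hs]
    set K0 : ℝ := γ * (a/(2*b*D))^p * (b*D) with hK0
    have hK0pos : 0 < K0 := by
      have : (0:ℝ) < (a/(2*b*D))^p := Real.rpow_pos_of_pos (by positivity) p
      positivity
    have hind : ∀ d, d ≤ k → s * 2^(k-d) * (a + d * K0) ≤ ρ (k-d) := by
      intro d
      induction d with
      | zero =>
        intro _
        have h := (hbounds k le_rfl).1
        simp only [Nat.sub_zero, Nat.cast_zero, zero_mul, add_zero]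
        have he : s*2^k*a = a*s*2^k := by ring
        linarith
      | succ d ih =>
        intro hdk
        have hih := ih (by omega)
        have hj1 : 1 ≤ k - d := by omega
        have hjk : k - d ≤ k := by omega
        set j := k - d with hj
        have hub := (hbounds j hjk).2
        have hlb := (hbounds j hjk).1
        have hρpos : 0 < ρ j := lt_of_lt_of_le (by positivity) hlb
        set tj : ℝ := a*s*2^j/(2*ρ j) with htj
        have htpos : 0 < tj := by positivity
        have ht1 : tj < 1 := by
          rw [htj, div_lt_one (by positivity)]
          linarith
        have hcond : tj * ρ j < a * s * 2^j := by
          have he : tj * ρ j = a*s*2^j/2 := by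
            rw [htj]; field_simp
          rw [he]
          have : (0:ℝ) < a*s*2^j := by positivity
          linarith
        have himp' := himp j hj1 hjk tj htpos hcond
        have hΔge : γ * tj^p ≤ amucWith Y N tj := hpt tj ⟨htpos, ht1⟩
        -- the per-level gain
        set B : ℝ := b*(D*s*2^j) with hB
        have hBpos : 0 < B := by positivity
        have hgain : K0 * (s * 2^j) ≤ γ * tj^p * ρ j := by
          have he1 : tj = (a*s*2^j/2) / ρ j := by rw [htj]; ring
          have he2 : (a*s*2^j/2) = (a/(2*b*D)) * B := by rw [hB]; field_simp
          have hA2pos : (0:ℝ) < a*s*2^j/2 := by positivity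
          have he3 : tj^p * ρ j = (a*s*2^j/2)^p * (ρ j)^((1:ℝ)-p) := by
            rw [he1, Real.div_rpow hA2pos.le hρpos.le,
              Real.rpow_sub hρpos, Real.rpow_one]
            field_simp
          have he4 : (B:ℝ)^((1:ℝ)-p) ≤ (ρ j)^((1:ℝ)-p) :=
            Real.rpow_le_rpow_of_nonpos hρpos hub (by linarith)
          have he5 : (a*s*2^j/2)^p * B^((1:ℝ)-p) = (a/(2*b*D))^p * B := by
            rw [he2, Real.mul_rpow (by positivity) hBpos.le, mul_assoc,
              ← Real.rpow_add hBpos]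
            norm_num
          have he6 : (a/(2*b*D))^p * B = (a/(2*b*D))^p * (b*D) * (s*2^j) := by
            rw [hB]; ring
          have hpw : (0:ℝ) < (a*s*2^j/2)^p := Real.rpow_pos_of_pos hA2pos p
          calc K0 * (s*2^j) = γ * ((a/(2*b*D))^p * B) := by rw [hK0, he6]; ring
            _ = γ * ((a*s*2^j/2)^p * B^((1:ℝ)-p)) := by rw [he5]
            _ ≤ γ * ((a*s*2^j/2)^p * (ρ j)^((1:ℝ)-p)) := by
                apply mul_le_mul_of_nonneg_left _ hγ.le
                exact mul_le_mul_of_nonneg_left he4 hpw.le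
            _ = γ * (tj^p * ρ j) := by rw [he3]
            _ = γ * tj^p * ρ j := by ring
        have hgain2 : γ * tj^p * ρ j ≤ amucWith Y N tj * ρ j :=
          mul_le_mul_of_nonneg_right hΔge hρpos.le
        have hstep : s * 2^j * (a + d*K0) + K0 * (s*2^j) ≤ 2 * ρ (j - 1) := by
          have h1 : s * 2^j * (a + d*K0) ≤ ρ j := hih
          have h2 : (1 + amucWith Y N tj) * ρ j ≤ 2 * ρ (j-1) := himp'
          nlinarith [hgain, hgain2, h1, hρpos]
        have hj2 : k - (d+1) = j - 1 := by omega
        rw [hj2]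
        have hpow2 : (2:ℝ)^j = 2 * 2^(j-1) := by
          conv_lhs => rw [show j = (j-1)+1 by omega]
          rw [pow_succ]
          ring
        rw [hpow2] at hstep
        push_cast
        nlinarith [hstep]
    have hfind := hind k le_rfl
    rw [Nat.sub_self] at hfind
    simp only [pow_zero, mul_one] at hfind
    -- s * (a + k*K0) ≤ ρ 0 ≤ b*D*s
    have hmain : (k:ℝ) * K0 ≤ b*D := by
      have he : b*(D*s) = b*D*s := by ring
      have h1 : s * (a + (k:ℝ)*K0) ≤ s * (b*D) := by nlinarith [hfind, hub0]
      have h2 : a + (k:ℝ)*K0 ≤ b*D := (mul_le_mul_iff_right₀ hs).mp h1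
      linarith
    -- unfold K0 and conclude
    set R : ℝ := 2*b*D/a with hR
    have hRpos : 0 < R := by positivity
    have hinv : a/(2*b*D) = R⁻¹ := by
      rw [hR]; field_simp
    have hRp : 0 < R^p := Real.rpow_pos_of_pos hRpos p
    have hkγ : (k:ℝ) * γ ≤ R^p := by
      have h1 : (k:ℝ) * γ * (R^p)⁻¹ * (b*D) ≤ b*D := by
        have : (k:ℝ) * K0 = (k:ℝ) * γ * (R^p)⁻¹ * (b*D) := by
          rw [hK0, hinv, Real.inv_rpow hRpos.le]
          ring
        linarith [hmain, this]
      have h2 : (k:ℝ) * γ * (R^p)⁻¹ ≤ 1 := by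
        by_contra hcon
        push_neg at hcon
        nlinarith [mul_pos hb hD0]
      calc (k:ℝ) * γ = ((k:ℝ) * γ * (R^p)⁻¹) * R^p := by field_simp
        _ ≤ 1 * R^p := mul_le_mul_of_nonneg_right h2 hRp.le
        _ = R^p := one_mul _
    have hfin2 : ((k:ℝ) * γ)^((1:ℝ)/p) ≤ R := by
      have h1 : ((k:ℝ) * γ)^((1:ℝ)/p) ≤ (R^p)^((1:ℝ)/p) :=
        Real.rpow_le_rpow (by positivity) hkγ (by positivity)
      have h2 : (R^p)^((1:ℝ)/p) = R := by
        rw [← Real.rpow_mul hRpos.le]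
        rw [show p * ((1:ℝ)/p) = 1 by field_simp]
        exact Real.rpow_one R
      rwa [h2] at h1
    have hsplit : ((k:ℝ) * γ)^((1:ℝ)/p) = (k:ℝ)^((1:ℝ)/p) * γ^((1:ℝ)/p) :=
      Real.mul_rpow (Nat.cast_nonneg k) hγ.le
    rw [hsplit] at hfin2
    calc (a/(2*b)) * γ^((1:ℝ)/p) * (k:ℝ)^((1:ℝ)/p)
        = (a/(2*b)) * ((k:ℝ)^((1:ℝ)/p) * γ^((1:ℝ)/p)) := by ring
      _ ≤ (a/(2*b)) * R := mul_le_mul_of_nonneg_left hfin2 (by positivity)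
      _ = D := by rw [hR]; field_simp


end DiamondPaper
end

section
/- Let k ∈ ℕ and ε > 0, and let p ∈ [1,∞) satisfy p ≥ ln(2k+2)/ln(1+ε/3). Then the countably branching diamond graph G_k admits a bi-Lipschitz embedding into ℓ_p with distortion at most 3 + ε. -/
open scoped ENNReal
namespace DiamondPaper

/-! ### Sorted-prefix (truncation) infrastructure -/


/-- The first `j` elements of `A` in increasing order. -/
def trunc (A : Finset ℕ) (j : ℕ) : Finset ℕ := ((A.sort (· ≤ ·)).take j).toFinset

lemma sort_trunc (A : Finset ℕ) (j : ℕ) :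
    (trunc A j).sort (· ≤ ·) = (A.sort (· ≤ ·)).take j := by
  rw [trunc]
  refine (List.toFinset_sort (· ≤ ·) ?_).2 ?_
  · exact (A.sort_nodup _).sublist (List.take_sublist _ _)
  · exact (A.pairwise_sort _).sublist (List.take_sublist _ _)

lemma card_trunc (A : Finset ℕ) (j : ℕ) : (trunc A j).card = min j A.card := by
  rw [← Finset.length_sort (· ≤ ·), sort_trunc, List.length_take, Finset.length_sort]

lemma card_trunc_of_le {A : Finset ℕ} {j : ℕ} (h : j ≤ A.card) : (trunc A j).card = j := by
  rw [card_trunc]; omega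

lemma trunc_trunc (A : Finset ℕ) {i j : ℕ} (h : i ≤ j) :
    trunc (trunc A j) i = trunc A i := by
  show ((trunc A j).sort (· ≤ ·) |>.take i).toFinset = trunc A i
  rw [sort_trunc, List.take_take, min_eq_left h]; rfl

lemma trunc_eq_self {A : Finset ℕ} {j : ℕ} (h : A.card ≤ j) : trunc A j = A := by
  unfold trunc
  rw [List.take_of_length_le (by rw [Finset.length_sort]; exact h), Finset.sort_toFinset]

lemma trunc_zero (A : Finset ℕ) : trunc A 0 = ∅ := by simp [trunc]

lemma trunc_subset (A : Finset ℕ) (j : ℕ) : trunc A j ⊆ A := by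
  intro x hx
  rw [trunc, List.mem_toFinset] at hx
  exact (Finset.mem_sort (α := ℕ) (· ≤ ·)).1 (List.mem_of_mem_take hx)

lemma mem_trunc {A : Finset ℕ} {j : ℕ} {x : ℕ} :
    x ∈ trunc A j ↔ x ∈ (A.sort (· ≤ ·)).take j := List.mem_toFinset

lemma prec_trunc {A : Finset ℕ} {i j : ℕ} (hij : i < j) (hj : j ≤ A.card) :
    Prec (trunc A i) (trunc A j) := by
  refine ⟨?_, ?_, ?_⟩
  · intro x hx
    rw [mem_trunc] at hx ⊢
    exact List.mem_of_mem_take (l := (A.sort (· ≤ ·)).take j)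
      (by rw [List.take_take, min_eq_left hij.le]; exact hx)
  · rw [card_trunc_of_le (hij.le.trans hj), card_trunc_of_le hj]; exact hij
  · intro a ha b hb hbn
    rw [mem_trunc] at ha hb
    have hbd : b ∈ (A.sort (· ≤ ·)).drop i := by
      have hbl : b ∈ A.sort (· ≤ ·) := List.mem_of_mem_take hb
      have hsplit : b ∈ (A.sort (· ≤ ·)).take i ++ (A.sort (· ≤ ·)).drop i := by
        rw [List.take_append_drop]; exact hbl
      rcases List.mem_append.1 hsplit with h | h
      · exact absurd (mem_trunc.2 h) hbn
      · exact h
    exact (A.sortedLT_sort).pairwise.rel_of_mem_take_of_mem_drop ha hbd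

/-- If `A ⊆ B` and every element of `B \ A` dominates `A`, then `A` is the initial
segment of `B` of length `A.card`. -/
lemma eq_trunc_of_dom {A B : Finset ℕ} (hsub : A ⊆ B)
    (hdom : ∀ a ∈ A, ∀ b ∈ B, b ∉ A → a < b) : A = trunc B A.card := by
  have hcard : A.card ≤ B.card := Finset.card_le_card hsub
  have hct : (trunc B A.card).card = A.card := card_trunc_of_le hcard
  refine Finset.eq_of_subset_of_card_le ?_ (hct.le)
  -- show A ⊆ trunc B A.card
  by_contra hns
  obtain ⟨x, hxA, hxT⟩ := Finset.not_subset.1 hns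
  -- x ∈ drop part of B.sort
  have hxB : x ∈ B.sort (· ≤ ·) := (Finset.mem_sort (α := ℕ) (· ≤ ·)).2 (hsub hxA)
  have hxd : x ∈ (B.sort (· ≤ ·)).drop A.card := by
    have hsplit : x ∈ (B.sort (· ≤ ·)).take A.card ++ (B.sort (· ≤ ·)).drop A.card := by
      rw [List.take_append_drop]; exact hxB
    rcases List.mem_append.1 hsplit with h | h
    · exact absurd (mem_trunc.2 h) hxT
    · exact h
  -- the take part cannot be contained in A
  have hTA : ¬ (trunc B A.card ⊆ A) := by
    intro hTA
    have : insert x (trunc B A.card) ⊆ A := by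
      intro y hy
      rcases Finset.mem_insert.1 hy with rfl | hy
      · exact hxA
      · exact hTA hy
    have := Finset.card_le_card this
    rw [Finset.card_insert_of_notMem hxT, hct] at this
    omega
  obtain ⟨y, hyT, hyA⟩ := Finset.not_subset.1 hTA
  have hyB : y ∈ B := trunc_subset _ _ hyT
  have h1 : x < y := hdom x hxA y hyB hyA
  have h2 : y < x := (B.sortedLT_sort).pairwise.rel_of_mem_take_of_mem_drop (mem_trunc.1 hyT) hxd
  omega

lemma prec_iff_trunc {A B : Finset ℕ} :
    Prec A B ↔ A.card < B.card ∧ A = trunc B A.card := by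
  constructor
  · rintro ⟨hsub, hcard, hdom⟩
    exact ⟨hcard, eq_trunc_of_dom hsub hdom⟩
  · rintro ⟨hcard, hA⟩
    have : Prec (trunc B A.card) (trunc B B.card) := prec_trunc (by omega) le_rfl
    rw [trunc_eq_self le_rfl] at this
    rwa [← hA] at this

/-- Extension of a set `A` with `card ≤ k` to one of card exactly `k` having `A` as
initial segment. -/
lemma exists_extension {A : Finset ℕ} {k : ℕ} (h : A.card ≤ k) :
    ∃ D : Finset ℕ, D.card = k ∧ trunc D A.card = A := by
  classical
  set M := A.sup id + 1 with hM
  set E := (Finset.range (k - A.card)).image (fun t => M + t) with hE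
  have hdisj : Disjoint A E := by
    rw [Finset.disjoint_left]
    intro x hxA hxE
    rw [hE, Finset.mem_image] at hxE
    obtain ⟨t, _, rfl⟩ := hxE
    have : M + t ≤ A.sup id := Finset.le_sup (f := id) hxA
    omega
  refine ⟨A ∪ E, ?_, ?_⟩
  · rw [Finset.card_union_of_disjoint hdisj, hE,
      Finset.card_image_of_injective _ (fun a b hab => by omega), Finset.card_range]
    omega
  · refine (eq_trunc_of_dom Finset.subset_union_left ?_).symm
    intro a ha b hb hbn
    rcases Finset.mem_union.1 hb with hbA | hbE
    · exact absurd hbA hbn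
    · rw [hE, Finset.mem_image] at hbE
      obtain ⟨t, _, rfl⟩ := hbE
      have : a ≤ A.sup id := Finset.le_sup (f := id) ha
      omega


/-! ### Dyadic heights -/

/-- Nearest point of the grid `2^{-j}ℤ`. -/
noncomputable def gridPt (j : ℕ) (r : ℝ) : ℝ := (round ((2:ℝ)^j * r) : ℝ) / 2^j

/-- Distance from `r` to the grid `2^{-j}ℤ`. -/
noncomputable def del (j : ℕ) (r : ℝ) : ℝ := |r - gridPt j r|

lemma del_nonneg (j : ℕ) (r : ℝ) : 0 ≤ del j r := abs_nonneg _

lemma abs_div_pow (j : ℕ) (r : ℝ) (n : ℤ) :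
    |r - (n:ℝ)/2^j| = |(2:ℝ)^j * r - n| / 2^j := by
  have hc : (0:ℝ) < 2^j := by positivity
  rw [eq_div_iff hc.ne', ← abs_of_pos hc, ← abs_mul]
  congr 1
  field_simp
  rw [abs_of_pos hc]

lemma del_le {j : ℕ} (r : ℝ) (n : ℤ) : del j r ≤ |r - (n:ℝ)/2^j| := by
  have hc : (0:ℝ) < 2^j := by positivity
  rw [del, gridPt, abs_div_pow, abs_div_pow]
  exact (div_le_div_iff_of_pos_right hc).mpr (round_le _ _)

lemma del_eq_zero {j : ℕ} {r : ℝ} (n : ℤ) (h : r = (n:ℝ)/2^j) : del j r = 0 := by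
  have := del_le (j := j) r n
  rw [← h, sub_self, abs_zero] at this
  exact le_antisymm this (del_nonneg _ _)

lemma del_lipschitz (j : ℕ) (r s : ℝ) : |del j r - del j s| ≤ |r - s| := by
  have h1 : del j r ≤ |r - s| + del j s := by
    calc del j r ≤ |r - gridPt j s| := by rw [gridPt]; exact del_le r _
      _ ≤ |r - s| + |s - gridPt j s| := abs_sub_le r s (gridPt j s)
      _ = |r - s| + del j s := rfl
  have h2 : del j s ≤ |r - s| + del j r := by
    calc del j s ≤ |s - gridPt j r| := by rw [gridPt]; exact del_le s _
      _ ≤ |s - r| + |r - gridPt j r| := abs_sub_le s r (gridPt j r)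
      _ = |r - s| + del j r := by rw [abs_sub_comm s r]; rfl
  rw [abs_sub_le_iff]
  constructor <;> linarith

lemma del_antitone {j j' : ℕ} (h : j ≤ j') (r : ℝ) : del j' r ≤ del j r := by
  induction j', h using Nat.le_induction with
  | base => exact le_refl _
  | succ n hn ih =>
      refine le_trans ?_ ih
      have : gridPt n r = ((2 * round ((2:ℝ)^n * r) : ℤ) : ℝ) / 2^(n+1) := by
        rw [gridPt]; push_cast; field_simp; ring
      calc del (n+1) r ≤ |r - ((2 * round ((2:ℝ)^n * r) : ℤ) : ℝ) / 2^(n+1)| := del_le r _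
        _ = del n r := by rw [← this, del]

/-! ### Bset facts -/

lemma bset_frac {m : ℕ} {r : ℝ} (h : r ∈ Bset m) :
    ∃ n : ℕ, n ≤ 2^m ∧ r = (n:ℝ)/2^m := by
  cases m with
  | zero =>
      rcases h with h | h
      · exact ⟨0, by norm_num, by rw [h]; norm_num⟩
      · exact ⟨1, by norm_num, by rw [Set.mem_singleton_iff] at h; rw [h]; norm_num⟩
  | succ m =>
      obtain ⟨i, hi1, hi2, hr⟩ := h
      refine ⟨2*i - 1, by omega, ?_⟩
      rw [hr]; congr 1
      push_cast [Nat.cast_sub (by omega : 1 ≤ 2*i)]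
      ring

lemma bset_mem_Icc {m : ℕ} {r : ℝ} (h : r ∈ Bset m) : 0 ≤ r ∧ r ≤ 1 := by
  obtain ⟨n, hn, rfl⟩ := bset_frac h
  constructor
  · positivity
  · rw [div_le_one (by positivity)]
    calc ((n:ℝ)) ≤ ((2^m : ℕ) : ℝ) := by exact_mod_cast hn
      _ = 2^m := by push_cast; ring

lemma bset_pos {m : ℕ} {r : ℝ} (h : r ∈ Bset (m+1)) : 0 < r ∧ r < 1 := by
  obtain ⟨i, hi1, hi2, hr⟩ := h
  have h1 : (1:ℝ) ≤ i := by exact_mod_cast hi1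
  have h2 : (i:ℝ) ≤ 2^m := by
    calc ((i:ℝ)) ≤ ((2^m : ℕ) : ℝ) := by exact_mod_cast hi2
      _ = 2^m := by push_cast; ring
  have hp : (0:ℝ) < 2^(m+1) := by positivity
  subst hr
  constructor
  · apply div_pos _ hp; linarith
  · rw [div_lt_one hp]
    have : (2:ℝ)^(m+1) = 2 * 2^m := by ring
    linarith [this]

lemma bset_int {m j : ℕ} {r : ℝ} (h : r ∈ Bset m) (hmj : m ≤ j) :
    ∃ n : ℤ, r = (n:ℝ)/2^j := by
  obtain ⟨n, hn, rfl⟩ := bset_frac h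
  refine ⟨(n : ℤ) * 2^(j-m), ?_⟩
  have : (2:ℝ)^j = 2^m * 2^(j-m) := by
    rw [← pow_add]; congr 1; omega
  push_cast
  rw [this]
  field_simp

lemma del_bset {m j : ℕ} {r : ℝ} (h : r ∈ Bset m) (hmj : m ≤ j) : del j r = 0 := by
  obtain ⟨n, hn⟩ := bset_int h hmj
  exact del_eq_zero n hn

lemma bset_disjoint {m m' : ℕ} {r : ℝ} (h : r ∈ Bset m) (h' : r ∈ Bset m') : m = m' := by
  -- main tool: distinct levels give distinct parities
  have key : ∀ a b : ℕ, a < b → r ∈ Bset a → r ∈ Bset b → False := by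
    intro a b hab ha hb
    cases a with
    | zero =>
        have := bset_pos (m := b - 1) (by
          have : b = (b-1)+1 := by omega
          rw [← this]; exact hb)
        rcases ha with h0 | h0
        · rw [h0] at this; exact lt_irrefl _ this.1
        · rw [Set.mem_singleton_iff] at h0; rw [h0] at this; exact lt_irrefl _ this.2
    | succ a' =>
        cases b with
        | zero => omega
        | succ b' =>
            obtain ⟨i, hi1, hi2, hri⟩ := ha
            obtain ⟨i', hi1', hi2', hri'⟩ := hb
            -- (2i-1) * 2^(b'-a') = 2i'-1 : parity contradiction
            have hb'a' : a' < b' := by omega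
            have hpow : (2:ℝ)^(b'+1) = 2^(a'+1) * 2^(b'-a') := by
              rw [← pow_add]; congr 1; omega
            have heq : (2 * (i:ℝ) - 1) * 2^(b'-a') = 2 * (i':ℝ) - 1 := by
              have h2 : (0:ℝ) < 2^(a'+1) := by positivity
              have h3 : (0:ℝ) < 2^(b'+1) := by positivity
              rw [hri] at hri'
              field_simp at hri'
              rw [hpow] at hri'
              nlinarith [hri']
            -- transfer to ℕ
            have heqn : (2 * i - 1) * 2^(b'-a') = 2 * i' - 1 := by
              have : ((2 * i - 1) * 2^(b'-a') : ℕ) = ((2 * i' - 1 : ℕ) : ℕ) := by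
                apply Nat.cast_injective (R := ℝ)
                push_cast [Nat.cast_sub (by omega : 1 ≤ 2*i), Nat.cast_sub (by omega : 1 ≤ 2*i')]
                convert heq using 2
              exact this
            have hd : b' - a' ≥ 1 := by omega
            have : 2 ∣ (2 * i - 1) * 2^(b'-a') := by
              exact Dvd.dvd.mul_left (dvd_pow_self 2 (by omega)) _
            rw [heqn] at this
            omega
  rcases lt_trichotomy m m' with h1 | h1 | h1
  · exact (key m m' h1 h h').elim
  · exact h1
  · exact (key m' m h1 h' h).elim

/-! ### The level of a dyadic index -/

/-- The level of the dyadic number `i/2^k`. -/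
def lv (k i : ℕ) : ℕ := if i = 0 ∨ i = 2^k then 0 else k - padicValNat 2 i

lemma lv_le (k i : ℕ) : lv k i ≤ k := by
  rw [lv]; split <;> omega

lemma lv_mem {k i : ℕ} (hi : i ≤ 2^k) : ((i:ℝ)/2^k) ∈ Bset (lv k i) := by
  rcases eq_or_ne i 0 with rfl | h0
  · simp [lv, Bset]
  rcases eq_or_ne i (2^k) with rfl | h1
  · have : ((2^k : ℕ) : ℝ)/2^k = 1 := by
      push_cast; field_simp
    rw [this, lv]
    simp [Bset]
  have hlt : i < 2^k := by omega
  obtain ⟨v, hv⟩ : ∃ v, v = padicValNat 2 i := ⟨_, rfl⟩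
  have hdvd : 2^v ∣ i := by rw [hv]; exact pow_padicValNat_dvd
  obtain ⟨o, ho⟩ : ∃ o, o = i / 2^v := ⟨_, rfl⟩
  have hio : i = 2^v * o := by rw [ho]; exact (Nat.mul_div_cancel' hdvd).symm
  have hone : ¬ 2 ∣ o := by
    intro hdo
    have : 2^(v+1) ∣ i := by
      obtain ⟨t, ht⟩ := hdo
      exact ⟨t, by rw [hio, ht]; ring⟩
    rw [padicValNat_dvd_iff_le h0, ← hv] at this
    omega
  have ho1 : 1 ≤ o := by
    rcases Nat.eq_zero_or_pos o with h | h
    · rw [h] at hio; omega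
    · exact h
  have hvk : v < k := by
    have h2v : 2^v ≤ i := Nat.le_of_dvd (by omega) hdvd
    have := h2v.trans_lt hlt
    exact (Nat.pow_lt_pow_iff_right (by omega)).1 this
  have holt : o < 2^(k-v) := by
    have : 2^v * o < 2^v * 2^(k-v) := by
      rw [← pow_add]
      have : v + (k - v) = k := by omega
      rw [this, ← hio]; exact hlt
    exact lt_of_mul_lt_mul_left this (Nat.zero_le _)
  -- lv k i = k - v = (k-v-1)+1
  have hlv : lv k i = (k - v - 1) + 1 := by
    rw [lv, if_neg (by push_neg; exact ⟨h0, h1⟩), ← hv]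
    omega
  rw [hlv]
  have hsplit : 2^(k-v) = 2 * 2^(k-v-1) := by
    rw [← pow_succ']
    congr 1
    omega
  -- o = 2 i' - 1
  refine ⟨(o+1)/2, by omega, by omega, ?_⟩
  have hcast : (o : ℝ) = 2 * (((o+1)/2 : ℕ) : ℝ) - 1 := by
    have h1' : o + 1 = 2 * ((o+1)/2) := by omega
    have := congrArg (Nat.cast (R := ℝ)) h1'
    push_cast at this
    linarith
  rw [← hcast]
  have hpowk : (2:ℝ)^k = 2^v * 2^(k-v-1+1) := by
    rw [← pow_add]; congr 1; omega
  rw [hio]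
  push_cast
  rw [hpowk]
  have h2v : (0:ℝ) < 2^v := by positivity
  field_simp

lemma lv_eq {k m i : ℕ} (hi : i ≤ 2^k) (h : ((i:ℝ)/2^k) ∈ Bset m) : lv k i = m :=
  bset_disjoint (lv_mem hi) h

lemma lv_odd {k i : ℕ} (hk : 1 ≤ k) (h : ¬ 2 ∣ i) (hi : i ≤ 2^k) : lv k i = k := by
  have h0 : i ≠ 0 := by rintro rfl; exact h ⟨0, rfl⟩
  have h1 : i ≠ 2^k := by
    rintro rfl
    exact h (dvd_pow_self 2 (by omega))
  rw [lv, if_neg (by push_neg; exact ⟨h0, h1⟩), padicValNat.eq_zero_of_not_dvd h]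
  omega

lemma lv_even {k i : ℕ} (hk : 1 ≤ k) (h : 2 ∣ i) (hi : i ≤ 2^k) : lv k i < k := by
  rcases eq_or_ne i 0 with rfl | h0
  · rw [lv]; simp; omega
  rcases eq_or_ne i (2^k) with rfl | h1
  · rw [lv]; simp; omega
  have : 1 ≤ padicValNat 2 i := one_le_padicValNat_of_dvd (by omega) h
  rw [lv, if_neg (by push_neg; exact ⟨h0, h1⟩)]
  omega

lemma lv_le_of_dvd {k c i : ℕ} (hc : c ≤ k) (hd : 2^(k-c) ∣ i) : lv k i ≤ c := by
  rcases eq_or_ne i 0 with rfl | h0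
  · rw [lv]; simp
  have : k - c ≤ padicValNat 2 i := (padicValNat_dvd_iff_le h0).1 hd
  rw [lv]; split <;> omega

/-- Canonical vertex at dyadic index `i` along the chain of initial segments of `D`. -/
noncomputable def wv (k : ℕ) (D : Finset ℕ) (i : ℕ) (hD : k ≤ D.card) (hi : i ≤ 2^k) : Vert k :=
  ⟨(trunc D (lv k i), (i:ℝ)/2^k),
    ⟨by rw [card_trunc]; exact le_trans (min_le_left _ _) (lv_le _ _), by
      rw [card_trunc_of_le ((lv_le k i).trans hD)]
      exact lv_mem hi⟩⟩

lemma vert_eq_wv {k : ℕ} (x : Vert k) (D : Finset ℕ) (hD : k ≤ D.card) {i : ℕ}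
    (hi : i ≤ 2^k) (hset : trunc D x.1.1.card = x.1.1) (hht : x.1.2 = (i:ℝ)/2^k) :
    x = wv k D i hD hi := by
  have hlv : lv k i = x.1.1.card := lv_eq hi (hht ▸ x.2.2)
  apply Subtype.ext
  apply Prod.ext
  · show x.1.1 = trunc D (lv k i)
    rw [hlv, hset]
  · exact hht

lemma wv_adj {k : ℕ} (hk : 1 ≤ k) (D : Finset ℕ) (hD : k ≤ D.card) {i : ℕ}
    (hi : i + 1 ≤ 2^k) :
    (Gk k).Adj (wv k D i hD (by omega)) (wv k D (i+1) hD hi) := by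
  constructor
  · rcases Nat.even_or_odd i with he | ho
    · have h1 : lv k i < k := lv_even hk he.two_dvd (by omega)
      have h2 : lv k (i+1) = k := lv_odd hk (by
        rcases he with ⟨t, ht⟩; omega) hi
      left
      show Prec (trunc D (lv k i)) (trunc D (lv k (i+1)))
      rw [h2]
      exact prec_trunc h1 hD
    · have h1 : lv k i = k := lv_odd hk (by rcases ho with ⟨t, ht⟩; omega) (by omega)
      have h2 : lv k (i+1) < k := lv_even hk (by rcases ho with ⟨t, ht⟩; omega) hi
      right
      show Prec (trunc D (lv k (i+1))) (trunc D (lv k i))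
      rw [h1]
      exact prec_trunc h2 hD
  · show |(i:ℝ)/2^k - ((i+1:ℕ):ℝ)/2^k| = (1/2:ℝ)^k
    have hp : (0:ℝ) < 2^k := by positivity
    have : (i:ℝ)/2^k - ((i+1:ℕ):ℝ)/2^k = -(1/2^k) := by push_cast; field_simp; ring
    rw [this, abs_neg, abs_of_pos (by positivity), div_pow, one_pow]

lemma walk_exists {k : ℕ} (hk : 1 ≤ k) (D : Finset ℕ) (hD : k ≤ D.card) {i j : ℕ}
    (hij : i ≤ j) (hj : j ≤ 2^k) :
    ∃ w : (Gk k).Walk (wv k D i hD (by omega)) (wv k D j hD hj), w.length = j - i := by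
  induction j, hij using Nat.le_induction with
  | base => exact ⟨SimpleGraph.Walk.nil, by simp⟩
  | succ n hn ih =>
      obtain ⟨w, hw⟩ := ih (by omega)
      exact ⟨w.concat (wv_adj hk D hD hj), by
        rw [SimpleGraph.Walk.length_concat, hw]; omega⟩

/-- A walk between two canonical vertices, in either direction. -/
lemma walk_exists' {k : ℕ} (hk : 1 ≤ k) (D : Finset ℕ) (hD : k ≤ D.card) {i j : ℕ}
    (hi : i ≤ 2^k) (hj : j ≤ 2^k) :
    ∃ w : (Gk k).Walk (wv k D i hD hi) (wv k D j hD hj), w.length = (j - i) + (i - j) := by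
  rcases le_total i j with h | h
  · obtain ⟨w, hw⟩ := walk_exists hk D hD h hj
    exact ⟨w, by omega⟩
  · obtain ⟨w, hw⟩ := walk_exists hk D hD h hi
    exact ⟨w.reverse, by rw [SimpleGraph.Walk.length_reverse]; omega⟩

lemma natdiff_cast (i j : ℕ) : (((j - i) + (i - j) : ℕ) : ℝ) = |(i:ℝ) - j| := by
  rcases le_total i j with h | h
  · have h1 : i - j = 0 := by omega
    have h2 : ((j - i : ℕ) : ℝ) = (j:ℝ) - i := by
      push_cast [Nat.cast_sub h]; ring
    rw [h1, Nat.add_zero, h2, abs_of_nonpos (by simp; exact_mod_cast h)]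
    ring
  · have h1 : j - i = 0 := by omega
    have h2 : ((i - j : ℕ) : ℝ) = (i:ℝ) - j := by
      push_cast [Nat.cast_sub h]; ring
    rw [h1, Nat.zero_add, h2, abs_of_nonneg (by simp; exact_mod_cast h)]

lemma abs_idx_div (k i j : ℕ) : |(i:ℝ) - j| = 2^k * |(i:ℝ)/2^k - (j:ℝ)/2^k| := by
  have hp : (0:ℝ) < 2^k := by positivity
  have h1 : (i:ℝ)/2^k - (j:ℝ)/2^k = ((i:ℝ) - j)/2^k := by ring
  rw [h1, abs_div, abs_of_pos hp]
  field_simp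

lemma vert_idx {k : ℕ} (x : Vert k) : ∃ i : ℕ, i ≤ 2^k ∧ x.1.2 = (i:ℝ)/2^k := by
  obtain ⟨n, hn, hr⟩ := bset_frac x.2.2
  have hm : x.1.1.card ≤ k := x.2.1
  refine ⟨n * 2^(k - x.1.1.card), ?_, ?_⟩
  · calc n * 2^(k - x.1.1.card) ≤ 2^(x.1.1.card) * 2^(k - x.1.1.card) :=
        Nat.mul_le_mul_right _ hn
      _ = 2^k := by rw [← pow_add]; congr 1; omega
  · rw [hr]
    have hsplit : (2:ℝ)^k = 2^(x.1.1.card) * 2^(k - x.1.1.card) := by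
      rw [← pow_add]; congr 1; omega
    push_cast
    rw [hsplit]
    have : ((2:ℝ)^(x.1.1.card)) ≠ 0 := by positivity
    have : ((2:ℝ)^(k - x.1.1.card)) ≠ 0 := by positivity
    field_simp

/-- Distance upper bound for comparable vertices. -/
lemma dist_le_comparable {k : ℕ} (hk : 1 ≤ k) (x y : Vert k)
    (hcard : x.1.1.card ≤ y.1.1.card) (hcomp : trunc y.1.1 x.1.1.card = x.1.1) :
    (Gk k).Reachable x y ∧ ((Gk k).dist x y : ℝ) ≤ 2^k * |x.1.2 - y.1.2| := by
  obtain ⟨D, hD, hTD⟩ := exists_extension y.2.1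
  obtain ⟨ix, hix, hhx⟩ := vert_idx x
  obtain ⟨iy, hiy, hhy⟩ := vert_idx y
  have hDx : trunc D x.1.1.card = x.1.1 := by
    rw [← trunc_trunc D hcard, hTD, hcomp]
  have hxw : x = wv k D ix hD.ge hix := vert_eq_wv x D hD.ge hix hDx hhx
  have hyw : y = wv k D iy hD.ge hiy := vert_eq_wv y D hD.ge hiy hTD hhy
  obtain ⟨w, hw⟩ := walk_exists' hk D hD.ge hix hiy
  constructor
  · rw [hxw, hyw]; exact ⟨w⟩
  · have hdle : (Gk k).dist x y ≤ (iy - ix) + (ix - iy) := by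
      rw [hxw, hyw, ← hw]
      exact SimpleGraph.dist_le w
    calc ((Gk k).dist x y : ℝ) ≤ (((iy - ix) + (ix - iy) : ℕ) : ℝ) := by exact_mod_cast hdle
      _ = |(ix:ℝ) - iy| := natdiff_cast ix iy
      _ = 2^k * |x.1.2 - y.1.2| := by rw [abs_idx_div k ix iy, hhx, hhy]

/-- Distance upper bound for vertices with a common prefix of length `c`. -/
lemma dist_le_incomp {k c : ℕ} (hk : 1 ≤ k) (x y : Vert k)
    (hcx : c ≤ x.1.1.card) (hcy : c ≤ y.1.1.card)
    (hcommon : trunc x.1.1 c = trunc y.1.1 c) :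
    (Gk k).Reachable x y ∧
      ((Gk k).dist x y : ℝ) ≤ 2^k * (2 * del c x.1.2 + |x.1.2 - y.1.2|) := by
  have hck : c ≤ k := hcx.trans x.2.1
  have hrx01 := bset_mem_Icc x.2.2
  -- the nearest grid point below level c
  have hrnn : (0:ℤ) ≤ round ((2:ℝ)^c * x.1.2) := by
    rw [round_eq]
    refine Int.floor_nonneg.2 ?_
    nlinarith [hrx01.1, (by positivity : (0:ℝ) ≤ (2:ℝ)^c)]
  have hrle : round ((2:ℝ)^c * x.1.2) ≤ 2^c := by
    rw [round_eq, Int.floor_le_iff]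
    push_cast
    nlinarith [hrx01.2, (by positivity : (0:ℝ) < (2:ℝ)^c)]
  obtain ⟨n, hn⟩ : ∃ n : ℕ, (n : ℤ) = round ((2:ℝ)^c * x.1.2) :=
    ⟨(round ((2:ℝ)^c * x.1.2)).toNat, Int.toNat_of_nonneg hrnn⟩
  have hnle : n ≤ 2^c := by exact_mod_cast hn ▸ hrle
  set it := n * 2^(k-c) with hit_def
  have hit : it ≤ 2^k := by
    calc it ≤ 2^c * 2^(k-c) := Nat.mul_le_mul_right _ hnle
      _ = 2^k := by rw [← pow_add]; congr 1; omega
  have hgrid : ((it:ℕ):ℝ)/2^k = gridPt c x.1.2 := by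
    rw [gridPt, ← hn, hit_def]
    have hsplit : (2:ℝ)^k = 2^c * 2^(k-c) := by rw [← pow_add]; congr 1; omega
    push_cast
    rw [hsplit]
    field_simp
  -- extensions
  obtain ⟨DX, hDX, hTX⟩ := exists_extension x.2.1
  obtain ⟨DY, hDY, hTY⟩ := exists_extension y.2.1
  obtain ⟨ix, hix, hhx⟩ := vert_idx x
  obtain ⟨iy, hiy, hhy⟩ := vert_idx y
  have hxw : x = wv k DX ix hDX.ge hix := vert_eq_wv x DX hDX.ge hix hTX hhx
  have hyw : y = wv k DY iy hDY.ge hiy := vert_eq_wv y DY hDY.ge hiy hTY hhy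
  -- the middle vertex agrees for both extensions
  have hlvit : lv k it ≤ c := lv_le_of_dvd hck ⟨n, mul_comm _ _⟩
  have hpref : ∀ j, j ≤ c → trunc DX j = trunc DY j := by
    intro j hj
    calc trunc DX j = trunc (trunc DX x.1.1.card) j := (trunc_trunc DX (hj.trans hcx)).symm
      _ = trunc (trunc x.1.1 c) j := by rw [hTX, ← trunc_trunc x.1.1 hj]
      _ = trunc (trunc y.1.1 c) j := by rw [hcommon]
      _ = trunc (trunc DY y.1.1.card) j := by rw [hTY, ← trunc_trunc y.1.1 hj]
      _ = trunc DY j := trunc_trunc DY (hj.trans hcy)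
  have hmid : wv k DX it hDX.ge hit = wv k DY it hDY.ge hit := by
    apply Subtype.ext
    apply Prod.ext
    · exact hpref _ hlvit
    · rfl
  obtain ⟨w1, hw1⟩ := walk_exists' hk DX hDX.ge hix hit
  obtain ⟨w2, hw2⟩ := walk_exists' hk DY hDY.ge hit hiy
  let w2' : (Gk k).Walk (wv k DX it hDX.ge hit) (wv k DY iy hDY.ge hiy) :=
    w2.copy hmid.symm rfl
  have hw2' : w2'.length = (iy - it) + (it - iy) := by
    show (w2.copy hmid.symm rfl).length = _
    rw [SimpleGraph.Walk.length_copy]; exact hw2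
  constructor
  · rw [hxw, hyw]; exact ⟨w1.append w2'⟩
  · have hdle : (Gk k).dist x y ≤ ((it - ix) + (ix - it)) + ((iy - it) + (it - iy)) := by
      rw [hxw, hyw]
      refine le_trans (SimpleGraph.dist_le (w1.append w2')) ?_
      rw [SimpleGraph.Walk.length_append, hw1, hw2']
    have hd1 : (((it - ix) + (ix - it) : ℕ) : ℝ) = 2^k * del c x.1.2 := by
      rw [natdiff_cast ix it]
      rw [abs_idx_div k ix it, ← hhx, hgrid]
      rfl
    have hd2 : (((iy - it) + (it - iy) : ℕ) : ℝ) ≤ 2^k * (del c x.1.2 + |x.1.2 - y.1.2|) := by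
      rw [natdiff_cast it iy, abs_idx_div k it iy, ← hhy, hgrid]
      have htri : |gridPt c x.1.2 - y.1.2| ≤ del c x.1.2 + |x.1.2 - y.1.2| := by
        calc |gridPt c x.1.2 - y.1.2| ≤ |gridPt c x.1.2 - x.1.2| + |x.1.2 - y.1.2| :=
            abs_sub_le _ _ _
          _ = del c x.1.2 + |x.1.2 - y.1.2| := by rw [abs_sub_comm]; rfl
      have hp : (0:ℝ) < 2^k := by positivity
      nlinarith [htri]
    calc ((Gk k).dist x y : ℝ)
        ≤ (((it - ix) + (ix - it) : ℕ) : ℝ) + (((iy - it) + (it - iy) : ℕ) : ℝ) := by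
          exact_mod_cast hdle
      _ ≤ 2^k * del c x.1.2 + 2^k * (del c x.1.2 + |x.1.2 - y.1.2|) := by
          rw [hd1]; exact add_le_add_right hd2 _
      _ = 2^k * (2 * del c x.1.2 + |x.1.2 - y.1.2|) := by ring

/-! ### Lower bounds on the distance -/

lemma walk_height {k : ℕ} {x y : Vert k} (w : (Gk k).Walk x y) :
    |x.1.2 - y.1.2| ≤ w.length * (1/2:ℝ)^k := by
  induction w with
  | nil => simp
  | @cons u v z h p ih =>
      have h1 : |u.1.2 - v.1.2| = (1/2:ℝ)^k := h.2
      calc |u.1.2 - z.1.2| ≤ |u.1.2 - v.1.2| + |v.1.2 - z.1.2| := abs_sub_le _ _ _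
        _ ≤ (1/2:ℝ)^k + p.length * (1/2:ℝ)^k := by rw [h1]; exact add_le_add_right ih _
        _ = (SimpleGraph.Walk.cons h p).length * (1/2:ℝ)^k := by
            rw [SimpleGraph.Walk.length_cons]
            push_cast
            ring

lemma dist_ge_height {k : ℕ} {x y : Vert k} (hr : (Gk k).Reachable x y) :
    2^k * |x.1.2 - y.1.2| ≤ ((Gk k).dist x y : ℝ) := by
  obtain ⟨w, hw⟩ := hr.exists_walk_length_eq_dist
  have := walk_height w
  rw [hw] at this
  have hp : (0:ℝ) < 2^k := by positivity
  have h12 : ((1:ℝ)/2)^k = (2^k)⁻¹ := by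
    rw [div_pow, one_pow, inv_eq_one_div]
  rw [h12] at this
  have h2 := mul_le_mul_of_nonneg_left this hp.le
  have heq : (2:ℝ)^k * (((Gk k).dist x y : ℝ) * (2^k)⁻¹) = ((Gk k).dist x y : ℝ) := by
    field_simp
  linarith

lemma exists_low_vertex {k c : ℕ} (P : Finset ℕ) (hP : P.card = c+1) :
    ∀ {x y : Vert k} (w : (Gk k).Walk x y), trunc x.1.1 (c+1) = P →
      trunc y.1.1 (c+1) ≠ P → ∃ v ∈ w.support, v.1.1.card ≤ c := by
  intro x y w
  induction w with
  | nil => intro hx hy; exact absurd hx hy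
  | @cons u v z h p ih =>
      intro hx hy
      by_cases hc : v.1.1.card ≤ c
      · exact ⟨v, by
          rw [SimpleGraph.Walk.support_cons]
          exact List.mem_cons_of_mem _ p.start_mem_support, hc⟩
      · have hcu : c + 1 ≤ u.1.1.card := by
          by_contra h'
          rw [trunc_eq_self (by omega)] at hx
          rw [← hx] at hP
          omega
        have hv : trunc v.1.1 (c+1) = P := by
          rcases h.1 with hp1 | hp1
          · obtain ⟨hclt, heq⟩ := prec_iff_trunc.1 hp1
            rw [heq, trunc_trunc _ hcu] at hx
            exact hx
          · obtain ⟨hclt, heq⟩ := prec_iff_trunc.1 hp1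
            rw [heq, trunc_trunc _ (by omega : c + 1 ≤ v.1.1.card)]
            exact hx
        obtain ⟨v0, hv0, hc0⟩ := ih hv hy
        exact ⟨v0, by
          rw [SimpleGraph.Walk.support_cons]
          exact List.mem_cons_of_mem _ hv0, hc0⟩

lemma dist_ge_incomp {k c : ℕ} {x y : Vert k} (hr : (Gk k).Reachable x y)
    (hcx : c + 1 ≤ x.1.1.card) (hcy : c + 1 ≤ y.1.1.card)
    (hne : trunc x.1.1 (c+1) ≠ trunc y.1.1 (c+1)) :
    2^k * (del c x.1.2 + del c y.1.2) ≤ ((Gk k).dist x y : ℝ) := by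
  classical
  obtain ⟨w, hw⟩ := hr.exists_walk_length_eq_dist
  obtain ⟨v, hv, hvc⟩ := exists_low_vertex (trunc x.1.1 (c+1)) (card_trunc_of_le hcx) w
    rfl (Ne.symm hne)
  obtain ⟨nz, hnz⟩ := bset_int v.2.2 hvc
  have h1 : del c x.1.2 ≤ |x.1.2 - v.1.2| := by
    rw [hnz]; exact del_le _ nz
  have h2 : del c y.1.2 ≤ |v.1.2 - y.1.2| := by
    rw [abs_sub_comm, hnz]; exact del_le _ nz
  have hlen : ((w.takeUntil v hv).length : ℝ) + ((w.dropUntil v hv).length : ℝ)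
      = (w.length : ℝ) := by
    have := congrArg SimpleGraph.Walk.length (w.take_spec hv)
    rw [SimpleGraph.Walk.length_append] at this
    exact_mod_cast this
  have hh1 := walk_height (w.takeUntil v hv)
  have hh2 := walk_height (w.dropUntil v hv)
  have hp : (0:ℝ) < 2^k := by positivity
  have hhalf : ((1:ℝ)/2)^k * 2^k = 1 := by
    rw [div_pow, one_pow]; field_simp
  have hfin : del c x.1.2 + del c y.1.2 ≤ (w.length : ℝ) * (1/2:ℝ)^k := by
    calc del c x.1.2 + del c y.1.2 ≤ |x.1.2 - v.1.2| + |v.1.2 - y.1.2| := add_le_add h1 h2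
      _ ≤ ((w.takeUntil v hv).length : ℝ) * (1/2:ℝ)^k
          + ((w.dropUntil v hv).length : ℝ) * (1/2:ℝ)^k := add_le_add hh1 hh2
      _ = (((w.takeUntil v hv).length : ℝ) + ((w.dropUntil v hv).length : ℝ)) * (1/2:ℝ)^k := by
          ring
      _ = (w.length : ℝ) * (1/2:ℝ)^k := by rw [hlen]
  rw [← hw]
  calc 2^k * (del c x.1.2 + del c y.1.2) ≤ 2^k * ((w.length : ℝ) * (1/2:ℝ)^k) :=
      mul_le_mul_of_nonneg_left hfin hp.le
    _ = (w.length : ℝ) * ((1/2:ℝ)^k * 2^k) := by ring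
    _ = (w.length : ℝ) := by rw [hhalf, mul_one]

/-! ### The embedding into `ℓ_p` -/

section Lp

variable (p : ℝ≥0∞)

/-- Coordinate index of the `j`-th component of a vertex with branch set `A`. -/
def cIx (A : Finset ℕ) : ℕ → ℕ
  | 0 => 0
  | (j+1) => Encodable.encode (trunc A (j+1)) + 1

/-- Coordinate value of the `j`-th component of a vertex at height `r`. -/
noncomputable def cVal (r : ℝ) : ℕ → ℝ
  | 0 => r
  | (j+1) => del j r

/-- The embedding map. -/
noncomputable def Fm (A : Finset ℕ) (r : ℝ) : lp (fun _ : ℕ => ℝ) p :=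
  ∑ j ∈ Finset.range (A.card + 1), lp.single p (cIx A j) (cVal r j)

lemma cIx_eq {A B : Finset ℕ} {j1 j2 : ℕ} (h1 : j1 ≤ A.card) (h2 : j2 ≤ B.card)
    (h : cIx A j1 = cIx B j2) : j1 = j2 ∧ (1 ≤ j1 → trunc A j1 = trunc B j2) := by
  match j1, j2 with
  | 0, 0 => exact ⟨rfl, by omega⟩
  | 0, (b+1) => simp [cIx] at h
  | (a+1), 0 => simp [cIx] at h
  | (a+1), (b+1) =>
      simp only [cIx, Nat.add_right_cancel_iff] at h
      have ht : trunc A (a+1) = trunc B (b+1) := Encodable.encode_injective h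
      have hc : a + 1 = b + 1 := by
        have := congrArg Finset.card ht
        rwa [card_trunc_of_le h1, card_trunc_of_le h2] at this
      exact ⟨hc, fun _ => hc ▸ ht⟩

lemma lp_single_sub (i : ℕ) (a b : ℝ) :
    lp.single (E := fun _ : ℕ => ℝ) p i (a - b)
      = lp.single (E := fun _ : ℕ => ℝ) p i a - lp.single (E := fun _ : ℕ => ℝ) p i b := by
  apply lp.ext
  funext n
  rw [lp.coeFn_sub, Pi.sub_apply]
  rcases eq_or_ne n i with rfl | hne
  · rw [lp.single_apply_self, lp.single_apply_self, lp.single_apply_self]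
  · rw [lp.single_apply_ne p i _ hne, lp.single_apply_ne p i _ hne,
      lp.single_apply_ne p i _ hne, sub_zero]

/-- Norm formula for sums of `lp.single` with injectively mapped indices. -/
lemma norm_sum_single' {ι : Type*} (hq : 0 < p.toReal) (s : Finset ι) (g : ι → ℕ)
    (a : ι → ℝ) (hg : Set.InjOn g s) :
    ‖∑ i ∈ s, lp.single (E := fun _ : ℕ => ℝ) p (g i) (a i)‖ ^ p.toReal
      = ∑ i ∈ s, |a i| ^ p.toReal := by
  classical
  set b : ℕ → ℝ := fun n => ∑ i ∈ s.filter (fun i => g i = n), a i with hb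
  have hbg : ∀ i ∈ s, b (g i) = a i := by
    intro i hi
    rw [hb]
    refine Finset.sum_eq_single_of_mem i (Finset.mem_filter.2 ⟨hi, rfl⟩) ?_
    intro j hj hne
    obtain ⟨hjs, hje⟩ := Finset.mem_filter.1 hj
    exact absurd (hg hjs hi hje) hne
  have hinj : Set.InjOn g s := hg
  have hsum : ∑ i ∈ s, lp.single (E := fun _ : ℕ => ℝ) p (g i) (a i)
      = ∑ n ∈ s.image g, lp.single (E := fun _ : ℕ => ℝ) p n (b n) := by
    rw [Finset.sum_image (fun x hx y hy h => hinj hx hy h)]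
    exact Finset.sum_congr rfl fun i hi => by rw [hbg i hi]
  rw [hsum, lp.norm_sum_single hq, Finset.sum_image (fun x hx y hy h => hinj hx hy h)]
  refine Finset.sum_congr rfl fun i hi => ?_
  rw [hbg i hi, Real.norm_eq_abs]

/-- The key norm identity for differences of embedded vertices. -/
lemma norm_Fm_diff {k : ℕ} (hq : 0 < p.toReal) (x y : Vert k) (c : ℕ)
    (hcx : c ≤ x.1.1.card) (hcy : c ≤ y.1.1.card)
    (hcom : trunc x.1.1 c = trunc y.1.1 c)
    (hmax : ∀ j, c < j → j ≤ x.1.1.card → j ≤ y.1.1.card →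
      trunc x.1.1 j ≠ trunc y.1.1 j) :
    ‖Fm p x.1.1 x.1.2 - Fm p y.1.1 y.1.2‖ ^ p.toReal =
      ((∑ j ∈ Finset.range (c+1), |cVal x.1.2 j - cVal y.1.2 j| ^ p.toReal)
      + ∑ j ∈ Finset.Ico (c+1) (x.1.1.card+1), |cVal x.1.2 j| ^ p.toReal)
      + ∑ j ∈ Finset.Ico (c+1) (y.1.1.card+1), |cVal y.1.2 j| ^ p.toReal := by
  classical
  obtain ⟨⟨A, rx⟩, hvx⟩ := x
  obtain ⟨⟨B, ry⟩, hvy⟩ := y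
  simp only at hcx hcy hcom hmax ⊢
  have hIxeq : ∀ j, j ≤ c → cIx A j = cIx B j := by
    intro j hj
    match j with
    | 0 => rfl
    | (j+1) =>
        show Encodable.encode (trunc A (j+1)) + 1 = Encodable.encode (trunc B (j+1)) + 1
        congr 2
        calc trunc A (j+1) = trunc (trunc A c) (j+1) := (trunc_trunc A hj).symm
          _ = trunc (trunc B c) (j+1) := by rw [hcom]
          _ = trunc B (j+1) := trunc_trunc B hj
  -- the three groups as a single disjoint-sum
  set S : Finset (ℕ ⊕ (ℕ ⊕ ℕ)) :=
    (Finset.range (c+1)).disjSum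
      ((Finset.Ico (c+1) (A.card+1)).disjSum (Finset.Ico (c+1) (B.card+1))) with hS
  set g : ℕ ⊕ (ℕ ⊕ ℕ) → ℕ := Sum.elim (cIx A) (Sum.elim (cIx A) (cIx B)) with hg
  set av : ℕ ⊕ (ℕ ⊕ ℕ) → ℝ :=
    Sum.elim (fun j => cVal rx j - cVal ry j)
      (Sum.elim (fun j => cVal rx j) (fun j => -cVal ry j)) with hav
  have hsplit : Fm p A rx - Fm p B ry
      = ∑ i ∈ S, lp.single (E := fun _ : ℕ => ℝ) p (g i) (av i) := by
    rw [hS, Finset.sum_disjSum, Finset.sum_disjSum]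
    simp only [hg, hav, Sum.elim_inl, Sum.elim_inr]
    have hx1 : Fm p A rx
        = (∑ j ∈ Finset.range (c+1), lp.single (E := fun _ : ℕ => ℝ) p (cIx A j) (cVal rx j))
          + ∑ j ∈ Finset.Ico (c+1) (A.card+1),
              lp.single (E := fun _ : ℕ => ℝ) p (cIx A j) (cVal rx j) := by
      rw [Fm, Finset.range_eq_Ico, ← Finset.sum_Ico_consecutive _ (Nat.zero_le (c+1))
        (by omega : c+1 ≤ A.card+1), ← Finset.range_eq_Ico]
    have hy1 : Fm p B ry
        = (∑ j ∈ Finset.range (c+1), lp.single (E := fun _ : ℕ => ℝ) p (cIx A j) (cVal ry j))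
          + ∑ j ∈ Finset.Ico (c+1) (B.card+1),
              lp.single (E := fun _ : ℕ => ℝ) p (cIx B j) (cVal ry j) := by
      rw [Fm, Finset.range_eq_Ico, ← Finset.sum_Ico_consecutive _ (Nat.zero_le (c+1))
        (by omega : c+1 ≤ B.card+1), ← Finset.range_eq_Ico]
      congr 1
      refine Finset.sum_congr rfl fun j hj => ?_
      rw [hIxeq j (by simp [Finset.mem_Ico] at hj; omega)]
    rw [hx1, hy1]
    have hmid : ∑ j ∈ Finset.range (c+1), lp.single (E := fun _ : ℕ => ℝ) p (cIx A j) (cVal rx j)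
        - ∑ j ∈ Finset.range (c+1), lp.single (E := fun _ : ℕ => ℝ) p (cIx A j) (cVal ry j)
        = ∑ j ∈ Finset.range (c+1),
            lp.single (E := fun _ : ℕ => ℝ) p (cIx A j) (cVal rx j - cVal ry j) := by
      rw [← Finset.sum_sub_distrib]
      exact Finset.sum_congr rfl fun j _ => (lp_single_sub p _ _ _).symm
    have hneg : ∑ j ∈ Finset.Ico (c+1) (B.card+1),
        lp.single (E := fun _ : ℕ => ℝ) p (cIx B j) (-cVal ry j)
        = - ∑ j ∈ Finset.Ico (c+1) (B.card+1),
            lp.single (E := fun _ : ℕ => ℝ) p (cIx B j) (cVal ry j) := by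
      rw [← Finset.sum_neg_distrib]
      exact Finset.sum_congr rfl fun j _ => lp.single_neg p _ _
    rw [hneg, ← hmid]
    abel
  rw [hsplit]
  have hinj : Set.InjOn g S := by
    intro i hi j hj hgij
    rw [hS] at hi hj
    rcases i with a | b | e <;> rcases j with a' | b' | e' <;>
      simp only [hg, Sum.elim_inl, Sum.elim_inr, Finset.mem_coe,
        Finset.inl_mem_disjSum, Finset.inr_mem_disjSum, Finset.mem_range,
        Finset.mem_Ico] at hi hj hgij ⊢
    · obtain ⟨he, -⟩ := cIx_eq (by omega) (by omega : a' ≤ A.card) hgij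
      rw [he]
    · obtain ⟨he, -⟩ := cIx_eq (by omega) (by omega : b' ≤ A.card) hgij
      omega
    · obtain ⟨he, -⟩ := cIx_eq (by omega) (by omega : e' ≤ B.card) hgij
      omega
    · obtain ⟨he, -⟩ := cIx_eq (by omega : b ≤ A.card) (by omega) hgij
      omega
    · obtain ⟨he, -⟩ := cIx_eq (by omega : b ≤ A.card) (by omega : b' ≤ A.card) hgij
      rw [he]
    · obtain ⟨he, ht⟩ := cIx_eq (by omega : b ≤ A.card) (by omega : e' ≤ B.card) hgij
      subst he
      exact absurd (ht (by omega)) (hmax b (by omega) (by omega) (by omega))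
    · obtain ⟨he, -⟩ := cIx_eq (by omega : e ≤ B.card) (by omega) hgij
      omega
    · obtain ⟨he, ht⟩ := cIx_eq (by omega : e ≤ B.card) (by omega : b' ≤ A.card) hgij
      subst he
      exact absurd (ht (by omega)).symm (hmax e (by omega) (by omega) (by omega))
    · obtain ⟨he, -⟩ := cIx_eq (by omega : e ≤ B.card) (by omega : e' ≤ B.card) hgij
      rw [he]
  rw [norm_sum_single' p hq S g av hinj, hS, Finset.sum_disjSum, Finset.sum_disjSum]
  simp only [hav, Sum.elim_inl, Sum.elim_inr, abs_neg]
  ring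

end Lp

/-! ### rpow helpers -/

lemma rpow_le_base {q x M : ℝ} (hq : 0 < q) (hx : 0 ≤ x) (hM : 0 ≤ M)
    (h : M ^ q ≤ x ^ q) : M ≤ x := by
  by_contra hcon
  push_neg at hcon
  have := Real.rpow_lt_rpow hx hcon hq
  linarith

lemma base_le_rpow {q x C M : ℝ} (hq : 0 < q) (hx : 0 ≤ x) (hC : 0 ≤ C) (hM : 0 ≤ M)
    (h : x ^ q ≤ C * M ^ q) : x ≤ C ^ q⁻¹ * M := by
  have h1 : x = (x ^ q) ^ q⁻¹ := by
    rw [← Real.rpow_mul hx, mul_inv_cancel₀ hq.ne', Real.rpow_one]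
  rw [h1]
  calc (x ^ q) ^ q⁻¹ ≤ (C * M ^ q) ^ q⁻¹ :=
      Real.rpow_le_rpow (Real.rpow_nonneg hx q) h (by positivity)
    _ = C ^ q⁻¹ * (M ^ q) ^ q⁻¹ := Real.mul_rpow hC (Real.rpow_nonneg hM q)
    _ = C ^ q⁻¹ * M := by
        rw [← Real.rpow_mul hM, mul_inv_cancel₀ hq.ne', Real.rpow_one]

/-! ### Main bounds -/

set_option maxHeartbeats 2000000 in
lemma main_bounds (k : ℕ) (hk : 1 ≤ k) (ε : ℝ) (hε : 0 < ε)
    (p : ℝ≥0∞) [Fact (1 ≤ p)] (hp : p ≠ ⊤)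
    (hkey : ((2*(k:ℝ)+2)) ^ (p.toReal)⁻¹ ≤ 1 + ε/3)
    (x y : Vert k) (hcard : x.1.1.card ≤ y.1.1.card) :
    (1/3 : ℝ) * (1/2)^k * ((Gk k).dist x y : ℝ) ≤ ‖Fm p x.1.1 x.1.2 - Fm p y.1.1 y.1.2‖ ∧
    ‖Fm p x.1.1 x.1.2 - Fm p y.1.1 y.1.2‖
      ≤ (3+ε) * ((1/3 : ℝ) * (1/2)^k) * ((Gk k).dist x y : ℝ) := by
  classical
  have hq1 : 1 ≤ p.toReal := by
    have h1 : (1 : ℝ≥0∞) ≤ p := Fact.out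
    calc (1:ℝ) = (1:ℝ≥0∞).toReal := by simp
      _ ≤ p.toReal := ENNReal.toReal_mono hp h1
  have hq0 : 0 < p.toReal := by linarith
  set q := p.toReal with hqdef
  set cA := x.1.1.card with hcA_def
  set cB := y.1.1.card with hcB_def
  have hkA : cA ≤ k := x.2.1
  have hkB : cB ≤ k := y.2.1
  set c := Nat.findGreatest (fun j => trunc x.1.1 j = trunc y.1.1 j) (min cA cB) with hc
  have hcmin : c ≤ min cA cB := Nat.findGreatest_le _
  have hcA : c ≤ cA := hcmin.trans (min_le_left _ _)
  have hcB : c ≤ cB := hcmin.trans (min_le_right _ _)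
  have hccom : trunc x.1.1 c = trunc y.1.1 c :=
    Nat.findGreatest_spec (P := fun j => trunc x.1.1 j = trunc y.1.1 j) (Nat.zero_le _)
      (by show trunc x.1.1 0 = trunc y.1.1 0; rw [trunc_zero, trunc_zero])
  have hmax : ∀ j, c < j → j ≤ cA → j ≤ cB → trunc x.1.1 j ≠ trunc y.1.1 j :=
    fun j h1 h2 h3 => Nat.findGreatest_is_greatest
      (P := fun j => trunc x.1.1 j = trunc y.1.1 j) h1 (le_min h2 h3)
  have hstar := norm_Fm_diff p hq0 x y c hcA hcB hccom hmax
  set rx := x.1.2 with hrx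
  set ry := y.1.2 with hry
  set Δ := |rx - ry| with hΔ
  set δx := del c rx with hδx
  set δy := del c ry with hδy
  set M := max Δ (max δx δy) with hM
  have hΔ0 : 0 ≤ Δ := abs_nonneg _
  have hδx0 : 0 ≤ δx := del_nonneg _ _
  have hδy0 : 0 ≤ δy := del_nonneg _ _
  have hM0 : 0 ≤ M := le_trans hΔ0 (le_max_left _ _)
  have hΔM : Δ ≤ M := le_max_left _ _
  have hδxM : δx ≤ M := le_trans (le_max_left _ _) (le_max_right _ _)
  have hδyM : δy ≤ M := le_trans (le_max_right _ _) (le_max_right _ _)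
  have hnorm0 : (0:ℝ) ≤ ‖Fm p x.1.1 rx - Fm p y.1.1 ry‖ := norm_nonneg _
  have h2k : (0:ℝ) < 2^k := by positivity
  -- term bounds
  have hT1 : ∀ j ∈ Finset.range (c+1), |cVal rx j - cVal ry j| ^ q ≤ Δ ^ q := by
    intro j _
    refine Real.rpow_le_rpow (abs_nonneg _) ?_ hq0.le
    match j with
    | 0 => exact le_refl Δ
    | (j+1) => exact del_lipschitz j rx ry
  have hT2 : ∀ j ∈ Finset.Ico (c+1) (cA+1), |cVal rx j| ^ q ≤ δx ^ q := by
    intro j hj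
    rw [Finset.mem_Ico] at hj
    obtain ⟨j', rfl⟩ : ∃ j', j = j'+1 := ⟨j-1, by omega⟩
    refine Real.rpow_le_rpow (abs_nonneg _) ?_ hq0.le
    rw [show |cVal rx (j'+1)| = del j' rx from abs_of_nonneg (del_nonneg _ _)]
    exact del_antitone (by omega) rx
  have hT3 : ∀ j ∈ Finset.Ico (c+1) (cB+1), |cVal ry j| ^ q ≤ δy ^ q := by
    intro j hj
    rw [Finset.mem_Ico] at hj
    obtain ⟨j', rfl⟩ : ∃ j', j = j'+1 := ⟨j-1, by omega⟩
    refine Real.rpow_le_rpow (abs_nonneg _) ?_ hq0.le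
    rw [show |cVal ry (j'+1)| = del j' ry from abs_of_nonneg (del_nonneg _ _)]
    exact del_antitone (by omega) ry
  -- unified norm upper bound
  have hMq0 : (0:ℝ) ≤ M ^ q := Real.rpow_nonneg hM0 q
  have hcount : ((c+1 : ℕ):ℝ) + ((cA - c : ℕ):ℝ) + ((cB - c : ℕ):ℝ) ≤ 2*(k:ℝ)+2 := by
    have : (c+1) + (cA - c) + (cB - c) ≤ 2*k+2 := by omega
    calc ((c+1 : ℕ):ℝ) + ((cA - c : ℕ):ℝ) + ((cB - c : ℕ):ℝ)
        = (((c+1) + (cA - c) + (cB - c) : ℕ) : ℝ) := by push_cast; ring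
      _ ≤ ((2*k+2 : ℕ) : ℝ) := by exact_mod_cast this
      _ = 2*(k:ℝ)+2 := by push_cast; ring
  have hupow : ‖Fm p x.1.1 rx - Fm p y.1.1 ry‖ ^ q ≤ (2*(k:ℝ)+2) * M ^ q := by
    rw [hstar]
    have h1 : ∑ j ∈ Finset.range (c+1), |cVal rx j - cVal ry j| ^ q
        ≤ ((c+1 : ℕ):ℝ) * M ^ q := by
      calc ∑ j ∈ Finset.range (c+1), |cVal rx j - cVal ry j| ^ q
          ≤ ∑ _j ∈ Finset.range (c+1), M ^ q := Finset.sum_le_sum (fun j hj =>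
            le_trans (hT1 j hj) (Real.rpow_le_rpow hΔ0 hΔM hq0.le))
        _ = ((c+1 : ℕ):ℝ) * M ^ q := by
            rw [Finset.sum_const, Finset.card_range, nsmul_eq_mul]
    have h2 : ∑ j ∈ Finset.Ico (c+1) (cA+1), |cVal rx j| ^ q
        ≤ ((cA - c : ℕ):ℝ) * M ^ q := by
      calc ∑ j ∈ Finset.Ico (c+1) (cA+1), |cVal rx j| ^ q
          ≤ ∑ _j ∈ Finset.Ico (c+1) (cA+1), M ^ q := Finset.sum_le_sum (fun j hj =>
            le_trans (hT2 j hj) (Real.rpow_le_rpow hδx0 hδxM hq0.le))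
        _ = ((cA - c : ℕ):ℝ) * M ^ q := by
            rw [Finset.sum_const, Nat.card_Ico, nsmul_eq_mul]
            congr 2
            omega
    have h3 : ∑ j ∈ Finset.Ico (c+1) (cB+1), |cVal ry j| ^ q
        ≤ ((cB - c : ℕ):ℝ) * M ^ q := by
      calc ∑ j ∈ Finset.Ico (c+1) (cB+1), |cVal ry j| ^ q
          ≤ ∑ _j ∈ Finset.Ico (c+1) (cB+1), M ^ q := Finset.sum_le_sum (fun j hj =>
            le_trans (hT3 j hj) (Real.rpow_le_rpow hδy0 hδyM hq0.le))
        _ = ((cB - c : ℕ):ℝ) * M ^ q := by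
            rw [Finset.sum_const, Nat.card_Ico, nsmul_eq_mul]
            congr 2
            omega
    nlinarith [hMq0, hcount]
  have hupper : ‖Fm p x.1.1 rx - Fm p y.1.1 ry‖ ≤ (1 + ε/3) * M := by
    have := base_le_rpow hq0 hnorm0 (by positivity : (0:ℝ) ≤ 2*(k:ℝ)+2) hM0 hupow
    calc ‖Fm p x.1.1 rx - Fm p y.1.1 ry‖ ≤ (2*(k:ℝ)+2) ^ q⁻¹ * M := this
      _ ≤ (1 + ε/3) * M := mul_le_mul_of_nonneg_right hkey hM0
  -- lower bound on the norm by Δ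
  have hsum2nn : (0:ℝ) ≤ ∑ j ∈ Finset.Ico (c+1) (cA+1), |cVal rx j| ^ q :=
    Finset.sum_nonneg fun j _ => Real.rpow_nonneg (abs_nonneg _) q
  have hsum3nn : (0:ℝ) ≤ ∑ j ∈ Finset.Ico (c+1) (cB+1), |cVal ry j| ^ q :=
    Finset.sum_nonneg fun j _ => Real.rpow_nonneg (abs_nonneg _) q
  have hbΔ : Δ ^ q ≤ ‖Fm p x.1.1 rx - Fm p y.1.1 ry‖ ^ q := by
    rw [hstar]
    have h0 : Δ ^ q ≤ ∑ j ∈ Finset.range (c+1), |cVal rx j - cVal ry j| ^ q := by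
      have := Finset.single_le_sum (f := fun j => |cVal rx j - cVal ry j| ^ q)
        (fun j _ => Real.rpow_nonneg (abs_nonneg _) q)
        (Finset.mem_range.2 (by omega : 0 < c+1))
      exact this
    linarith
  have hΔnorm : Δ ≤ ‖Fm p x.1.1 rx - Fm p y.1.1 ry‖ := rpow_le_base hq0 hnorm0 hΔ0 hbΔ
  -- split into comparable / incomparable cases
  by_cases hcomp : c = cA
  · -- comparable: x is an initial segment of y
    have hxx : trunc x.1.1 cA = x.1.1 := trunc_eq_self (le_of_eq hcA_def.symm)
    have hyx : trunc y.1.1 cA = x.1.1 := by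
      rw [← hcomp] at hxx ⊢
      rw [← hccom, hxx]
    obtain ⟨hreach, hdub⟩ := dist_le_comparable hk x y hcard hyx
    have hdlb := dist_ge_height hreach
    -- here δx = 0 and δy ≤ Δ, so M ≤ Δ
    have hδx_eq : δx = 0 := by
      rw [hδx, hcomp]
      exact del_bset x.2.2 le_rfl
    have hδy_le : δy ≤ Δ := by
      obtain ⟨n, hn⟩ := bset_int x.2.2 (le_of_eq hcomp.symm)
      rw [hδy, hΔ, abs_sub_comm]
      calc del c ry ≤ |ry - (n:ℝ)/2^c| := del_le ry n
        _ = |ry - rx| := by rw [← hn]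
    have hMΔ : M ≤ Δ := max_le le_rfl (max_le (by rw [hδx_eq]; exact hΔ0) hδy_le)
    constructor
    · calc (1/3 : ℝ) * (1/2)^k * ((Gk k).dist x y : ℝ)
          ≤ (1/3 : ℝ) * (1/2)^k * (2^k * Δ) := by
            have hpos : (0:ℝ) < (1/3 : ℝ) * (1/2)^k := by positivity
            exact mul_le_mul_of_nonneg_left hdub hpos.le
        _ = Δ/3 := by
            rw [div_pow, one_pow]
            field_simp
        _ ≤ Δ := by linarith
        _ ≤ _ := hΔnorm
    · calc ‖Fm p x.1.1 rx - Fm p y.1.1 ry‖ ≤ (1 + ε/3) * M := hupper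
        _ ≤ (1 + ε/3) * Δ := mul_le_mul_of_nonneg_left hMΔ (by linarith)
        _ ≤ (1 + ε/3) * (((Gk k).dist x y : ℝ) / 2^k) := by
            refine mul_le_mul_of_nonneg_left ?_ (by linarith)
            rw [le_div_iff₀ h2k]
            linarith [hdlb]
        _ = (3+ε) * ((1/3 : ℝ) * (1/2)^k) * ((Gk k).dist x y : ℝ) := by
            rw [div_pow, one_pow]
            field_simp
  · -- incomparable
    have hc1A : c + 1 ≤ cA := by omega
    have hc1B : c + 1 ≤ cB := by omega
    have hne : trunc x.1.1 (c+1) ≠ trunc y.1.1 (c+1) := hmax (c+1) (by omega) hc1A hc1B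
    obtain ⟨hreach, hdub⟩ := dist_le_incomp hk x y hcA hcB hccom
    have hdlb1 := dist_ge_height hreach
    have hdlb2 := dist_ge_incomp hreach hc1A hc1B hne
    -- norm is at least δx and δy
    have hbx : δx ^ q ≤ ‖Fm p x.1.1 rx - Fm p y.1.1 ry‖ ^ q := by
      rw [hstar]
      have hsum1nn : (0:ℝ) ≤ ∑ j ∈ Finset.range (c+1), |cVal rx j - cVal ry j| ^ q :=
        Finset.sum_nonneg fun j _ => Real.rpow_nonneg (abs_nonneg _) q
      have h0 : δx ^ q ≤ ∑ j ∈ Finset.Ico (c+1) (cA+1), |cVal rx j| ^ q := by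
        have hmem : c + 1 ∈ Finset.Ico (c+1) (cA+1) := Finset.mem_Ico.2 (by omega)
        have := Finset.single_le_sum (f := fun j => |cVal rx j| ^ q)
          (fun j _ => Real.rpow_nonneg (abs_nonneg _) q) hmem
        calc δx ^ q = |cVal rx (c+1)| ^ q := by
              rw [show |cVal rx (c+1)| = del c rx from abs_of_nonneg (del_nonneg _ _)]
          _ ≤ _ := this
      linarith
    have hby : δy ^ q ≤ ‖Fm p x.1.1 rx - Fm p y.1.1 ry‖ ^ q := by
      rw [hstar]
      have hsum1nn : (0:ℝ) ≤ ∑ j ∈ Finset.range (c+1), |cVal rx j - cVal ry j| ^ q :=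
        Finset.sum_nonneg fun j _ => Real.rpow_nonneg (abs_nonneg _) q
      have h0 : δy ^ q ≤ ∑ j ∈ Finset.Ico (c+1) (cB+1), |cVal ry j| ^ q := by
        have hmem : c + 1 ∈ Finset.Ico (c+1) (cB+1) := Finset.mem_Ico.2 (by omega)
        have := Finset.single_le_sum (f := fun j => |cVal ry j| ^ q)
          (fun j _ => Real.rpow_nonneg (abs_nonneg _) q) hmem
        calc δy ^ q = |cVal ry (c+1)| ^ q := by
              rw [show |cVal ry (c+1)| = del c ry from abs_of_nonneg (del_nonneg _ _)]
          _ ≤ _ := this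
      linarith
    have hδxnorm : δx ≤ ‖Fm p x.1.1 rx - Fm p y.1.1 ry‖ := rpow_le_base hq0 hnorm0 hδx0 hbx
    have hδynorm : δy ≤ ‖Fm p x.1.1 rx - Fm p y.1.1 ry‖ := rpow_le_base hq0 hnorm0 hδy0 hby
    have hMnorm : M ≤ ‖Fm p x.1.1 rx - Fm p y.1.1 ry‖ :=
      max_le hΔnorm (max_le hδxnorm hδynorm)
    have hMd1 : Δ ≤ ((Gk k).dist x y : ℝ) / 2^k := by
      rw [le_div_iff₀ h2k]; nlinarith [hdlb1]
    have hMd2 : δx ≤ ((Gk k).dist x y : ℝ) / 2^k := by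
      rw [le_div_iff₀ h2k]; nlinarith [hdlb2, hδy0, h2k]
    have hMd3 : δy ≤ ((Gk k).dist x y : ℝ) / 2^k := by
      rw [le_div_iff₀ h2k]; nlinarith [hdlb2, hδx0, h2k]
    have hMdist : M ≤ ((Gk k).dist x y : ℝ) / 2^k := max_le hMd1 (max_le hMd2 hMd3)
    constructor
    · calc (1/3 : ℝ) * (1/2)^k * ((Gk k).dist x y : ℝ)
          ≤ (1/3 : ℝ) * (1/2)^k * (2^k * (2 * δx + Δ)) := by
            have hpos : (0:ℝ) < (1/3 : ℝ) * (1/2)^k := by positivity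
            exact mul_le_mul_of_nonneg_left hdub hpos.le
        _ = (2 * δx + Δ)/3 := by
            rw [div_pow, one_pow]
            field_simp
        _ ≤ M := by
            have : 2 * δx + Δ ≤ 3 * M := by linarith
            linarith
        _ ≤ _ := hMnorm
    · calc ‖Fm p x.1.1 rx - Fm p y.1.1 ry‖ ≤ (1 + ε/3) * M := hupper
        _ ≤ (1 + ε/3) * (((Gk k).dist x y : ℝ) / 2^k) :=
            mul_le_mul_of_nonneg_left hMdist (by linarith)
        _ = (3+ε) * ((1/3 : ℝ) * (1/2)^k) * ((Gk k).dist x y : ℝ) := by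
            rw [div_pow, one_pow]
            field_simp

/-- If `p ∈ [1,∞)` and `p ≥ ln(2k+2)/ln(1+ε/3)`, then `G_k`
embeds bi-Lipschitzly into `ℓ_p` with distortion at most `3 + ε`. -/
theorem embed_lp (k : ℕ) (ε : ℝ) (hε : 0 < ε)
    (p : ℝ≥0∞) [Fact (1 ≤ p)] (hp : p ≠ ⊤)
    (hpk : Real.log (2 * k + 2) / Real.log (1 + ε / 3) ≤ p.toReal) :
    ∃ (s : ℝ) (f : Vert k → lp (fun _ : ℕ => ℝ) p), 0 < s ∧
      ∀ x y : Vert k,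
        s * ((Gk k).dist x y : ℝ) ≤ ‖f x - f y‖ ∧
        ‖f x - f y‖ ≤ (3 + ε) * s * ((Gk k).dist x y : ℝ) := by
  rcases Nat.eq_zero_or_pos k with rfl | hk
  · -- `k = 0` : the graph has no edges, so the distance is identically zero
    refine ⟨1, fun _ => 0, one_pos, fun x y => ?_⟩
    have hcard : ∀ z : Vert 0, z.1.1.card = 0 := fun z => Nat.le_zero.mp z.2.1
    have hdist : (Gk 0).dist x y = 0 := by
      rcases eq_or_ne x y with rfl | hne
      · exact SimpleGraph.dist_self
      · apply SimpleGraph.dist_eq_zero_of_not_reachable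
        intro hr
        obtain ⟨w⟩ := hr
        cases w with
        | nil => exact hne rfl
        | cons h _ =>
            rcases h.1 with h1 | h1 <;>
              · have h2 := h1.2.1
                rw [hcard, hcard] at h2
                exact absurd h2 (lt_irrefl 0)
    rw [hdist]
    norm_num
  · -- `k ≥ 1`
    have hq1 : 1 ≤ p.toReal := by
      have h1 : (1 : ℝ≥0∞) ≤ p := Fact.out
      calc (1:ℝ) = (1:ℝ≥0∞).toReal := by simp
        _ ≤ p.toReal := ENNReal.toReal_mono hp h1
    have hq0 : 0 < p.toReal := by linarith
    have hlog : 0 < Real.log (1 + ε/3) := Real.log_pos (by linarith)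
    have hbase : (0:ℝ) < 2*(k:ℝ)+2 := by positivity
    have hkey : ((2*(k:ℝ)+2)) ^ (p.toReal)⁻¹ ≤ 1 + ε/3 := by
      have h1 : Real.log (2*(k:ℝ)+2) ≤ p.toReal * Real.log (1+ε/3) := by
        rw [div_le_iff₀ hlog] at hpk
        exact hpk
      rw [Real.rpow_def_of_pos hbase]
      refine le_trans (Real.exp_le_exp.2 ?_) (le_of_eq (Real.exp_log (by linarith)))
      calc Real.log (2*(k:ℝ)+2) * (p.toReal)⁻¹
          ≤ (p.toReal * Real.log (1+ε/3)) * (p.toReal)⁻¹ :=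
            mul_le_mul_of_nonneg_right h1 (by positivity)
        _ = Real.log (1+ε/3) := by
            rw [mul_comm p.toReal _, mul_assoc, mul_inv_cancel₀ hq0.ne', mul_one]
    refine ⟨(1/3 : ℝ) * (1/2)^k, fun z => Fm p z.1.1 z.1.2, by positivity, fun x y => ?_⟩
    rcases le_total x.1.1.card y.1.1.card with hcc | hcc
    · exact main_bounds k hk ε hε p hp hkey x y hcc
    · obtain ⟨h1, h2⟩ := main_bounds k hk ε hε p hp hkey y x hcc
      have hd : ((Gk k).dist x y : ℝ) = ((Gk k).dist y x : ℝ) := by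
        rw [SimpleGraph.dist_comm]
      have hn : ‖Fm p x.1.1 x.1.2 - Fm p y.1.1 y.1.2‖
          = ‖Fm p y.1.1 y.1.2 - Fm p x.1.1 x.1.2‖ := norm_sub_rev _ _
      rw [hd, hn]
      exact ⟨h1, h2⟩

end DiamondPaper
end
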